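/- arXiv:1401.6619 — 14 statements merged into one kernel-verified Lean document; each statement's English description precedes it below -/
import Mathlib

section
/- Let R be an Artinian commutative ring with identity 1 ≠ 0 having only finitely many ideals, and suppose R is not a direct sum of two fields, i.e. there do not exist two distinct maximal ideals m₁, m₂ of R with m₁ ∩ m₂ = 0. If the intersection graph Γ(R) is regular (there is a natural number d such that every vertex of Γ(R) has degree d), then Γ(R) is complete, i.e. any two distinct nontrivial ideals of R have nonzero intersection. -/
/-- Let `R` be an Artinian commutative ring with `1 ≠ 0` having only
finitely many ideals, which is not a direct sum of two fields (there are no two distinct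
maximal ideals with zero intersection).  If the intersection graph `Γ(R)` is regular
(every nontrivial ideal has the same number of neighbours), then `Γ(R)` is complete:
any two distinct nontrivial ideals have nonzero intersection. -/
theorem intersectionGraph_regular_implies_complete
    (R : Type*) [CommRing R] [Nontrivial R] [IsArtinianRing R] [Finite (Ideal R)]
    (h_not_two_fields : ¬ ∃ m₁ m₂ : Ideal R,
      m₁ ≠ m₂ ∧ m₁.IsMaximal ∧ m₂.IsMaximal ∧ m₁ ⊓ m₂ = ⊥)
    (h_regular : ∃ d : ℕ, ∀ I : Ideal R, I ≠ ⊥ → I ≠ ⊤ →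
      {J : Ideal R | (J ≠ ⊥ ∧ J ≠ ⊤) ∧ J ≠ I ∧ I ⊓ J ≠ ⊥}.ncard = d) :
    ∀ I J : Ideal R, I ≠ ⊥ → I ≠ ⊤ → J ≠ ⊥ → J ≠ ⊤ → I ≠ J → I ⊓ J ≠ ⊥ := by
  intro I J hI0 hIT hJ0 hJT hIJ hbot
  obtain ⟨d, hd⟩ := h_regular
  -- pick atoms below I and J
  obtain ⟨I', hI'atom, hI'le⟩ := (eq_bot_or_exists_atom_le I).resolve_left hI0
  obtain ⟨J', hJ'atom, hJ'le⟩ := (eq_bot_or_exists_atom_le J).resolve_left hJ0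
  have hI'0 : I' ≠ ⊥ := hI'atom.1
  have hJ'0 : J' ≠ ⊥ := hJ'atom.1
  have hI'T : I' ≠ ⊤ := fun h => hIT (top_le_iff.mp (h ▸ hI'le))
  have hJ'T : J' ≠ ⊤ := fun h => hJT (top_le_iff.mp (h ▸ hJ'le))
  have hdisj : I' ⊓ J' = ⊥ := by
    have : I' ⊓ J' ≤ I ⊓ J := inf_le_inf hI'le hJ'le
    rw [hbot] at this
    exact le_bot_iff.mp this
  have hne : I' ≠ J' := by
    intro h
    rw [h, inf_idem] at hdisj
    exact hJ'0 hdisj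
  rcases eq_or_ne (I' ⊔ J') ⊤ with htop | hLT
  · -- I' and J' are two distinct maximal ideals with zero intersection
    apply h_not_two_fields
    refine ⟨I', J', hne, ?_, ?_, hdisj⟩
    · rw [Ideal.isMaximal_def]
      refine ⟨hI'T, fun K hK => ?_⟩
      rcases (hJ'atom.le_iff.mp (inf_le_left : J' ⊓ K ≤ J')) with h0 | hJ'K
      · -- J' ⊓ K = ⊥ : use modularity
        have : (I' ⊔ J') ⊓ K = I' ⊔ J' ⊓ K := sup_inf_assoc_of_le J' hK.le
        rw [htop, top_inf_eq, h0, sup_bot_eq] at this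
        exact absurd this.symm hK.ne
      · exact top_unique (htop ▸ sup_le hK.le (inf_eq_left.mp hJ'K))
    · rw [Ideal.isMaximal_def]
      refine ⟨hJ'T, fun K hK => ?_⟩
      rcases (hI'atom.le_iff.mp (inf_le_left : I' ⊓ K ≤ I')) with h0 | hI'K
      · have : (J' ⊔ I') ⊓ K = J' ⊔ I' ⊓ K := sup_inf_assoc_of_le I' hK.le
        rw [sup_comm, htop, top_inf_eq, h0, sup_bot_eq] at this
        exact absurd this.symm hK.ne
      · exact top_unique (htop ▸ sup_le (inf_eq_left.mp hI'K) hK.le)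
  · -- degree argument : L = I' ⊔ J' has strictly larger degree than I'
    set L : Ideal R := I' ⊔ J' with hLdef
    have hL0 : L ≠ ⊥ := fun h => hI'0 (le_bot_iff.mp (h ▸ le_sup_left))
    have hI'leL : I' ≤ L := le_sup_left
    have hJ'leL : J' ≤ L := le_sup_right
    have hI'neL : I' ≠ L := by
      intro h
      have : J' ≤ I' := h ▸ hJ'leL
      exact hJ'0 (by rw [← hdisj, inf_eq_right.mpr this])
    have hJ'neL : J' ≠ L := by
      intro h
      have : I' ≤ J' := h ▸ hI'leL
      exact hI'0 (by rw [← hdisj, inf_eq_left.mpr this])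
    set SI := {K : Ideal R | (K ≠ ⊥ ∧ K ≠ ⊤) ∧ K ≠ I' ∧ I' ⊓ K ≠ ⊥} with hSI
    set SL := {K : Ideal R | (K ≠ ⊥ ∧ K ≠ ⊤) ∧ K ≠ L ∧ L ⊓ K ≠ ⊥} with hSL
    have hcardI : SI.ncard = d := hd I' hI'0 hI'T
    have hcardL : SL.ncard = d := hd L hL0 hLT
    have hLmem : L ∈ SI := by
      refine ⟨⟨hL0, hLT⟩, fun h => hI'neL h.symm, ?_⟩
      rw [inf_eq_left.mpr hI'leL]
      exact hI'0
    have hI'notSI : I' ∉ SI := fun h => h.2.1 rfl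
    have hJ'notSI : J' ∉ SI := fun h => h.2.2 hdisj
    -- the set insert I' (insert J' (SI \ {L})) is contained in SL
    have hsub : insert I' (insert J' (SI \ {L})) ⊆ SL := by
      intro K hK
      rcases hK with rfl | hK
      · exact ⟨⟨hI'0, hI'T⟩, hI'neL, by rw [inf_eq_right.mpr hI'leL]; exact hI'0⟩
      rcases hK with rfl | ⟨hK, hKL⟩
      · exact ⟨⟨hJ'0, hJ'T⟩, hJ'neL, by rw [inf_eq_right.mpr hJ'leL]; exact hJ'0⟩
      · refine ⟨hK.1, hKL, fun h => hK.2.2 ?_⟩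
        exact le_bot_iff.mp (h ▸ inf_le_inf_right K hI'leL)
    have hfin : (SI \ {L} : Set (Ideal R)).Finite := Set.toFinite _
    have hc1 : (SI \ {L}).ncard = d - 1 := by
      rw [Set.ncard_diff_singleton_of_mem hLmem, hcardI]
    have hd1 : 1 ≤ d := by
      rw [← hcardI]
      exact (Set.ncard_pos (Set.toFinite _)).mpr ⟨L, hLmem⟩
    have hJ'not : J' ∉ SI \ {L} := fun h => hJ'notSI h.1
    have hI'not : I' ∉ insert J' (SI \ {L}) := by
      intro h
      rcases h with h | h
      · exact hne h
      · exact hI'notSI h.1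
    have hcard2 : (insert I' (insert J' (SI \ {L}))).ncard = d + 1 := by
      rw [Set.ncard_insert_of_notMem hI'not (Set.toFinite _),
        Set.ncard_insert_of_notMem hJ'not (Set.toFinite _), hc1]
      omega
    have := Set.ncard_le_ncard hsub (Set.toFinite _)
    rw [hcard2, hcardL] at this
    omega
end

section
/- Let R be an Artinian commutative ring with identity 1 ≠ 0. If the intersection graph Γ(R) is complete, i.e. any two distinct nontrivial ideals of R have nonzero intersection, then R is a local ring. -/
/-- Let `R` be an Artinian commutative ring with `1 ≠ 0`.  If the
intersection graph `Γ(R)` is complete (any two distinct nontrivial ideals have nonzero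
intersection), then `R` is a local ring. -/
theorem intersectionGraph_complete_implies_local
    (R : Type*) [CommRing R] [Nontrivial R] [IsArtinianRing R]
    (h_complete : ∀ I J : Ideal R, I ≠ ⊥ → I ≠ ⊤ → J ≠ ⊥ → J ≠ ⊤ → I ≠ J → I ⊓ J ≠ ⊥) :
    IsLocalRing R := by
  classical
  obtain ⟨m, hm⟩ := Ideal.exists_maximal R
  refine IsLocalRing.of_unique_max_ideal ⟨m, hm, fun n hn => ?_⟩
  by_contra hnm
  -- nilpotency of the Jacobson radical
  obtain ⟨N0, hN0⟩ := IsArtinianRing.isNilpotent_jacobson_bot (R := R)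
  have hN : (Ideal.jacobson (⊥ : Ideal R)) ^ (N0 + 1) = ⊥ := by
    rw [pow_succ, hN0]
    exact zero_mul _
  -- the finset of maximal ideals different from m
  have hfin := IsArtinianRing.setOfPred_isMaximal_finite R
  set T : Finset (Ideal R) := hfin.toFinset.erase m with hT
  have hnT : n ∈ T := Finset.mem_erase.mpr ⟨hnm, (Set.Finite.mem_toFinset hfin).mpr hn⟩
  have hmemT : ∀ p ∈ T, p.IsMaximal ∧ p ≠ m := by
    intro p hp
    obtain ⟨h1, h2⟩ := Finset.mem_erase.mp hp
    exact ⟨(Set.Finite.mem_toFinset hfin).mp h2, h1⟩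
  -- coprimality
  have hcop : IsCoprime m (∏ p ∈ T, p) := by
    apply IsCoprime.prod_right
    intro p hp
    exact Ideal.isCoprime_iff_sup_eq.mpr (hm.coprime_of_ne (hmemT p hp).1
      (fun h => (hmemT p hp).2 h.symm))
  have hcopIJ : IsCoprime (m ^ (N0 + 1)) ((∏ p ∈ T, p) ^ (N0 + 1)) := hcop.pow
  -- the product of all maximal ideals is inside the Jacobson radical
  have hprod_le : m * ∏ p ∈ T, p ≤ Ideal.jacobson (⊥ : Ideal R) := by
    apply le_sInf
    rintro q ⟨-, hq⟩
    by_cases hqm : q = m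
    · rw [hqm]; exact Ideal.mul_le_left
    · have hqT : q ∈ T :=
        Finset.mem_erase.mpr ⟨hqm, (Set.Finite.mem_toFinset hfin).mpr hq⟩
      exact Ideal.mul_le_right.trans ((Ideal.prod_le_inf).trans (Finset.inf_le hqT))
  -- trivial intersection
  have hIJ : m ^ (N0 + 1) ⊓ (∏ p ∈ T, p) ^ (N0 + 1) = ⊥ := by
    rw [← Ideal.mul_eq_inf_of_coprime hcopIJ.sup_eq, ← mul_pow, eq_bot_iff, ← hN]
    exact Ideal.pow_right_mono hprod_le _
  -- nontriviality facts
  have hIbot : m ^ (N0 + 1) ≠ ⊥ := by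
    intro h
    apply hnm
    have hmn : m ≤ n := by
      intro x hx
      have hxk : x ^ (N0 + 1) ∈ m ^ (N0 + 1) := Ideal.pow_mem_pow hx _
      rw [h, Submodule.mem_bot] at hxk
      exact hn.isPrime.mem_of_pow_mem _ (hxk ▸ n.zero_mem)
    exact (hm.eq_of_le hn.ne_top hmn).symm
  have hJbot : (∏ p ∈ T, p) ^ (N0 + 1) ≠ ⊥ := by
    intro h
    have hle : ∏ p ∈ T, p ≤ m := by
      intro x hx
      have hxk : x ^ (N0 + 1) ∈ (∏ p ∈ T, p) ^ (N0 + 1) := Ideal.pow_mem_pow hx _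
      rw [h, Submodule.mem_bot] at hxk
      exact hm.isPrime.mem_of_pow_mem _ (hxk ▸ m.zero_mem)
    obtain ⟨p, hpT, hpm⟩ := (Ideal.IsPrime.prod_le hm.isPrime).mp hle
    exact (hmemT p hpT).2 ((hmemT p hpT).1.eq_of_le hm.ne_top hpm)
  have hItop : m ^ (N0 + 1) ≠ ⊤ := fun h =>
    hm.ne_top (top_le_iff.mp (h ▸ Ideal.pow_le_self (Nat.succ_ne_zero N0)))
  have hJtop : (∏ p ∈ T, p) ^ (N0 + 1) ≠ ⊤ := by
    intro h
    refine hn.ne_top (top_le_iff.mp ?_)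
    calc (⊤ : Ideal R) = (∏ p ∈ T, p) ^ (N0 + 1) := h.symm
      _ ≤ ∏ p ∈ T, p := Ideal.pow_le_self (Nat.succ_ne_zero N0)
      _ ≤ n := (Ideal.prod_le_inf).trans (Finset.inf_le hnT)
  have hne : m ^ (N0 + 1) ≠ (∏ p ∈ T, p) ^ (N0 + 1) := by
    intro h
    apply hItop
    have := hcopIJ.sup_eq
    rwa [← h, sup_idem] at this
  exact h_complete _ _ hIbot hItop hJbot hJtop hne hIJ
end

section
/- Let R be a commutative ring with identity 1 ≠ 0 such that: (i) there do not exist two distinct maximal ideals m₁, m₂ of R with m₁ ∩ m₂ = 0 (i.e. R is not a direct sum of two fields), and (ii) there do not exist ideals a and n of R with n maximal, a ∩ n = 0, a + n = R, and exactly one ideal c of R satisfying 0 < c < n (i.e. R is not a direct sum of a field with a local ring having exactly one nontrivial ideal). If Γ(R) has a pendant vertex, then Γ(R) is a star graph: there exists a vertex c adjacent to every other vertex such that every edge of Γ(R) is incident to c. -/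
/-- Let `R` be a commutative ring with `1 ≠ 0` which is neither a direct
sum of two fields (no two distinct maximal ideals with zero intersection), nor a direct sum
of a field with a local ring whose maximal ideal is a field (no ideals `a`, `n` with `n`
maximal, `a ⊓ n = 0`, `a + n = R`, and exactly one ideal strictly between `0` and `n`).
If the intersection graph `Γ(R)` has a pendant vertex, then `Γ(R)` is a star graph. -/
theorem intersectionGraph_pendant_implies_star
    (R : Type*) [CommRing R] [Nontrivial R]
    (h_not_two_fields : ¬ ∃ m₁ m₂ : Ideal R,
      m₁ ≠ m₂ ∧ m₁.IsMaximal ∧ m₂.IsMaximal ∧ m₁ ⊓ m₂ = ⊥)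
    (h_not_field_plus_special_local : ¬ ∃ a n : Ideal R,
      n.IsMaximal ∧ a ⊓ n = ⊥ ∧ a ⊔ n = ⊤ ∧ (∃! c : Ideal R, ⊥ < c ∧ c < n))
    (h_pendant : ∃ a : Ideal R, a ≠ ⊥ ∧ a ≠ ⊤ ∧
      ∃! b : Ideal R, (b ≠ ⊥ ∧ b ≠ ⊤) ∧ b ≠ a ∧ a ⊓ b ≠ ⊥) :
    ∃ c : Ideal R, c ≠ ⊥ ∧ c ≠ ⊤ ∧
      (∀ v : Ideal R, v ≠ ⊥ → v ≠ ⊤ → v ≠ c → c ⊓ v ≠ ⊥) ∧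
      (∀ u v : Ideal R, u ≠ ⊥ → u ≠ ⊤ → v ≠ ⊥ → v ≠ ⊤ → u ≠ v → u ⊓ v ≠ ⊥ →
        u = c ∨ v = c) := by
  classical
  obtain ⟨a, ha0, haT, b, ⟨⟨hb0, hbT⟩, hba, hab⟩, huniq⟩ := h_pendant
  have third : ∀ v : Ideal R, v ≠ ⊥ → v ≠ ⊤ → v ≠ a → v ≠ b → a ⊓ v = ⊥ := by
    intro v h0 hT hva hvb
    by_contra h
    exact hvb (huniq v ⟨⟨h0, hT⟩, hva, h⟩)
  by_cases hmax : a.IsMaximal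
  · -- Case A : a maximal
    by_cases hthird : ∃ v : Ideal R, v ≠ ⊥ ∧ v ≠ ⊤ ∧ v ≠ a ∧ v ≠ b
    · exfalso
      obtain ⟨v, hv0, hvT, hva, hvb⟩ := hthird
      obtain ⟨m, hm, hvm⟩ := Ideal.exists_le_maximal v hvT
      have hm0 : m ≠ ⊥ := fun h => hv0 (le_bot_iff.mp (h ▸ hvm))
      have hmT : m ≠ ⊤ := hm.ne_top
      have hmna : m ≠ a := by
        intro h
        have h1 : a ⊓ v = v := inf_eq_right.mpr (h ▸ hvm)
        exact hv0 (h1.symm.trans (third v hv0 hvT hva hvb))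
      have hmb : m = b := by
        by_contra hmb
        exact h_not_two_fields ⟨a, m, Ne.symm hmna, hmax, hm, third m hm0 hmT hmna hmb⟩
      have hbmax : b.IsMaximal := hmb ▸ hm
      have hda : a ⊓ b ≠ a := by
        intro h
        exact hba (hmax.eq_of_le hbT (inf_eq_left.mp h)).symm
      have hdb : a ⊓ b = b := by
        apply huniq
        refine ⟨⟨hab, fun h => haT (top_le_iff.mp (h ▸ inf_le_left))⟩, hda, ?_⟩
        rwa [← inf_assoc, inf_idem]
      have : b ≤ a := inf_eq_right.mp hdb
      exact hba (hbmax.eq_of_le haT this)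
    · -- only vertices are a and b : a is a center
      have hallb : ∀ v : Ideal R, v ≠ ⊥ → v ≠ ⊤ → v ≠ a → v = b := by
        intro v h0 hT hva
        by_contra h
        exact hthird ⟨v, h0, hT, hva, h⟩
      refine ⟨a, ha0, haT, ?_, ?_⟩
      · intro v hv0 hvT hva
        rw [hallb v hv0 hvT hva]
        exact hab
      · intro u v hu0 huT hv0 hvT huv _
        by_contra h
        push_neg at h
        exact huv ((hallb u hu0 huT h.1).trans (hallb v hv0 hvT h.2).symm)
  · -- Case B : a not maximal
    obtain ⟨m, hm, ham⟩ := Ideal.exists_le_maximal a haT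
    have hmb : m = b := by
      apply huniq
      refine ⟨⟨fun h => ha0 (le_bot_iff.mp (h ▸ ham)), hm.ne_top⟩, fun h => hmax (h ▸ hm), ?_⟩
      rw [inf_eq_left.mpr ham]; exact ha0
    have hbmax : b.IsMaximal := hmb ▸ hm
    have haleb : a ≤ b := hmb ▸ ham
    have halt : a < b := lt_of_le_of_ne haleb (Ne.symm hba)
    have amin : ∀ x : Ideal R, x ≤ a → x = ⊥ ∨ x = a := by
      intro x hx
      by_contra h
      push_neg at h
      have hxT : x ≠ ⊤ := fun ht => haT (top_le_iff.mp (ht ▸ hx))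
      have hxb : x = b := by
        apply huniq
        refine ⟨⟨h.1, hxT⟩, h.2, ?_⟩
        rw [inf_eq_right.mpr hx]; exact h.1
      exact absurd (hxb ▸ hx) halt.not_ge
    have tob : ∀ v : Ideal R, v ≠ ⊥ → a ⊓ v = ⊥ → a ⊔ v ≠ ⊤ → a ⊔ v = b := by
      intro v hv0 hav hsT
      apply huniq
      refine ⟨⟨fun h => ha0 (le_bot_iff.mp (h ▸ le_sup_left)), hsT⟩, ?_, ?_⟩
      · intro h
        have hvle : v ≤ a := sup_eq_left.mp h
        exact hv0 (by rw [← inf_eq_right.mpr hvle, hav])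
      · rw [inf_eq_left.mpr le_sup_left]; exact ha0
    have claim1 : ∀ v : Ideal R, v ≠ ⊥ → v ≠ ⊤ → v ≠ b → b ⊓ v ≠ ⊥ := by
      intro v hv0 hvT hvb hbv
      by_cases hva : v = a
      · subst hva; rw [inf_comm] at hbv; exact hab hbv
      · have hav : a ⊓ v = ⊥ := third v hv0 hvT hva hvb
        by_cases hsup : a ⊔ v = ⊤
        · have hmod : (a ⊔ v) ⊓ b = a ⊔ (v ⊓ b) := sup_inf_assoc_of_le v haleb
          rw [hsup, top_inf_eq, inf_comm v b, hbv, sup_bot_eq] at hmod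
          exact hba hmod
        · have havb : a ⊔ v = b := tob v hv0 hav hsup
          have hvleb : v ≤ b := havb ▸ le_sup_right
          rw [inf_eq_right.mpr hvleb] at hbv
          exact hv0 hbv
    have claim2 : ∀ t u : Ideal R, t ≠ ⊥ → t ≠ a → t ≠ b → u ≠ ⊤ → u ≠ a → u ≠ b →
        t < u → False := by
      intro t u ht0 hta htb huT hua hub htu
      have htT : t ≠ ⊤ := fun h => huT (top_le_iff.mp (h ▸ htu.le))
      have hu0 : u ≠ ⊥ := fun h => ht0 (le_bot_iff.mp (h ▸ htu.le))
      have hat : a ⊓ t = ⊥ := third t ht0 htT hta htb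
      have hau : a ⊓ u = ⊥ := third u hu0 huT hua hub
      have hmod : (t ⊔ a) ⊓ u = t := by
        rw [sup_inf_assoc_of_le a htu.le, hau, sup_bot_eq]
      have hatb : a ⊔ t = b := by
        apply tob t ht0 hat
        intro h
        rw [sup_comm a t] at h
        rw [h, top_inf_eq] at hmod
        exact htu.ne hmod.symm
      by_cases hsu : a ⊔ u = ⊤
      · have humax : u.IsMaximal := by
          rw [Ideal.isMaximal_def]
          refine ⟨huT, ?_⟩
          intro x hux
          have hx : (u ⊔ a) ⊓ x = u ⊔ (a ⊓ x) := sup_inf_assoc_of_le a hux.le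
          rw [sup_comm u a, hsu, top_inf_eq] at hx
          rcases amin (a ⊓ x) inf_le_left with h | h
          · rw [h, sup_bot_eq] at hx
            exact absurd hx.symm hux.ne
          · rw [h, sup_comm u a, hsu] at hx
            exact hx
        apply h_not_field_plus_special_local
        refine ⟨a, u, humax, hau, hsu, t, ⟨bot_lt_iff_ne_bot.mpr ht0, htu⟩, ?_⟩
        rintro c ⟨hc0, hcu⟩
        have hc0' : c ≠ ⊥ := hc0.ne'
        have hac : a ⊓ c = ⊥ := le_bot_iff.mp (hau ▸ inf_le_inf_left a hcu.le)
        have hca : c ≠ a := by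
          intro h
          rw [h, inf_idem] at hac
          exact ha0 hac
        have hcb : c ≠ b := by
          intro h
          exact huT ((Ideal.isMaximal_def.mp hbmax).2 u (h ▸ hcu))
        have hmodc : (c ⊔ a) ⊓ u = c := by
          rw [sup_inf_assoc_of_le a hcu.le, hau, sup_bot_eq]
        have hacb : a ⊔ c = b := by
          apply tob c hc0' hac
          intro h
          rw [sup_comm a c] at h
          rw [h, top_inf_eq] at hmodc
          exact hcu.ne hmodc.symm
        rw [sup_comm a c] at hacb
        rw [sup_comm a t] at hatb
        calc c = (c ⊔ a) ⊓ u := hmodc.symm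
          _ = b ⊓ u := by rw [hacb]
          _ = (t ⊔ a) ⊓ u := by rw [hatb]
          _ = t := hmod
      · have haub : a ⊔ u = b := tob u hu0 hau hsu
        have hub' : u ≤ b := haub ▸ le_sup_right
        have : u = t := by
          rw [← inf_eq_right.mpr hub', ← hatb, sup_comm a t]
          exact hmod
        exact htu.ne this.symm
    refine ⟨b, hb0, hbT, claim1, ?_⟩
    intro u v hu0 huT hv0 hvT huv hne
    by_contra h
    push_neg at h
    by_cases hua : u = a
    · subst hua
      exact h.2 (huniq v ⟨⟨hv0, hvT⟩, Ne.symm huv, hne⟩)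
    by_cases hva : v = a
    · subst hva
      rw [inf_comm] at hne
      exact h.1 (huniq u ⟨⟨hu0, huT⟩, huv, hne⟩)
    have hau : a ⊓ u = ⊥ := third u hu0 huT hua h.1
    have hat : a ⊓ (u ⊓ v) = ⊥ := le_bot_iff.mp (hau ▸ inf_le_inf_left a inf_le_left)
    have hta : u ⊓ v ≠ a := by
      intro he
      rw [he, inf_idem] at hat
      exact ha0 hat
    have htb : u ⊓ v ≠ b := fun he => hab (he ▸ hat)
    by_cases htu' : u ⊓ v = u
    · exact claim2 u v hu0 hua h.1 hvT hva h.2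
        (lt_of_le_of_ne (htu' ▸ inf_le_right) huv)
    · exact claim2 (u ⊓ v) u hne hta htb huT hua h.1 (lt_of_le_of_ne inf_le_left htu')
end

section
/- Let R be a commutative ring with identity 1 ≠ 0. If the intersection graph Γ(R) is triangle-free (it contains no three pairwise adjacent vertices), then either Γ(R) has at most two vertices and no edges, or there exists a vertex c of Γ(R) that is adjacent to every other vertex and such that every edge of Γ(R) is incident to c (i.e. Γ(R) is a star graph). -/
/-- If `A ⊔ v = ⊤` and `v ⊓ B = ⊥`, then `B ≤ A`. -/
private lemma star_absorb {R : Type*} [CommRing R] {A B v : Ideal R}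
    (hsup : A ⊔ v = ⊤) (hvB : v ⊓ B = ⊥) : B ≤ A := by
  intro b hb
  have h1 : (1 : R) ∈ A ⊔ v := hsup ▸ Submodule.mem_top
  obtain ⟨a, ha, w, hw, haw⟩ := Submodule.mem_sup.mp h1
  have hbw : b * w ∈ v ⊓ B := ⟨Ideal.mul_mem_left _ _ hw, Ideal.mul_mem_right _ _ hb⟩
  rw [hvB, Ideal.mem_bot] at hbw
  have : b = b * a := by
    calc b = b * (a + w) := by rw [haw, mul_one]
    _ = b * a + b * w := by ring
    _ = b * a := by rw [hbw, add_zero]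
  exact this ▸ Ideal.mul_mem_left A b ha

/-- Let `R` be a commutative ring with `1 ≠ 0`.  If the intersection graph
`Γ(R)` is triangle-free, then either `Γ(R)` has at most two vertices and no edges, or
`Γ(R)` is a star graph: some vertex `c` is adjacent to all other vertices and every edge
is incident to `c`. -/
theorem intersectionGraph_triangleFree
    (R : Type*) [CommRing R] [Nontrivial R]
    (h_triangle_free : ¬ ∃ I J K : Ideal R,
      (I ≠ ⊥ ∧ I ≠ ⊤) ∧ (J ≠ ⊥ ∧ J ≠ ⊤) ∧ (K ≠ ⊥ ∧ K ≠ ⊤) ∧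
      I ≠ J ∧ J ≠ K ∧ I ≠ K ∧ I ⊓ J ≠ ⊥ ∧ J ⊓ K ≠ ⊥ ∧ I ⊓ K ≠ ⊥) :
    ((∀ I J K : Ideal R, I ≠ ⊥ → I ≠ ⊤ → J ≠ ⊥ → J ≠ ⊤ → K ≠ ⊥ → K ≠ ⊤ →
        I = J ∨ J = K ∨ I = K) ∧
      (∀ I J : Ideal R, I ≠ ⊥ → I ≠ ⊤ → J ≠ ⊥ → J ≠ ⊤ → I ≠ J → I ⊓ J = ⊥)) ∨
    (∃ c : Ideal R, c ≠ ⊥ ∧ c ≠ ⊤ ∧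
      (∀ v : Ideal R, v ≠ ⊥ → v ≠ ⊤ → v ≠ c → c ⊓ v ≠ ⊥) ∧
      (∀ u v : Ideal R, u ≠ ⊥ → u ≠ ⊤ → v ≠ ⊥ → v ≠ ⊤ → u ≠ v → u ⊓ v ≠ ⊥ →
        u = c ∨ v = c)) := by
  have tri : ∀ I J K : Ideal R, I ≠ ⊥ → I ≠ ⊤ → J ≠ ⊥ → J ≠ ⊤ → K ≠ ⊥ → K ≠ ⊤ →
      I ≠ J → J ≠ K → I ≠ K → I ⊓ J ≠ ⊥ → J ⊓ K ≠ ⊥ → I ⊓ K ≠ ⊥ → False :=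
    fun I J K h1 h2 h3 h4 h5 h6 h7 h8 h9 h10 h11 h12 =>
      h_triangle_free ⟨I, J, K, ⟨h1, h2⟩, ⟨h3, h4⟩, ⟨h5, h6⟩, h7, h8, h9, h10, h11, h12⟩
  -- edges join comparable ideals
  have comp : ∀ I J : Ideal R, I ≠ ⊥ → I ≠ ⊤ → J ≠ ⊥ → J ≠ ⊤ → I ≠ J →
      I ⊓ J ≠ ⊥ → I ≤ J ∨ J ≤ I := by
    intro I J hI0 hIt hJ0 hJt hIJ hinf
    by_contra hc
    push_neg at hc
    have h1 : J ≠ I ⊓ J := fun h => hc.2 (inf_eq_right.mp h.symm)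
    have h2 : I ≠ I ⊓ J := fun h => hc.1 (inf_eq_left.mp h.symm)
    have hJe : J ⊓ (I ⊓ J) = I ⊓ J := by
      rw [inf_left_comm, inf_idem]
    have hIe : I ⊓ (I ⊓ J) = I ⊓ J := by
      rw [← inf_assoc, inf_idem]
    exact tri I J (I ⊓ J) hI0 hIt hJ0 hJt hinf
      (fun h => hIt (top_le_iff.mp (h ▸ (inf_le_left : I ⊓ J ≤ I))))
      hIJ h1 h2 hinf (by rw [hJe]; exact hinf) (by rw [hIe]; exact hinf)
  by_cases hedge : ∃ A B : Ideal R, A ≠ ⊥ ∧ A ≠ ⊤ ∧ B ≠ ⊥ ∧ B ≠ ⊤ ∧ A ≠ B ∧ A ⊓ B ≠ ⊥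
  · right
    -- given an edge `A < B`, `B` is the center of the star
    have main : ∀ A B : Ideal R, A ≠ ⊥ → A ≠ ⊤ → B ≠ ⊥ → B ≠ ⊤ → A ≠ B → A ≤ B →
        (B : Ideal R) ≠ ⊥ ∧ B ≠ ⊤ ∧
        (∀ v : Ideal R, v ≠ ⊥ → v ≠ ⊤ → v ≠ B → B ⊓ v ≠ ⊥) ∧
        (∀ u v : Ideal R, u ≠ ⊥ → u ≠ ⊤ → v ≠ ⊥ → v ≠ ⊤ → u ≠ v → u ⊓ v ≠ ⊥ →
          u = B ∨ v = B) := by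
      intro A B hA0 hAt hB0 hBt hAB hle
      have adj : ∀ v : Ideal R, v ≠ ⊥ → v ≠ ⊤ → v ≠ B → B ⊓ v ≠ ⊥ := by
        intro v hv0 hvt hvB hBv
        have hAv : A ⊓ v = ⊥ := le_bot_iff.mp (hBv ▸ inf_le_inf_right v hle)
        have hsup : A ⊔ v = ⊤ := by
          by_contra hst
          have h0 : A ⊔ v ≠ ⊥ := fun h => hA0 (le_bot_iff.mp (h ▸ le_sup_left))
          have hne1 : A ≠ A ⊔ v := by
            intro h
            have hvA : v ≤ A := h ▸ le_sup_right
            exact hv0 (le_bot_iff.mp (hAv ▸ le_inf hvA le_rfl))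
          have hBne : B ≠ A ⊔ v := by
            intro h
            have hvB2 : v ≤ B := h ▸ le_sup_right
            exact hv0 (le_bot_iff.mp (hBv ▸ le_inf hvB2 le_rfl))
          have hAne0 : A ⊓ B ≠ ⊥ := by
            rw [inf_eq_left.mpr hle]; exact hA0
          have hB1 : B ⊓ (A ⊔ v) ≠ ⊥ := fun h =>
            hA0 (le_bot_iff.mp (h ▸ le_inf hle le_sup_left))
          have hA1 : A ⊓ (A ⊔ v) ≠ ⊥ := by
            rw [inf_eq_left.mpr le_sup_left]; exact hA0
          exact tri A B (A ⊔ v) hA0 hAt hB0 hBt h0 hst hAB hBne hne1 hAne0 hB1 hA1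
        have : B ≤ A := star_absorb hsup (by rwa [inf_comm] at hBv)
        exact hAB (le_antisymm hle this)
      refine ⟨hB0, hBt, adj, ?_⟩
      -- no edge avoids B
      have half : ∀ u v : Ideal R, u ≠ ⊥ → u ≠ ⊤ → v ≠ ⊥ → v ≠ ⊤ → u ≠ v →
          u ≤ v → u ≠ B → v ≠ B → False := by
        intro u v hu0 hut hv0 hvt huv hle' huB hvB
        have huv' : u ⊓ v = u := inf_eq_left.mpr hle'
        have hBu := adj u hu0 hut huB
        have hBv := adj v hv0 hvt hvB
        rcases comp B v hB0 hBt hv0 hvt (Ne.symm hvB) hBv with hBlv | hvlB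
        · rcases comp B u hB0 hBt hu0 hut (Ne.symm huB) hBu with hBlu | hulB
          · -- B ≤ u ≤ v
            exact tri B u v hB0 hBt hu0 hut hv0 hvt (Ne.symm huB) huv (Ne.symm hvB)
              (by rw [inf_eq_left.mpr hBlu]; exact hB0)
              (by rw [huv']; exact hu0)
              (by rw [inf_eq_left.mpr hBlv]; exact hB0)
          · -- u ≤ B ≤ v
            exact tri u B v hu0 hut hB0 hBt hv0 hvt huB hvB.symm huv
              (by rw [inf_eq_left.mpr hulB]; exact hu0)
              (by rw [inf_eq_left.mpr hBlv]; exact hB0)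
              (by rw [huv']; exact hu0)
        · -- u ≤ v ≤ B
          exact tri u v B hu0 hut hv0 hvt hB0 hBt huv hvB huB
            (by rw [huv']; exact hu0)
            (by rw [inf_eq_left.mpr hvlB]; exact hv0)
            (by rw [inf_eq_left.mpr (hle'.trans hvlB)]; exact hu0)
      intro u v hu0 hut hv0 hvt huv hinf
      by_contra hc
      push_neg at hc
      rcases comp u v hu0 hut hv0 hvt huv hinf with h | h
      · exact half u v hu0 hut hv0 hvt huv h hc.1 hc.2
      · exact half v u hv0 hvt hu0 hut huv.symm h hc.2 hc.1
    obtain ⟨A, B, hA0, hAt, hB0, hBt, hAB, hinf⟩ := hedge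
    rcases comp A B hA0 hAt hB0 hBt hAB hinf with h | h
    · exact ⟨B, main A B hA0 hAt hB0 hBt hAB h⟩
    · exact ⟨A, main B A hB0 hBt hA0 hAt hAB.symm h⟩
  · left
    push_neg at hedge
    have noE : ∀ I J : Ideal R, I ≠ ⊥ → I ≠ ⊤ → J ≠ ⊥ → J ≠ ⊤ → I ≠ J → I ⊓ J = ⊥ := by
      intro I J hI0 hIt hJ0 hJt hIJ
      by_contra h
      exact h (hedge I J hI0 hIt hJ0 hJt hIJ)
    refine ⟨?_, noE⟩
    intro I J K hI0 hIt hJ0 hJt hK0 hKt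
    by_contra hc
    push_neg at hc
    obtain ⟨hIJ, hJK, hIK⟩ := hc
    have hIJ0 : I ⊓ J = ⊥ := noE I J hI0 hIt hJ0 hJt hIJ
    have hJK0 : J ⊓ K = ⊥ := noE J K hJ0 hJt hK0 hKt hJK
    have hIK0 : I ⊓ K = ⊥ := noE I K hI0 hIt hK0 hKt hIK
    have hsup : I ⊔ J = ⊤ := by
      by_contra hst
      have h0 : I ⊔ J ≠ ⊥ := fun h => hI0 (le_bot_iff.mp (h ▸ le_sup_left))
      have hne1 : I ≠ I ⊔ J := by
        intro h
        have hJI : J ≤ I := h ▸ le_sup_right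
        exact hJ0 (le_bot_iff.mp (hIJ0 ▸ le_inf hJI le_rfl))
      have := noE I (I ⊔ J) hI0 hIt h0 hst hne1
      rw [inf_eq_left.mpr le_sup_left] at this
      exact hI0 this
    have hKI : K ≤ I := star_absorb hsup hJK0
    rw [inf_eq_right.mpr hKI] at hIK0
    exact hK0 hIK0
end

section
/- Let R be a commutative ring with identity 1 ≠ 0. The intersection graph Γ(R) contains an induced cycle of length 4 if and only if there exist four nonzero independent ideals a₁, a₂, a₃, a₄ of R. Equivalently, Γ(R) is C₄-free if and only if R has no set of four nonzero independent ideals. -/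
private lemma supRotate {α : Type*} [SemilatticeSup α] (a b c : α) :
    a ⊔ b ⊔ c = b ⊔ c ⊔ a := by
  rw [sup_assoc, sup_comm]

/-- Key lemma for the forward direction: if `v0 ⊓ v2 = ⊥` and `v1 ⊓ v3 = ⊥`, then the
ideal `v0 ⊓ v1` is independent from the other three consecutive intersections. -/
private lemma keyC4 {R : Type*} [CommRing R] (v0 v1 v2 v3 : Ideal R)
    (h02 : v0 ⊓ v2 = ⊥) (h13 : v1 ⊓ v3 = ⊥) :
    (v0 ⊓ v1) ⊓ ((v1 ⊓ v2) ⊔ (v2 ⊓ v3) ⊔ (v3 ⊓ v0)) = ⊥ := by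
  rw [eq_bot_iff]
  rintro x ⟨⟨hx0, hx1⟩, hx⟩
  obtain ⟨y, hy, z, hz, rfl⟩ := Submodule.mem_sup.mp hx
  have hy2 : y ∈ v2 := (sup_le inf_le_right inf_le_left :
    (v1 ⊓ v2) ⊔ (v2 ⊓ v3) ≤ v2) hy
  have hz3 : z ∈ v3 := hz.1
  have hz0 : z ∈ v0 := hz.2
  have hy0 : y ∈ v0 := by simpa using sub_mem hx0 hz0
  have hy' : y = 0 := by
    have : y ∈ v0 ⊓ v2 := ⟨hy0, hy2⟩
    rw [h02] at this
    simpa using this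
  have hz' : z = 0 := by
    have hz1 : z ∈ v1 := by simpa [hy'] using hx1
    have : z ∈ v1 ⊓ v3 := ⟨hz1, hz3⟩
    rw [h13] at this
    simpa using this
  simp [hy', hz']

/-- Key lemma for the reverse direction: for independent ideals,
`(a0 ⊔ a1) ⊓ (a2 ⊔ a3) = ⊥`. -/
private lemma key2 {R : Type*} [CommRing R] (a0 a1 a2 a3 : Ideal R)
    (h0 : a0 ⊓ (a1 ⊔ a2 ⊔ a3) = ⊥) (h1 : a1 ⊓ (a0 ⊔ a2 ⊔ a3) = ⊥) :
    (a0 ⊔ a1) ⊓ (a2 ⊔ a3) = ⊥ := by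
  rw [eq_bot_iff]
  rintro x ⟨hx01, hx23⟩
  obtain ⟨y, hy, z, hz, rfl⟩ := Submodule.mem_sup.mp hx01
  have h23le : a2 ⊔ a3 ≤ a1 ⊔ a2 ⊔ a3 :=
    sup_le (le_sup_of_le_left le_sup_right) le_sup_right
  have h23le' : a2 ⊔ a3 ≤ a0 ⊔ a2 ⊔ a3 :=
    sup_le (le_sup_of_le_left le_sup_right) le_sup_right
  have hy' : y = 0 := by
    have hz1 : z ∈ a1 ⊔ a2 ⊔ a3 := Submodule.mem_sup_left (Submodule.mem_sup_left hz)
    have hymem : y ∈ a1 ⊔ a2 ⊔ a3 := by simpa using sub_mem (h23le hx23) hz1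
    have : y ∈ a0 ⊓ (a1 ⊔ a2 ⊔ a3) := ⟨hy, hymem⟩
    rw [h0] at this
    simpa using this
  have hz' : z = 0 := by
    have : z ∈ a1 ⊓ (a0 ⊔ a2 ⊔ a3) := ⟨hz, by simpa [hy'] using h23le' hx23⟩
    rw [h1] at this
    simpa using this
  simp [hy', hz']

private lemma eraseSum {R : Type*} [CommRing R] (a : Fin 4 → Ideal R) :
    (∑ j ∈ Finset.univ.erase (0 : Fin 4), a j = a 1 ⊔ a 2 ⊔ a 3) ∧
    (∑ j ∈ Finset.univ.erase (1 : Fin 4), a j = a 0 ⊔ a 2 ⊔ a 3) ∧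
    (∑ j ∈ Finset.univ.erase (2 : Fin 4), a j = a 0 ⊔ a 1 ⊔ a 3) ∧
    (∑ j ∈ Finset.univ.erase (3 : Fin 4), a j = a 0 ⊔ a 1 ⊔ a 2) := by
  have e0 : (Finset.univ.erase (0 : Fin 4)) = {1, 2, 3} := by decide
  have e1 : (Finset.univ.erase (1 : Fin 4)) = {0, 2, 3} := by decide
  have e2 : (Finset.univ.erase (2 : Fin 4)) = {0, 1, 3} := by decide
  have e3 : (Finset.univ.erase (3 : Fin 4)) = {0, 1, 2} := by decide
  refine ⟨?_, ?_, ?_, ?_⟩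
  · rw [e0, Finset.sum_insert (by decide), Finset.sum_insert (by decide),
      Finset.sum_singleton, Submodule.add_eq_sup, Submodule.add_eq_sup, ← sup_assoc]
  · rw [e1, Finset.sum_insert (by decide), Finset.sum_insert (by decide),
      Finset.sum_singleton, Submodule.add_eq_sup, Submodule.add_eq_sup, ← sup_assoc]
  · rw [e2, Finset.sum_insert (by decide), Finset.sum_insert (by decide),
      Finset.sum_singleton, Submodule.add_eq_sup, Submodule.add_eq_sup, ← sup_assoc]
  · rw [e3, Finset.sum_insert (by decide), Finset.sum_insert (by decide),
      Finset.sum_singleton, Submodule.add_eq_sup, Submodule.add_eq_sup, ← sup_assoc]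

private lemma fin4cases (i : Fin 4) : i = 0 ∨ i = 1 ∨ i = 2 ∨ i = 3 := by
  revert i; decide

/-- The intersection graph `Γ(R)` contains an induced cycle of length 4
if and only if `R` has four nonzero independent ideals.  Vertices `v 0, v 1, v 2, v 3`
induce a 4-cycle when they are pairwise distinct nontrivial ideals and `v i`, `v j`
(for `i ≠ j`) intersect nontrivially exactly when `i - j ≡ ±1 (mod 4)`. -/
theorem intersectionGraph_inducedC4_iff_four_independent
    (R : Type*) [CommRing R] [Nontrivial R] :
    (∃ v : Fin 4 → Ideal R,
      (∀ i, v i ≠ ⊥ ∧ v i ≠ ⊤) ∧ Function.Injective v ∧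
      (∀ i j, i ≠ j →
        (v i ⊓ v j ≠ ⊥ ↔ (j.val = (i.val + 1) % 4 ∨ i.val = (j.val + 1) % 4)))) ↔
    (∃ a : Fin 4 → Ideal R, (∀ i, a i ≠ ⊥) ∧
      (∀ i, a i ⊓ (∑ j ∈ Finset.univ.erase i, a j) = ⊥)) := by
  constructor
  · rintro ⟨v, hnt, hinj, hadj⟩
    have h02 : v 0 ⊓ v 2 = ⊥ := by
      by_contra h
      exact absurd ((hadj 0 2 (by decide)).mp h) (by decide)
    have h13 : v 1 ⊓ v 3 = ⊥ := by
      by_contra h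
      exact absurd ((hadj 1 3 (by decide)).mp h) (by decide)
    have h20 : v 2 ⊓ v 0 = ⊥ := by rw [inf_comm]; exact h02
    have h31 : v 3 ⊓ v 1 = ⊥ := by rw [inf_comm]; exact h13
    refine ⟨![v 0 ⊓ v 1, v 1 ⊓ v 2, v 2 ⊓ v 3, v 3 ⊓ v 0], ?_, ?_⟩
    · intro i
      rcases fin4cases i with rfl | rfl | rfl | rfl <;> simp only [Matrix.cons_val_zero, Matrix.cons_val_one,
        Matrix.head_cons, Matrix.cons_val_two, Matrix.tail_cons, Matrix.cons_val_three]
      · exact (hadj 0 1 (by decide)).mpr (by decide)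
      · exact (hadj 1 2 (by decide)).mpr (by decide)
      · exact (hadj 2 3 (by decide)).mpr (by decide)
      · exact (hadj 3 0 (by decide)).mpr (by decide)
    · intro i
      obtain ⟨e0, e1, e2, e3⟩ := eraseSum ![v 0 ⊓ v 1, v 1 ⊓ v 2, v 2 ⊓ v 3, v 3 ⊓ v 0]
      rcases fin4cases i with rfl | rfl | rfl | rfl
      · rw [e0]
        simp only [Matrix.cons_val_zero, Matrix.cons_val_one, Matrix.head_cons,
          Matrix.cons_val_two, Matrix.tail_cons, Matrix.cons_val_three]
        exact keyC4 (v 0) (v 1) (v 2) (v 3) h02 h13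
      · rw [e1]
        simp only [Matrix.cons_val_zero, Matrix.cons_val_one, Matrix.head_cons,
          Matrix.cons_val_two, Matrix.tail_cons, Matrix.cons_val_three]
        rw [supRotate]
        exact keyC4 (v 1) (v 2) (v 3) (v 0) h13 h20
      · rw [e2]
        simp only [Matrix.cons_val_zero, Matrix.cons_val_one, Matrix.head_cons,
          Matrix.cons_val_two, Matrix.tail_cons, Matrix.cons_val_three]
        rw [supRotate, supRotate]
        exact keyC4 (v 2) (v 3) (v 0) (v 1) h20 h31
      · rw [e3]
        simp only [Matrix.cons_val_zero, Matrix.cons_val_one, Matrix.head_cons,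
          Matrix.cons_val_two, Matrix.tail_cons, Matrix.cons_val_three]
        exact keyC4 (v 3) (v 0) (v 1) (v 2) h31 h02
  · rintro ⟨a, hne, hind⟩
    obtain ⟨e0, e1, e2, e3⟩ := eraseSum a
    have h0 : a 0 ⊓ (a 1 ⊔ a 2 ⊔ a 3) = ⊥ := by rw [← e0]; exact hind 0
    have h1 : a 1 ⊓ (a 0 ⊔ a 2 ⊔ a 3) = ⊥ := by rw [← e1]; exact hind 1
    have h2 : a 2 ⊓ (a 0 ⊔ a 1 ⊔ a 3) = ⊥ := by rw [← e2]; exact hind 2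
    have h3 : a 3 ⊓ (a 0 ⊔ a 1 ⊔ a 2) = ⊥ := by rw [← e3]; exact hind 3
    have h1' : a 1 ⊓ (a 2 ⊔ a 3 ⊔ a 0) = ⊥ := by rw [← supRotate]; exact h1
    have h2' : a 2 ⊓ (a 1 ⊔ a 3 ⊔ a 0) = ⊥ := by rw [← supRotate]; exact h2
    have B02 : (a 0 ⊔ a 1) ⊓ (a 2 ⊔ a 3) = ⊥ := key2 (a 0) (a 1) (a 2) (a 3) h0 h1
    have B13 : (a 1 ⊔ a 2) ⊓ (a 3 ⊔ a 0) = ⊥ := key2 (a 1) (a 2) (a 3) (a 0) h1' h2'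
    have B20 : (a 2 ⊔ a 3) ⊓ (a 0 ⊔ a 1) = ⊥ := by rw [inf_comm]; exact B02
    have B31 : (a 3 ⊔ a 0) ⊓ (a 1 ⊔ a 2) = ⊥ := by rw [inf_comm]; exact B13
    set b : Fin 4 → Ideal R := ![a 0 ⊔ a 1, a 1 ⊔ a 2, a 2 ⊔ a 3, a 3 ⊔ a 0] with hb
    have hb0 : b 0 = a 0 ⊔ a 1 := rfl
    have hb1 : b 1 = a 1 ⊔ a 2 := rfl
    have hb2 : b 2 = a 2 ⊔ a 3 := rfl
    have hb3 : b 3 = a 3 ⊔ a 0 := rfl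
    -- nonbot
    have nb0 : b 0 ≠ ⊥ := fun h => hne 0 (le_bot_iff.mp (h ▸ le_sup_left))
    have nb1 : b 1 ≠ ⊥ := fun h => hne 1 (le_bot_iff.mp (h ▸ le_sup_left))
    have nb2 : b 2 ≠ ⊥ := fun h => hne 2 (le_bot_iff.mp (h ▸ le_sup_left))
    have nb3 : b 3 ≠ ⊥ := fun h => hne 3 (le_bot_iff.mp (h ▸ le_sup_left))
    -- nonbot adjacent intersections
    have m01 : b 0 ⊓ b 1 ≠ ⊥ := fun h =>
      hne 1 (le_bot_iff.mp (h ▸ le_inf le_sup_right le_sup_left))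
    have m12 : b 1 ⊓ b 2 ≠ ⊥ := fun h =>
      hne 2 (le_bot_iff.mp (h ▸ le_inf le_sup_right le_sup_left))
    have m23 : b 2 ⊓ b 3 ≠ ⊥ := fun h =>
      hne 3 (le_bot_iff.mp (h ▸ le_inf le_sup_right le_sup_left))
    have m30 : b 3 ⊓ b 0 ≠ ⊥ := fun h =>
      hne 0 (le_bot_iff.mp (h ▸ le_inf le_sup_right le_sup_left))
    have m10 : b 1 ⊓ b 0 ≠ ⊥ := fun h => m01 (by rwa [inf_comm] at h)
    have m21 : b 2 ⊓ b 1 ≠ ⊥ := fun h => m12 (by rwa [inf_comm] at h)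
    have m32 : b 3 ⊓ b 2 ≠ ⊥ := fun h => m23 (by rwa [inf_comm] at h)
    have m03 : b 0 ⊓ b 3 ≠ ⊥ := fun h => m30 (by rwa [inf_comm] at h)
    refine ⟨b, ?_, ?_, ?_⟩
    · intro i
      rcases fin4cases i with rfl | rfl | rfl | rfl
      · refine ⟨nb0, fun h => hne 2 ?_⟩
        rw [hb0] at h
        rw [h, top_inf_eq] at B02
        exact le_bot_iff.mp (B02 ▸ le_sup_left)
      · refine ⟨nb1, fun h => hne 3 ?_⟩
        rw [hb1] at h
        rw [h, top_inf_eq] at B13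
        exact le_bot_iff.mp (B13 ▸ le_sup_left)
      · refine ⟨nb2, fun h => hne 0 ?_⟩
        rw [hb2] at h
        rw [h, top_inf_eq] at B20
        exact le_bot_iff.mp (B20 ▸ le_sup_left)
      · refine ⟨nb3, fun h => hne 1 ?_⟩
        rw [hb3] at h
        rw [h, top_inf_eq] at B31
        exact le_bot_iff.mp (B31 ▸ le_sup_left)
    · -- injectivity
      have d01 : b 0 ≠ b 1 := by
        intro h
        apply hne 2
        have : a 2 ≤ b 0 ⊓ (a 2 ⊔ a 3) := le_inf (h ▸ (le_sup_right.trans hb1.ge)) le_sup_left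
        rw [hb0, B02] at this
        exact le_bot_iff.mp this
      have d02 : b 0 ≠ b 2 := by
        intro h
        apply nb0
        have : b 0 ≤ b 0 ⊓ b 2 := le_inf le_rfl h.le
        rw [hb0, hb2, B02] at this
        exact le_bot_iff.mp this
      have d03 : b 0 ≠ b 3 := by
        intro h
        exact m01 (by rw [h, hb3, hb1]; exact B31)
      have d12 : b 1 ≠ b 2 := by
        intro h
        exact m23 (by rw [← h, hb1, hb3]; exact B13)
      have d13 : b 1 ≠ b 3 := by
        intro h
        apply nb1
        have : b 1 ≤ b 1 ⊓ b 3 := le_inf le_rfl h.le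
        rw [hb1, hb3, B13] at this
        exact le_bot_iff.mp this
      have d23 : b 2 ≠ b 3 := by
        intro h
        exact m30 (by rw [← h, hb2, hb0]; exact B20)
      intro i j hij
      rcases fin4cases i with rfl | rfl | rfl | rfl <;>
        rcases fin4cases j with rfl | rfl | rfl | rfl <;>
        first
          | rfl
          | (exact absurd hij d01) | (exact absurd hij d02) | (exact absurd hij d03)
          | (exact absurd hij d12) | (exact absurd hij d13) | (exact absurd hij d23)
          | (exact absurd hij.symm d01) | (exact absurd hij.symm d02)
          | (exact absurd hij.symm d03) | (exact absurd hij.symm d12)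
          | (exact absurd hij.symm d13) | (exact absurd hij.symm d23)
    · intro i j hij
      rcases fin4cases i with rfl | rfl | rfl | rfl <;>
        rcases fin4cases j with rfl | rfl | rfl | rfl <;>
        first
          | (exact absurd rfl hij)
          | (exact iff_of_true m01 (by decide)) | (exact iff_of_true m10 (by decide))
          | (exact iff_of_true m12 (by decide)) | (exact iff_of_true m21 (by decide))
          | (exact iff_of_true m23 (by decide)) | (exact iff_of_true m32 (by decide))
          | (exact iff_of_true m30 (by decide)) | (exact iff_of_true m03 (by decide))
          | (exact iff_of_false (not_not.mpr (hb0 ▸ hb2 ▸ B02)) (by decide))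
          | (exact iff_of_false (not_not.mpr (hb1 ▸ hb3 ▸ B13)) (by decide))
          | (exact iff_of_false (not_not.mpr (hb2 ▸ hb0 ▸ B20)) (by decide))
          | (exact iff_of_false (not_not.mpr (hb3 ▸ hb1 ▸ B31)) (by decide))
end

section
/- Let R be a reduced commutative ring with identity 1 ≠ 0 and let n ≥ 5 be a natural number. The intersection graph Γ(R) contains an induced cycle of length n if and only if there exist n nonzero independent ideals a₁, …, aₙ of R. Equivalently, Γ(R) is Cₙ-free if and only if R has no set of n nonzero independent ideals. -/
private lemma inf_eq_bot_of_mul_eq_bot' {R : Type*} [CommRing R] [IsReduced R]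
    {I J : Ideal R} (h : I * J = ⊥) : I ⊓ J = ⊥ := by
  rw [eq_bot_iff]
  intro x hx
  rw [Submodule.mem_inf] at hx
  have hm : x * x ∈ I * J := Ideal.mul_mem_mul hx.1 hx.2
  rw [h, Ideal.mem_bot] at hm
  have hz : x = 0 := IsNilpotent.eq_zero ⟨2, by rwa [pow_two]⟩
  rw [Ideal.mem_bot]; exact hz

/-- Let `R` be a reduced commutative ring with `1 ≠ 0` and `n ≥ 5`.
The intersection graph `Γ(R)` contains an induced cycle of length `n` if and only if
`R` has `n` nonzero independent ideals. -/
theorem intersectionGraph_inducedCn_iff_independent_of_reduced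
    (R : Type*) [CommRing R] [Nontrivial R] [IsReduced R] (n : ℕ) (hn : 5 ≤ n) :
    (∃ v : Fin n → Ideal R,
      (∀ i, v i ≠ ⊥ ∧ v i ≠ ⊤) ∧ Function.Injective v ∧
      (∀ i j, i ≠ j →
        (v i ⊓ v j ≠ ⊥ ↔ (j.val = (i.val + 1) % n ∨ i.val = (j.val + 1) % n)))) ↔
    (∃ a : Fin n → Ideal R, (∀ i, a i ≠ ⊥) ∧
      (∀ i, a i ⊓ (∑ j ∈ Finset.univ.erase i, a j) = ⊥)) := by
  obtain ⟨m, rfl⟩ : ∃ m, n = m + 5 := ⟨n - 5, by omega⟩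
  have h1 : (1 : Fin (m+5)).val = 1 := by
    rw [Fin.val_one']; exact Nat.mod_eq_of_lt (by omega)
  have hval : ∀ i : Fin (m+5), (i+1).val = (i.val + 1) % (m+5) := by
    intro i; rw [Fin.val_add, h1]
  have hcan : ∀ i c : Fin (m+5), i + c = i → c = 0 := by
    intro i c h
    have : i + c = i + 0 := by rwa [add_zero]
    exact add_left_cancel this
  have h1ne : (1 : Fin (m+5)) ≠ 0 := by
    intro h
    have := congrArg Fin.val h
    rw [h1, Fin.val_zero] at this
    omega
  have h2v : ((1 : Fin (m+5)) + 1).val = 2 := by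
    rw [hval, h1]; exact Nat.mod_eq_of_lt (by omega)
  have h2ne : ((1 : Fin (m+5)) + 1) ≠ 0 := by
    intro h; have := congrArg Fin.val h; rw [h2v, Fin.val_zero] at this; omega
  have h3ne : ((1 : Fin (m+5)) + 1 + 1) ≠ 0 := by
    intro h; have := congrArg Fin.val h
    rw [hval, h2v, Fin.val_zero, Nat.mod_eq_of_lt (by omega)] at this; omega
  have hne1 : ∀ i : Fin (m+5), i + 1 ≠ i := fun i h => h1ne (hcan i 1 h)
  have hne2 : ∀ i : Fin (m+5), i + 1 + 1 ≠ i := by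
    intro i h
    rw [add_assoc] at h
    exact h2ne (hcan i (1+1) h)
  have hne3 : ∀ i : Fin (m+5), i + 1 + 1 + 1 ≠ i := by
    intro i h
    rw [add_assoc, add_assoc, ← add_assoc (1 : Fin (m+5))] at h
    exact h3ne (hcan i (1+1+1) h)
  have bridge : ∀ i j : Fin (m+5), (j.val = (i.val + 1) % (m+5)) ↔ j = i + 1 := by
    intro i j
    constructor
    · intro h; exact Fin.ext (by rw [hval]; exact h)
    · intro h; rw [h, hval]
  constructor
  · rintro ⟨v, hv1, _, hv3⟩
    have hv3' : ∀ i j, i ≠ j → (v i ⊓ v j ≠ ⊥ ↔ (j = i + 1 ∨ i = j + 1)) := by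
      intro i j hij
      rw [hv3 i j hij, bridge i j, bridge j i]
    set a : Fin (m+5) → Ideal R := fun i => v i ⊓ v (i+1) with ha
    have hpair : ∀ i j : Fin (m+5), j ≠ i → a i ⊓ a j = ⊥ := by
      intro i j hji
      by_cases hji1 : j = i + 1
      · subst hji1
        have hb : v i ⊓ v (i+1+1) = ⊥ := by
          by_contra hc
          rcases (hv3' i (i+1+1) (Ne.symm (hne2 i))).mp hc with h | h
          · exact hne1 (i+1) h
          · exact hne3 i h.symm
        have : a i ⊓ a (i+1) ≤ v i ⊓ v (i+1+1) :=
          inf_le_inf inf_le_left inf_le_right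
        exact le_bot_iff.mp (hb ▸ this)
      · by_cases hij1 : i = j + 1
        · subst hij1
          have hb : v j ⊓ v (j+1+1) = ⊥ := by
            by_contra hc
            rcases (hv3' j (j+1+1) (Ne.symm (hne2 j))).mp hc with h | h
            · exact hne1 (j+1) h
            · exact hne3 j h.symm
          have : a (j+1) ⊓ a j ≤ v (j+1+1) ⊓ v j :=
            inf_le_inf inf_le_right inf_le_left
          rw [inf_comm (v (j+1+1))] at this
          exact le_bot_iff.mp (hb ▸ this)
        · have hb : v i ⊓ v j = ⊥ := by
            by_contra hc
            rcases (hv3' i j (Ne.symm hji)).mp hc with h | h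
            · exact hji1 h
            · exact hij1 h
          have : a i ⊓ a j ≤ v i ⊓ v j := inf_le_inf inf_le_left inf_le_left
          exact le_bot_iff.mp (hb ▸ this)
    refine ⟨a, ?_, ?_⟩
    · intro i
      have := (hv3' i (i+1) (Ne.symm (hne1 i))).mpr (Or.inl rfl)
      simpa [ha] using this
    · intro i
      apply inf_eq_bot_of_mul_eq_bot'
      rw [Finset.mul_sum]
      apply Finset.sum_eq_zero
      intro j hj
      have hji : j ≠ i := Finset.ne_of_mem_erase hj
      have h1' : a i * a j ≤ a i ⊓ a j := Ideal.mul_le_inf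
      rw [hpair i j hji] at h1'
      rw [Submodule.zero_eq_bot]
      exact le_bot_iff.mp h1'
  · rintro ⟨a, ha0, hind⟩
    have hle : ∀ i j : Fin (m+5), j ≠ i →
        a j ≤ ∑ k ∈ Finset.univ.erase i, a k := by
      intro i j hji
      exact Finset.single_le_sum (f := a) (fun k _ => zero_le)
        (Finset.mem_erase.mpr ⟨hji, Finset.mem_univ j⟩)
    have hdisj : ∀ i j : Fin (m+5), i ≠ j → a i ⊓ a j = ⊥ := by
      intro i j hij
      have h' : a i ⊓ a j ≤ a i ⊓ ∑ k ∈ Finset.univ.erase i, a k :=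
        inf_le_inf_left _ (hle i j (Ne.symm hij))
      rw [hind i] at h'
      exact le_bot_iff.mp h'
    have hmul : ∀ i j : Fin (m+5), i ≠ j → a i * a j = ⊥ := by
      intro i j h
      have := le_trans Ideal.mul_le_inf (le_of_eq (hdisj i j h))
      exact le_bot_iff.mp this
    set v : Fin (m+5) → Ideal R := fun i => a i ⊔ a (i+1) with hvdef
    have haled : ∀ i : Fin (m+5), a i ≤ v i := fun i => le_sup_left
    have hasucc : ∀ i : Fin (m+5), a (i+1) ≤ v i := fun i => le_sup_right
    -- nonadjacent intersection bot
    have hnadj : ∀ i j : Fin (m+5), i ≠ j → j ≠ i + 1 → i ≠ j + 1 → v i ⊓ v j = ⊥ := by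
      intro i j hij hji1 hij1
      apply inf_eq_bot_of_mul_eq_bot'
      show (a i ⊔ a (i+1)) * (a j ⊔ a (j+1)) = ⊥
      rw [← Submodule.add_eq_sup, ← Submodule.add_eq_sup, mul_add, add_mul, add_mul]
      rw [hmul i j hij, hmul (i+1) j (fun h => hji1 h.symm),
        hmul i (j+1) hij1, hmul (i+1) (j+1) (fun h => hij (add_right_cancel h))]
      simp
    have hcontra : ∀ k : Fin (m+5), ¬ (a k ≤ ∑ l ∈ Finset.univ.erase k, a l) := by
      intro k hk
      have : a k ≤ a k ⊓ ∑ l ∈ Finset.univ.erase k, a l := le_inf le_rfl hk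
      rw [hind k] at this
      exact ha0 k (le_bot_iff.mp this)
    refine ⟨v, ?_, ?_, ?_⟩
    · intro i
      constructor
      · intro h
        exact ha0 i (le_bot_iff.mp (h ▸ haled i))
      · intro h
        apply hcontra (i+1+1)
        have hvle : v i ≤ ∑ l ∈ Finset.univ.erase (i+1+1), a l :=
          sup_le (hle (i+1+1) i (Ne.symm (hne2 i)))
            (hle (i+1+1) (i+1) (fun hh => hne1 (i+1) hh.symm))
        calc a (i+1+1) ≤ (⊤ : Ideal R) := le_top
          _ = v i := h.symm
          _ ≤ _ := hvle
    · intro i j hvij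
      by_contra hij
      by_cases hij1 : i = j + 1
      · apply hcontra (i+1)
        have hvle : v j ≤ ∑ l ∈ Finset.univ.erase (i+1), a l := by
          apply sup_le
          · apply hle
            intro hh
            rw [hij1] at hh
            exact hne2 j hh.symm
          · apply hle
            intro hh
            rw [hij1] at hh
            exact hne1 (j+1) hh.symm
        calc a (i+1) ≤ v i := hasucc i
          _ = v j := hvij
          _ ≤ _ := hvle
      · apply hcontra i
        have hvle : v j ≤ ∑ l ∈ Finset.univ.erase i, a l :=
          sup_le (hle i j (fun hh => hij hh.symm)) (hle i (j+1) (fun hh => hij1 hh.symm))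
        calc a i ≤ v i := haled i
          _ = v j := hvij
          _ ≤ _ := hvle
    · intro i j hij
      rw [bridge i j, bridge j i]
      constructor
      · intro hne
        by_contra hcon
        push_neg at hcon
        exact hne (hnadj i j hij hcon.1 hcon.2)
      · rintro (h | h)
        · subst h
          intro hb
          apply ha0 (i+1)
          have : a (i+1) ≤ v i ⊓ v (i+1) := le_inf (hasucc i) (haled (i+1))
          rw [hb] at this
          exact le_bot_iff.mp this
        · subst h
          intro hb
          apply ha0 (j+1)
          have : a (j+1) ≤ v (j+1) ⊓ v j := le_inf (haled (j+1)) (hasucc j)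
          rw [hb] at this
          exact le_bot_iff.mp this
end

section
/- Let R be a commutative ring with identity 1 ≠ 0, let n ≥ 4, and let a₁, …, aₙ be nonzero independent ideals of R. For each i = 1, …, n let bᵢ = Σ_{j ∈ Sᵢ} aⱼ, where Sᵢ is a nonempty subset of {1, …, n}. Then b₁, …, bₙ induce (in this cyclic order) a cycle of length n in the intersection graph Γ(R) if and only if there exists a permutation π of {1, …, n} such that bᵢ = a_{π(i)} + a_{π(i+1)} for all i = 1, …, n (indices taken modulo n). -/
section AuxIndep

variable {R : Type*} [CommRing R] {n : ℕ} {a : Fin n → Ideal R}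

private lemma aux_sum_eq_sup (a : Fin n → Ideal R) (T : Finset (Fin n)) :
    ∑ j ∈ T, a j = T.sup a := by
  classical
  induction T using Finset.induction with
  | empty => simp
  | insert _ _ h ih => rw [Finset.sum_insert h, Finset.sup_insert, ih, Submodule.add_eq_sup]

private lemma aux_disjoint_single
    (h_indep : ∀ i, a i ⊓ (∑ j ∈ Finset.univ.erase i, a j) = ⊥)
    {x : Fin n} {T : Finset (Fin n)} (hx : x ∉ T) : Disjoint (a x) (T.sup a) := by
  have h1 : T ⊆ Finset.univ.erase x := fun j hj =>
    Finset.mem_erase.2 ⟨fun e => hx (e ▸ hj), Finset.mem_univ _⟩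
  have h2 : Disjoint (a x) ((Finset.univ.erase x).sup a) := by
    rw [disjoint_iff, ← aux_sum_eq_sup]; exact h_indep x
  exact h2.mono_right (Finset.sup_mono h1)

private lemma aux_disjoint_sets
    (h_indep : ∀ i, a i ⊓ (∑ j ∈ Finset.univ.erase i, a j) = ⊥)
    {S T : Finset (Fin n)} (hST : Disjoint S T) :
    Disjoint (S.sup a) (T.sup a) := by
  classical
  induction S using Finset.induction with
  | empty => simp
  | @insert x S hx ih =>
    have hd : Disjoint S T := hST.mono_left (Finset.subset_insert x S)
    have hxT : x ∉ S ∪ T := by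
      simp only [Finset.mem_union, not_or]
      exact ⟨hx, Finset.disjoint_left.1 hST (Finset.mem_insert_self x S)⟩
    have h2 : Disjoint (a x) (S.sup a ⊔ T.sup a) := by
      rw [← Finset.sup_union]; exact aux_disjoint_single h_indep hxT
    rw [Finset.sup_insert]
    exact Disjoint.disjoint_sup_left_of_disjoint_sup_right (ih hd) h2

private lemma aux_inter_ne_bot (ha : ∀ i, a i ≠ ⊥)
    (h_indep : ∀ i, a i ⊓ (∑ j ∈ Finset.univ.erase i, a j) = ⊥)
    (S T : Finset (Fin n)) :
    (∑ j ∈ S, a j) ⊓ (∑ j ∈ T, a j) ≠ ⊥ ↔ (S ∩ T).Nonempty := by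
  rw [aux_sum_eq_sup, aux_sum_eq_sup]
  constructor
  · intro h
    by_contra hne
    rw [Finset.not_nonempty_iff_eq_empty, ← Finset.disjoint_iff_inter_eq_empty] at hne
    exact h (disjoint_iff.1 (aux_disjoint_sets h_indep hne))
  · rintro ⟨x, hx⟩ h
    rw [Finset.mem_inter] at hx
    have h1 : a x ≤ S.sup a ⊓ T.sup a :=
      le_inf (Finset.le_sup hx.1) (Finset.le_sup hx.2)
    rw [h] at h1
    exact ha x (le_bot_iff.1 h1)

end AuxIndep

/-- Let `a 0, …, a (n-1)` (`n ≥ 4`) be nonzero independent ideals of `R`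
and let `b i = Σ_{j ∈ S i} a j` where each `S i` is a nonempty subset of indices.  Then
`b 0, …, b (n-1)` induce, in this cyclic order, a cycle of length `n` in the intersection
graph `Γ(R)` if and only if there is a permutation `π` of the indices with
`b i = a (π i) + a (π (i+1))` (indices mod `n`) for all `i`. -/
theorem intersectionGraph_cycle_of_sums_iff_perm
    (R : Type*) [CommRing R] [Nontrivial R] (n : ℕ) (hn : 4 ≤ n)
    (a : Fin n → Ideal R) (ha : ∀ i, a i ≠ ⊥)
    (h_indep : ∀ i, a i ⊓ (∑ j ∈ Finset.univ.erase i, a j) = ⊥)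
    (S : Fin n → Finset (Fin n)) (hS : ∀ i, (S i).Nonempty)
    (b : Fin n → Ideal R) (hb : ∀ i, b i = ∑ j ∈ S i, a j) :
    ((∀ i, b i ≠ ⊥ ∧ b i ≠ ⊤) ∧ Function.Injective b ∧
      (∀ i j, i ≠ j →
        (b i ⊓ b j ≠ ⊥ ↔ (j.val = (i.val + 1) % n ∨ i.val = (j.val + 1) % n)))) ↔
    (∃ π : Equiv.Perm (Fin n), ∀ i : Fin n,
      b i = a (π i) + a (π ⟨(i.val + 1) % n, Nat.mod_lt _ (by omega)⟩)) := by
  classical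
  haveI : NeZero n := ⟨by omega⟩
  have hval1 : ((1 : Fin n) : ℕ) = 1 := by
    rw [Fin.val_one', Nat.mod_eq_of_lt (by omega)]
  have hvadd : ∀ i : Fin n, ((i + 1 : Fin n) : ℕ) = (i.val + 1) % n := fun i => by
    rw [Fin.val_add, hval1]
  have modfact : ∀ m k : ℕ, m < n → k < n → ((m + k) % n = m ↔ k = 0) := by
    intro m k hm hk
    constructor
    · intro h
      rcases Nat.lt_or_ge (m + k) n with h' | h'
      · rw [Nat.mod_eq_of_lt h'] at h; omega
      · rw [Nat.mod_eq_sub_mod h', Nat.mod_eq_of_lt (by omega)] at h; omega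
    · rintro rfl; simp [Nat.mod_eq_of_lt hm]
  have v2 : (((1 : Fin n) + 1 : Fin n) : ℕ) = 2 := by
    rw [Fin.val_add, hval1, Nat.mod_eq_of_lt (by omega)]
  have v3 : (((1 : Fin n) + 1 + 1 : Fin n) : ℕ) = 3 := by
    rw [Fin.val_add, v2, hval1, Nat.mod_eq_of_lt (by omega)]
  have f1 : ∀ i : Fin n, i + 1 ≠ i := by
    intro i h
    have hv := congrArg Fin.val h
    rw [Fin.val_add, hval1] at hv
    have := (modfact i.val 1 i.isLt (by omega)).1 hv
    omega
  have f2 : ∀ i : Fin n, i + 1 + 1 ≠ i := by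
    intro i h
    have h' : i + ((1 : Fin n) + 1) = i := by rw [← add_assoc]; exact h
    have hv := congrArg Fin.val h'
    rw [Fin.val_add, v2] at hv
    have := (modfact i.val 2 i.isLt (by omega)).1 hv
    omega
  have f3 : ∀ i : Fin n, i + 1 + 1 + 1 ≠ i := by
    intro i h
    have h' : i + ((1 : Fin n) + 1 + 1) = i := by
      rw [show i + ((1 : Fin n) + 1 + 1) = i + 1 + 1 + 1 from by simp only [add_assoc]]; exact h
    have hv := congrArg Fin.val h'
    rw [Fin.val_add, v3] at hv
    have := (modfact i.val 3 i.isLt (by omega)).1 hv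
    omega
  have hidx : ∀ (i : Fin n) (h : (i.val + 1) % n < n),
      (⟨(i.val + 1) % n, h⟩ : Fin n) = i + 1 := fun i h => by
    apply Fin.ext; rw [hvadd]
  have hadj : ∀ i j : Fin n,
      (j.val = (i.val + 1) % n ∨ i.val = (j.val + 1) % n) ↔ (j = i + 1 ∨ i = j + 1) := by
    intro i j
    rw [Fin.ext_iff (a := j) (b := i + 1), Fin.ext_iff (a := i) (b := j + 1), hvadd, hvadd]
  constructor
  · rintro ⟨hbt, hbinj, hadj3⟩
    have hSiff : ∀ i j : Fin n, i ≠ j → ((S i ∩ S j).Nonempty ↔ (j = i + 1 ∨ i = j + 1)) := by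
      intro i j hij
      have h0 := (hadj3 i j hij).trans (hadj i j)
      rw [hb i, hb j, aux_inter_ne_bot ha h_indep] at h0
      exact h0
    have hx : ∀ i : Fin n, ∃ z, z ∈ S i ∧ z ∈ S (i + 1) := by
      intro i
      have hne : i ≠ i + 1 := fun h => f1 i h.symm
      obtain ⟨z, hz⟩ := (hSiff i (i + 1) hne).2 (Or.inl rfl)
      exact ⟨z, Finset.mem_inter.1 hz⟩
    choose x hx1 hx2 using hx
    have hclose : ∀ i j : Fin n, ∀ z, z ∈ S i → z ∈ S j →
        i = j ∨ j = i + 1 ∨ i = j + 1 := by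
      intro i j z h1 h2
      by_cases hij : i = j
      · exact Or.inl hij
      · exact Or.inr ((hSiff i j hij).1 ⟨z, Finset.mem_inter.2 ⟨h1, h2⟩⟩)
    have hxinj : Function.Injective x := by
      intro i j hxe
      by_contra hij
      have hmem : x i ∈ S i ∩ S j :=
        Finset.mem_inter.2 ⟨hx1 i, by rw [hxe]; exact hx1 j⟩
      rcases (hSiff i j hij).1 ⟨x i, hmem⟩ with h | h
      · have hz2 : x i ∈ S (i + 1 + 1) := by
          rw [hxe, h]; exact hx2 (i + 1)
        have hne2 : i ≠ i + 1 + 1 := fun hh => f2 i hh.symm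
        rcases (hSiff i (i + 1 + 1) hne2).1
            ⟨x i, Finset.mem_inter.2 ⟨hx1 i, hz2⟩⟩ with h' | h'
        · exact f1 i (add_right_cancel h')
        · exact f3 i h'.symm
      · have hz2 : x j ∈ S (j + 1 + 1) := by
          rw [← hxe, h]; exact hx2 (j + 1)
        have hne2 : j ≠ j + 1 + 1 := fun hh => f2 j hh.symm
        rcases (hSiff j (j + 1 + 1) hne2).1
            ⟨x j, Finset.mem_inter.2 ⟨hx1 j, hz2⟩⟩ with h' | h'
        · exact f1 j (add_right_cancel h')
        · exact f3 j h'.symm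
    have hxbij : Function.Bijective x := Finite.injective_iff_bijective.1 hxinj
    have hmem1 : ∀ i : Fin n, x (i - 1) ∈ S i := by
      intro i
      have := hx2 (i - 1)
      rwa [sub_add_cancel] at this
    have hSax : ∀ i : Fin n, S i = {x (i - 1), x i} := by
      intro i
      apply Finset.Subset.antisymm
      · intro z hz
        obtain ⟨j, rfl⟩ := hxbij.2 z
        simp only [Finset.mem_insert, Finset.mem_singleton]
        rcases hclose i j (x j) hz (hx1 j) with h | h | h
        · right; rw [h]
        · exfalso
          have hz2 : x j ∈ S (i + 1 + 1) := by
            rw [h]; exact hx2 (i + 1)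
          rcases hclose i (i + 1 + 1) (x j) hz hz2 with h' | h' | h'
          · exact f2 i h'.symm
          · exact f1 i (add_right_cancel h')
          · exact f3 i h'.symm
        · left
          have hj : j = i - 1 := by rw [h, add_sub_cancel_right]
          rw [hj]
      · intro z hz
        rcases Finset.mem_insert.1 hz with rfl | hrest
        · exact hmem1 i
        · rw [Finset.mem_singleton] at hrest
          rw [hrest]; exact hx1 i
    refine ⟨(Equiv.subRight (1 : Fin n)).trans (Equiv.ofBijective x hxbij), fun i => ?_⟩
    simp only [hidx]
    have e1 : ((Equiv.subRight (1 : Fin n)).trans (Equiv.ofBijective x hxbij)) i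
        = x (i - 1) := rfl
    have e2 : ((Equiv.subRight (1 : Fin n)).trans (Equiv.ofBijective x hxbij)) (i + 1)
        = x i := by
      show x (i + 1 - 1) = x i
      rw [add_sub_cancel_right]
    have hne : x (i - 1) ≠ x i := by
      intro hh
      have h1 : i - 1 = i := hxinj hh
      have h2 : i - 1 + 1 = i + 1 := by rw [h1]
      rw [sub_add_cancel] at h2
      exact f1 i h2.symm
    rw [e1, e2, hb i, hSax i, Finset.sum_pair hne]
  · rintro ⟨π, hπ⟩
    simp only [hidx] at hπ
    have hpair : ∀ i : Fin n, b i = ∑ j ∈ ({π i, π (i + 1)} : Finset (Fin n)), a j := by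
      intro i
      rw [Finset.sum_pair (fun h => f1 i (π.injective h).symm)]
      exact hπ i
    refine ⟨fun i => ⟨?_, ?_⟩, ?_, ?_⟩
    · intro hbot
      have h1 : a (π i) ≤ b i := by
        rw [hπ i, Submodule.add_eq_sup]; exact le_sup_left
      rw [hbot] at h1; exact ha _ (le_bot_iff.1 h1)
    · intro htop
      have hnm : π (i + 1 + 1) ∉ ({π i, π (i + 1)} : Finset (Fin n)) := by
        simp only [Finset.mem_insert, Finset.mem_singleton, not_or]
        exact ⟨fun h => f2 i (π.injective h), fun h => f1 (i + 1) (π.injective h)⟩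
      have hd : Disjoint (a (π (i + 1 + 1))) (({π i, π (i + 1)} : Finset (Fin n)).sup a) :=
        aux_disjoint_single h_indep hnm
      have hle : a (π (i + 1 + 1)) ≤ ({π i, π (i + 1)} : Finset (Fin n)).sup a := by
        rw [← aux_sum_eq_sup, ← hpair i, htop]; exact le_top
      exact ha _ (hd.eq_bot_of_le hle)
    · intro i j hbe
      by_contra hij
      have key : ∀ p q : Fin n, b p = b q → π p = π q ∨ π p = π (q + 1) := by
        intro p q hpq
        by_contra hc
        push_neg at hc
        have hnm : π p ∉ ({π q, π (q + 1)} : Finset (Fin n)) := by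
          simp only [Finset.mem_insert, Finset.mem_singleton, not_or]
          exact hc
        have hd := aux_disjoint_single (a := a) h_indep hnm
        have hle : a (π p) ≤ ({π q, π (q + 1)} : Finset (Fin n)).sup a := by
          rw [← aux_sum_eq_sup, ← hpair q, ← hpq, hπ p, Submodule.add_eq_sup]
          exact le_sup_left
        exact ha _ (hd.eq_bot_of_le hle)
      rcases key i j hbe with h | h
      · exact hij (π.injective h)
      · have h1 : i = j + 1 := π.injective h
        rcases key j i hbe.symm with h' | h'
        · exact hij (π.injective h').symm
        · have h2 : j = i + 1 := π.injective h'
          rw [h2] at h1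
          exact f2 i h1.symm
    · intro i j hij
      rw [hpair i, hpair j, aux_inter_ne_bot ha h_indep, hadj i j]
      constructor
      · rintro ⟨z, hz⟩
        simp only [Finset.mem_inter, Finset.mem_insert, Finset.mem_singleton] at hz
        obtain ⟨h1 | h1, h2 | h2⟩ := hz
        · exact absurd (π.injective (h1 ▸ h2)) hij
        · exact Or.inr (π.injective (h1 ▸ h2))
        · exact Or.inl (π.injective (h2 ▸ h1))
        · exact absurd (add_right_cancel (π.injective (h1 ▸ h2))) hij
      · rintro (h | h)
        · exact ⟨π (i + 1), by simp [h]⟩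
        · exact ⟨π i, by simp [h]⟩
end

section
/- Let R be a reduced commutative ring with identity 1 ≠ 0 and let n ≥ 2 be a natural number. There exist nonzero independent ideals a₁, …, aₙ of R such that a₁ + ⋯ + aₙ ≠ R if and only if the intersection graph Γ(R) contains an induced n-claw, i.e. there exist pairwise distinct vertices c, v₁, …, vₙ such that c is adjacent to each vᵢ and v₁, …, vₙ are pairwise nonadjacent. -/
private lemma idealSum_le {R : Type*} [CommRing R] {ι : Type*} {s : Finset ι}
    {p : ι → Ideal R} {q : Ideal R} (h : ∀ j ∈ s, p j ≤ q) : ∑ j ∈ s, p j ≤ q := by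
  classical
  induction s using Finset.induction with
  | empty => simp
  | insert _ _ hx ih =>
      rw [Finset.sum_insert hx, Submodule.add_eq_sup]
      exact sup_le (h _ (Finset.mem_insert_self _ _))
        (ih fun j hj => h j (Finset.mem_insert_of_mem hj))

/-- Let `R` be a reduced commutative ring with `1 ≠ 0` and `n ≥ 2`.
There exist nonzero independent ideals `a 0, …, a (n-1)` whose sum is a proper ideal of `R`
if and only if the intersection graph `Γ(R)` contains an induced `n`-claw: pairwise
distinct nontrivial ideals `c, v 0, …, v (n-1)` with `c` meeting each `v i` nontrivially
and the `v i` pairwise intersecting in zero. -/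
theorem intersectionGraph_nClaw_iff_independent_of_reduced
    (R : Type*) [CommRing R] [Nontrivial R] [IsReduced R] (n : ℕ) (hn : 2 ≤ n) :
    (∃ a : Fin n → Ideal R, (∀ i, a i ≠ ⊥) ∧
      (∀ i, a i ⊓ (∑ j ∈ Finset.univ.erase i, a j) = ⊥) ∧ (∑ i, a i) ≠ ⊤) ↔
    (∃ (c : Ideal R) (v : Fin n → Ideal R),
      (c ≠ ⊥ ∧ c ≠ ⊤) ∧ (∀ i, v i ≠ ⊥ ∧ v i ≠ ⊤) ∧
      Function.Injective v ∧ (∀ i, v i ≠ c) ∧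
      (∀ i, c ⊓ v i ≠ ⊥) ∧ (∀ i j, i ≠ j → v i ⊓ v j = ⊥)) := by
  classical
  have hnontriv : Nontrivial (Fin n) := by
    refine ⟨⟨⟨0, by omega⟩, ⟨1, by omega⟩, ?_⟩⟩
    simp [Fin.ext_iff]
  constructor
  · rintro ⟨a, ha0, hind, hsum⟩
    refine ⟨∑ i, a i, a, ⟨?_, hsum⟩, ?_, ?_, ?_, ?_, ?_⟩
    · -- c ≠ ⊥
      intro h
      have : a ⟨0, by omega⟩ ≤ ∑ i, a i := Finset.single_le_sum (fun k _ => bot_le) (Finset.mem_univ _)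
      exact ha0 ⟨0, by omega⟩ (le_bot_iff.mp (h ▸ this))
    · -- v i nontrivial
      intro i
      refine ⟨ha0 i, ?_⟩
      intro htop
      obtain ⟨j, hj⟩ := exists_ne i
      have h1 : a j ≤ ∑ k ∈ Finset.univ.erase i, a k :=
        Finset.single_le_sum (fun k _ => bot_le) (Finset.mem_erase.mpr ⟨hj, Finset.mem_univ _⟩)
      have h2 : a j ≤ a i ⊓ ∑ k ∈ Finset.univ.erase i, a k :=
        le_inf (htop ▸ le_top) h1
      exact ha0 j (le_bot_iff.mp ((hind i) ▸ h2))
    · -- injective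
      intro i j hij
      by_contra hne
      have h1 : a j ≤ ∑ k ∈ Finset.univ.erase i, a k :=
        Finset.single_le_sum (fun k _ => bot_le)
          (Finset.mem_erase.mpr ⟨fun h => hne h.symm, Finset.mem_univ _⟩)
      have h2 : a i ≤ a i ⊓ ∑ k ∈ Finset.univ.erase i, a k := le_inf le_rfl (hij ▸ h1)
      exact ha0 i (le_bot_iff.mp ((hind i) ▸ h2))
    · -- v i ≠ c
      intro i hi
      obtain ⟨j, hj⟩ := exists_ne i
      have h1 : a i ≤ ∑ k ∈ Finset.univ.erase j, a k :=
        Finset.single_le_sum (fun k _ => bot_le)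
          (Finset.mem_erase.mpr ⟨fun h => hj h.symm, Finset.mem_univ _⟩)
      have h2 : a j ≤ ∑ i, a i := Finset.single_le_sum (fun k _ => bot_le) (Finset.mem_univ _)
      have h3 : a j ≤ a j ⊓ ∑ k ∈ Finset.univ.erase j, a k :=
        le_inf le_rfl (le_trans (hi ▸ h2) h1)
      exact ha0 j (le_bot_iff.mp ((hind j) ▸ h3))
    · -- c ⊓ v i ≠ ⊥
      intro i h
      have h1 : a i ≤ (∑ i, a i) ⊓ a i :=
        le_inf (Finset.single_le_sum (fun k _ => bot_le) (Finset.mem_univ _)) le_rfl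
      exact ha0 i (le_bot_iff.mp (h ▸ h1))
    · -- v i ⊓ v j = ⊥
      intro i j hij
      refine le_bot_iff.mp ?_
      have h1 : a j ≤ ∑ k ∈ Finset.univ.erase i, a k :=
        Finset.single_le_sum (fun k _ => bot_le)
          (Finset.mem_erase.mpr ⟨fun h => hij h.symm, Finset.mem_univ _⟩)
      calc a i ⊓ a j ≤ a i ⊓ ∑ k ∈ Finset.univ.erase i, a k := inf_le_inf_left _ h1
        _ = ⊥ := hind i
  · rintro ⟨c, v, ⟨hc0, hcT⟩, hv, hvinj, hvc, hcv, hvv⟩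
    refine ⟨fun i => c ⊓ v i, fun i => hcv i, ?_, ?_⟩
    · intro i
      refine le_bot_iff.mp ?_
      intro x hx
      have hxi : x ∈ v i := (hx.1).2
      have hxs : x ∈ ∑ j ∈ Finset.univ.erase i, c ⊓ v j := hx.2
      -- show x * x = 0
      have hmul : (∑ j ∈ Finset.univ.erase i, c ⊓ v j) * (c ⊓ v i) ≤ ⊥ := by
        rw [Finset.sum_mul]
        refine idealSum_le fun j hj => ?_
        have hji : j ≠ i := (Finset.mem_erase.mp hj).1
        calc (c ⊓ v j) * (c ⊓ v i) ≤ v j * v i :=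
              Ideal.mul_mono inf_le_right inf_le_right
          _ ≤ v j ⊓ v i := Ideal.mul_le_inf
          _ = ⊥ := hvv j i hji
      have hx2 : x * x ∈ (⊥ : Ideal R) := hmul (Ideal.mul_mem_mul hxs hx.1)
      have : x * x = 0 := Ideal.mem_bot.mp hx2
      have : x = 0 := IsReduced.eq_zero x ⟨2, by rw [pow_two]; exact this⟩
      simpa [Ideal.mem_bot] using this
    · intro h
      have hle : (∑ i, c ⊓ v i) ≤ c := idealSum_le fun j _ => inf_le_left
      exact hcT (top_le_iff.mp (h ▸ hle))
end

section
/- Let S be a commutative ring with identity 1 ≠ 0 having at least two nontrivial ideals, and let F be a field. If the intersection graph Γ(S) has a Hamiltonian path, then the intersection graph Γ(S × F) of the product ring S × F has a Hamiltonian cycle. -/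
open scoped Classical

/-- The intersection graph of a commutative ring: vertices are the nontrivial ideals,
two distinct ideals being adjacent iff their intersection is nonzero. -/
def intersectionGraph (R : Type*) [CommRing R] :
    SimpleGraph {I : Ideal R // I ≠ ⊥ ∧ I ≠ ⊤} where
  Adj I J := I ≠ J ∧ (I : Ideal R) ⊓ (J : Ideal R) ≠ ⊥
  symm := ⟨fun I J h => ⟨h.1.symm, by rw [inf_comm]; exact h.2⟩⟩
  loopless := ⟨fun I h => h.1 rfl⟩

section Aux

variable {R T : Type*} [Semiring R] [Semiring T]

lemma IG.prod_bot_bot : (Ideal.prod (⊥ : Ideal R) (⊥ : Ideal T)) = ⊥ := by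
  ext ⟨r, s⟩
  simp [Ideal.mem_prod, Prod.ext_iff, Ideal.mem_bot]

lemma IG.prod_eq_bot_iff {I : Ideal R} {J : Ideal T} :
    Ideal.prod I J = ⊥ ↔ I = ⊥ ∧ J = ⊥ := by
  rw [← IG.prod_bot_bot, Ideal.prod_inj]

lemma IG.prod_eq_top_iff {I : Ideal R} {J : Ideal T} :
    Ideal.prod I J = ⊤ ↔ I = ⊤ ∧ J = ⊤ := by
  rw [← Ideal.prod_top_top, Ideal.prod_inj]

lemma IG.prod_inf_prod {I I' : Ideal R} {J J' : Ideal T} :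
    Ideal.prod I J ⊓ Ideal.prod I' J' = Ideal.prod (I ⊓ I') (J ⊓ J') := by
  ext ⟨r, s⟩
  simp only [Submodule.mem_inf, Ideal.mem_prod]
  tauto

/-- In a walk of length at least two with no repeated vertex, the "closing edge"
from the final vertex back to the initial one does not occur. -/
lemma IG.no_closing_edge {V : Type*} {G : SimpleGraph V} {x y : V} {p : G.Walk x y}
    (hnd : p.support.Nodup) (hlen : 2 ≤ p.length) : s(y, x) ∉ p.edges := by
  cases p with
  | nil => simp
  | @cons _ z _ h q =>
    simp only [SimpleGraph.Walk.support_cons, List.nodup_cons] at hnd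
    intro hmem
    simp only [SimpleGraph.Walk.edges_cons, List.mem_cons] at hmem
    rcases hmem with hmem | hmem
    · rw [Sym2.eq_iff] at hmem
      rcases hmem with ⟨rfl, rfl⟩ | ⟨rfl, -⟩
      · exact hnd.1 (q.end_mem_support)
      · -- q : Walk y y with nodup support, so q = nil, contradicting length
        have hq : q.IsPath := SimpleGraph.Walk.IsPath.mk' hnd.2
        have : (⟨q, hq⟩ : G.Path y y) = SimpleGraph.Path.nil := SimpleGraph.Path.loop_eq _
        have hqn : q = SimpleGraph.Walk.nil := congrArg Subtype.val this
        subst hqn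
        simp [SimpleGraph.Walk.length_cons] at hlen
    · exact hnd.1 (q.snd_mem_support_of_mem_edges hmem)

end Aux

/-- Let `S` be a commutative ring with `1 ≠ 0` having at least two
nontrivial ideals, and let `F` be a field.  If the intersection graph `Γ(S)` has a
Hamiltonian path, then the intersection graph `Γ(S × F)` has a Hamiltonian cycle. -/
theorem intersectionGraph_prod_field_hamiltonian
    (S F : Type*) [CommRing S] [Nontrivial S] [Field F]
    (h_two : ∃ I J : Ideal S, I ≠ J ∧ (I ≠ ⊥ ∧ I ≠ ⊤) ∧ (J ≠ ⊥ ∧ J ≠ ⊤))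
    (h_path : ∃ (u v : {I : Ideal S // I ≠ ⊥ ∧ I ≠ ⊤})
      (p : (intersectionGraph S).Walk u v), p.IsHamiltonian) :
    ∃ (a : {I : Ideal (S × F) // I ≠ ⊥ ∧ I ≠ ⊤})
      (p : (intersectionGraph (S × F)).Walk a a), p.IsHamiltonianCycle := by
  -- basic nontriviality facts
  have hFtb : (⊤ : Ideal F) ≠ ⊥ := by
    intro h
    exact (one_ne_zero : (1 : F) ≠ 0) (by rw [← Ideal.mem_bot, ← h]; trivial)
  have hStb : (⊤ : Ideal S) ≠ ⊥ := by
    intro h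
    exact (one_ne_zero : (1 : S) ≠ 0) (by rw [← Ideal.mem_bot, ← h]; trivial)
  -- the two families of vertices of Γ(S × F)
  set VS := {I : Ideal S // I ≠ ⊥ ∧ I ≠ ⊤}
  set VP := {I : Ideal (S × F) // I ≠ ⊥ ∧ I ≠ ⊤}
  have hg : ∀ x : VS, (Ideal.prod (x : Ideal S) (⊤ : Ideal F) ≠ ⊥ ∧
      Ideal.prod (x : Ideal S) (⊤ : Ideal F) ≠ ⊤) := by
    intro x
    constructor
    · rw [Ne, IG.prod_eq_bot_iff]; rintro ⟨-, h⟩; exact hFtb h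
    · rw [Ne, IG.prod_eq_top_iff]; rintro ⟨h, -⟩; exact x.2.2 h
  have hf : ∀ x : VS, (Ideal.prod (x : Ideal S) (⊥ : Ideal F) ≠ ⊥ ∧
      Ideal.prod (x : Ideal S) (⊥ : Ideal F) ≠ ⊤) := by
    intro x
    constructor
    · rw [Ne, IG.prod_eq_bot_iff]; rintro ⟨h, -⟩; exact x.2.1 h
    · rw [Ne, IG.prod_eq_top_iff]; rintro ⟨-, h⟩; exact hFtb h.symm
  let g : VS → VP := fun x => ⟨Ideal.prod (x : Ideal S) ⊤, hg x⟩
  let f : VS → VP := fun x => ⟨Ideal.prod (x : Ideal S) ⊥, hf x⟩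
  let z0 : VP := ⟨Ideal.prod (⊥ : Ideal S) (⊤ : Ideal F),
    by rw [Ne, IG.prod_eq_bot_iff, Ne, IG.prod_eq_top_iff]; tauto⟩
  let s0 : VP := ⟨Ideal.prod (⊤ : Ideal S) (⊥ : Ideal F),
    by rw [Ne, IG.prod_eq_bot_iff, Ne, IG.prod_eq_top_iff]; tauto⟩
  -- injectivity and distinctness facts
  have ginj : Function.Injective g := by
    intro x y h
    have := congrArg Subtype.val h
    simp only [g] at this
    exact Subtype.ext ((Ideal.prod_inj.mp this).1)
  have finj : Function.Injective f := by
    intro x y h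
    have := congrArg Subtype.val h
    simp only [f] at this
    exact Subtype.ext ((Ideal.prod_inj.mp this).1)
  have gf_ne : ∀ x y : VS, g x ≠ f y := by
    intro x y h
    have := congrArg Subtype.val h
    simp only [g, f] at this
    exact hFtb ((Ideal.prod_inj.mp this).2)
  have gz_ne : ∀ x : VS, g x ≠ z0 := by
    intro x h
    have := congrArg Subtype.val h
    simp only [g, z0] at this
    exact x.2.1 ((Ideal.prod_inj.mp this).1)
  have gs_ne : ∀ x : VS, g x ≠ s0 := by
    intro x h
    have := congrArg Subtype.val h
    simp only [g, s0] at this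
    exact hFtb ((Ideal.prod_inj.mp this).2)
  have fz_ne : ∀ x : VS, f x ≠ z0 := by
    intro x h
    have := congrArg Subtype.val h
    simp only [f, z0] at this
    exact hFtb ((Ideal.prod_inj.mp this).2).symm
  have fs_ne : ∀ x : VS, f x ≠ s0 := by
    intro x h
    have := congrArg Subtype.val h
    simp only [f, s0] at this
    exact x.2.2 ((Ideal.prod_inj.mp this).1)
  have zs_ne : z0 ≠ s0 := by
    intro h
    have := congrArg Subtype.val h
    simp only [z0, s0] at this
    exact hStb ((Ideal.prod_inj.mp this).1).symm
  -- classification of vertices of Γ(S × F)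
  have classify : ∀ a : VP, a = z0 ∨ a = s0 ∨ (∃ x : VS, a = g x) ∨ (∃ x : VS, a = f x) := by
    intro a
    obtain ⟨K, hK⟩ := a
    have hKeq := Ideal.ideal_prod_eq K
    set I := Ideal.map (RingHom.fst S F) K with hI
    set J := Ideal.map (RingHom.snd S F) K with hJ
    rcases J.eq_bot_or_top with hJb | hJt
    · rcases eq_or_ne I ⊤ with hIt | hIn
      · right; left
        refine Subtype.ext ?_
        show K = _
        rw [hKeq, hJb, hIt]
      · rcases eq_or_ne I ⊥ with hIb | hInb
        · exfalso; exact hK.1 (by rw [hKeq, hJb, hIb, IG.prod_bot_bot])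
        · right; right; right
          refine ⟨⟨I, hInb, hIn⟩, Subtype.ext ?_⟩
          show K = _
          rw [hKeq, hJb]
    · rcases eq_or_ne I ⊥ with hIb | hInb
      · left
        refine Subtype.ext ?_
        show K = _
        rw [hKeq, hJt, hIb]
      · rcases eq_or_ne I ⊤ with hIt | hIn
        · exfalso; exact hK.2 (by rw [hKeq, hJt, hIt, Ideal.prod_top_top])
        · right; right; left
          refine ⟨⟨I, hInb, hIn⟩, Subtype.ext ?_⟩
          show K = _
          rw [hKeq, hJt]
  -- graph homomorphisms
  have gadj : ∀ {x y : VS}, (intersectionGraph S).Adj x y →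
      (intersectionGraph (S × F)).Adj (g x) (g y) := by
    intro x y hxy
    refine ⟨fun h => hxy.1 (ginj h), ?_⟩
    show Ideal.prod (x : Ideal S) ⊤ ⊓ Ideal.prod (y : Ideal S) ⊤ ≠ ⊥
    rw [IG.prod_inf_prod, Ne, IG.prod_eq_bot_iff]
    rintro ⟨-, h⟩
    exact hFtb (by rwa [inf_idem] at h)
  have fadj : ∀ {x y : VS}, (intersectionGraph S).Adj x y →
      (intersectionGraph (S × F)).Adj (f x) (f y) := by
    intro x y hxy
    refine ⟨fun h => hxy.1 (finj h), ?_⟩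
    show Ideal.prod (x : Ideal S) ⊥ ⊓ Ideal.prod (y : Ideal S) ⊥ ≠ ⊥
    rw [IG.prod_inf_prod, Ne, IG.prod_eq_bot_iff]
    rintro ⟨h, -⟩
    exact hxy.2 h
  let gh : intersectionGraph S →g intersectionGraph (S × F) := ⟨g, gadj⟩
  let fh : intersectionGraph S →g intersectionGraph (S × F) := ⟨f, fadj⟩
  -- unpack the Hamiltonian path
  obtain ⟨u, v, p, hham⟩ := h_path
  have hmem : ∀ a : VS, a ∈ p.support := fun a =>
    hham.mem_support a
  have hnodup : p.support.Nodup :=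
    hham.isPath.support_nodup
  cases p with
  | nil =>
    exfalso
    obtain ⟨I, J, hIJ, hI, hJ⟩ := h_two
    have h1 := hmem ⟨I, hI⟩
    have h2 := hmem ⟨J, hJ⟩
    simp only [SimpleGraph.Walk.support_nil, List.mem_singleton] at h1 h2
    exact hIJ (congrArg Subtype.val (h1.trans h2.symm))
  | @cons _ w _ h' q =>
    simp only [SimpleGraph.Walk.support_cons, List.nodup_cons] at hnodup
    obtain ⟨hu_not, hqnd⟩ := hnodup
    -- edge proofs
    have e₁ : (intersectionGraph (S × F)).Adj (g u) z0 := by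
      refine ⟨gz_ne u, ?_⟩
      show Ideal.prod (u : Ideal S) ⊤ ⊓ Ideal.prod ⊥ ⊤ ≠ ⊥
      rw [IG.prod_inf_prod, Ne, IG.prod_eq_bot_iff]
      rintro ⟨-, hh⟩
      exact hFtb (by rwa [inf_idem] at hh)
    have e₂ : (intersectionGraph (S × F)).Adj z0 (g w) := by
      refine ⟨fun hh => gz_ne w hh.symm, ?_⟩
      show Ideal.prod (⊥ : Ideal S) ⊤ ⊓ Ideal.prod (w : Ideal S) ⊤ ≠ ⊥
      rw [IG.prod_inf_prod, Ne, IG.prod_eq_bot_iff]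
      rintro ⟨-, hh⟩
      exact hFtb (by rwa [inf_idem] at hh)
    have e₃ : (intersectionGraph (S × F)).Adj (g v) (f v) := by
      refine ⟨gf_ne v v, ?_⟩
      show Ideal.prod (v : Ideal S) ⊤ ⊓ Ideal.prod (v : Ideal S) ⊥ ≠ ⊥
      rw [IG.prod_inf_prod, Ne, IG.prod_eq_bot_iff]
      rintro ⟨hh, -⟩
      exact v.2.1 (by simpa using hh)
    have e₄ : (intersectionGraph (S × F)).Adj (f u) s0 := by
      refine ⟨fs_ne u, ?_⟩
      show Ideal.prod (u : Ideal S) ⊥ ⊓ Ideal.prod ⊤ ⊥ ≠ ⊥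
      rw [IG.prod_inf_prod, Ne, IG.prod_eq_bot_iff]
      rintro ⟨hh, -⟩
      exact u.2.1 (by simpa using hh)
    have e₅ : (intersectionGraph (S × F)).Adj s0 (g u) := by
      refine ⟨fun hh => gs_ne u hh.symm, ?_⟩
      show Ideal.prod (⊤ : Ideal S) ⊥ ⊓ Ideal.prod (u : Ideal S) ⊤ ≠ ⊥
      rw [IG.prod_inf_prod, Ne, IG.prod_eq_bot_iff]
      rintro ⟨hh, -⟩
      exact u.2.1 (by simpa using hh)
    -- the walks
    let w₁ : (intersectionGraph (S × F)).Walk (g w) (g v) := q.map gh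
    let w₂ : (intersectionGraph (S × F)).Walk (f v) (f u) :=
      ((SimpleGraph.Walk.cons h' q).reverse).map fh
    let rest : (intersectionGraph (S × F)).Walk z0 (g u) :=
      SimpleGraph.Walk.cons e₂ (w₁.append (SimpleGraph.Walk.cons e₃
        (w₂.append (SimpleGraph.Walk.cons e₄ (SimpleGraph.Walk.cons e₅ SimpleGraph.Walk.nil)))))
    have hsupp : rest.support =
        z0 :: (q.support.map g ++ (((u :: q.support).reverse).map f ++ [s0, g u])) := by
      simp only [rest, w₁, w₂, SimpleGraph.Walk.support_cons, SimpleGraph.Walk.support_append,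
        SimpleGraph.Walk.support_map, SimpleGraph.Walk.support_reverse,
        SimpleGraph.Walk.support_nil, List.tail_cons]
      simp [gh, fh, List.append_assoc]
    -- nodup of rest.support
    have hnd : rest.support.Nodup := by
      rw [hsupp]
      refine List.nodup_cons.mpr ⟨?_, ?_⟩
      · intro hmem
        rcases List.mem_append.mp hmem with hmem | hmem
        · obtain ⟨x, -, hx⟩ := List.mem_map.mp hmem
          exact gz_ne x hx
        · rcases List.mem_append.mp hmem with hmem | hmem
          · obtain ⟨x, -, hx⟩ := List.mem_map.mp hmem
            exact fz_ne x hx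
          · rcases List.mem_cons.mp hmem with hx | hx
            · exact zs_ne hx
            · exact gz_ne u (List.mem_singleton.mp hx).symm
      · rw [List.nodup_append']
        refine ⟨hqnd.map ginj, ?_, ?_⟩
        · rw [List.nodup_append']
          refine ⟨?_, ?_, ?_⟩
          · exact (List.nodup_reverse.mpr (List.nodup_cons.mpr ⟨hu_not, hqnd⟩)).map finj
          · refine List.nodup_cons.mpr ⟨?_, List.nodup_singleton _⟩
            intro hh
            exact gs_ne u (List.mem_singleton.mp hh).symm
          · intro a ha hb
            obtain ⟨x, -, rfl⟩ := List.mem_map.mp ha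
            rcases List.mem_cons.mp hb with hh | hh
            · exact fs_ne x hh
            · exact gf_ne u x (List.mem_singleton.mp hh).symm
        · intro a ha hb
          obtain ⟨x, hxq, rfl⟩ := List.mem_map.mp ha
          rcases List.mem_append.mp hb with hb | hb
          · obtain ⟨y, -, hy⟩ := List.mem_map.mp hb
            exact gf_ne x y hy.symm
          · rcases List.mem_cons.mp hb with hh | hh
            · exact gs_ne x hh
            · exact hu_not (ginj (List.mem_singleton.mp hh) ▸ hxq)
    -- coverage of rest.support
    have hcov : ∀ a : VP, a ∈ rest.support := by
      intro a
      rw [hsupp]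
      rcases classify a with rfl | rfl | ⟨x, rfl⟩ | ⟨x, rfl⟩
      · exact List.mem_cons_self
      · exact List.mem_cons_of_mem _ (List.mem_append_right _
          (List.mem_append_right _ (List.mem_cons_self)))
      · have hx := hmem x
        rw [SimpleGraph.Walk.support_cons] at hx
        rcases List.mem_cons.mp hx with rfl | hx
        · exact List.mem_cons_of_mem _ (List.mem_append_right _
            (List.mem_append_right _ (List.mem_cons_of_mem _ (List.mem_cons_self))))
        · exact List.mem_cons_of_mem _ (List.mem_append_left _ (List.mem_map_of_mem (f := g) hx))
      · have hx := hmem x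
        rw [SimpleGraph.Walk.support_cons] at hx
        exact List.mem_cons_of_mem _ (List.mem_append_right _ (List.mem_append_left _
          (List.mem_map_of_mem (f := f) (List.mem_reverse.mpr hx))))
    -- rest has length at least 2
    have hlen : 2 ≤ rest.length := by
      simp only [rest, SimpleGraph.Walk.length_cons, SimpleGraph.Walk.length_append,
        SimpleGraph.Walk.length_nil]
      omega
    -- assemble the Hamiltonian cycle
    have hrp : rest.IsPath := SimpleGraph.Walk.IsPath.mk' hnd
    have hne : s(g u, z0) ∉ rest.edges := IG.no_closing_edge hnd hlen
    refine ⟨g u, SimpleGraph.Walk.cons e₁ rest, ?_⟩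
    rw [SimpleGraph.Walk.isHamiltonianCycle_iff_isCycle_and_support_count_tail_eq_one]
    constructor
    · exact SimpleGraph.Path.cons_isCycle ⟨rest, hrp⟩ e₁ hne
    · intro a
      rw [SimpleGraph.Walk.support_cons, List.tail_cons]
      exact @List.count_eq_one_of_mem _ instBEqOfDecidableEq _ _ _ hnd (hcov a)
end

section
/- Let R₁ and R₂ be commutative rings with identity 1 ≠ 0, each having only finitely many ideals, and suppose each of R₁ and R₂ has at least 4 ideals (counting the zero ideal and the whole ring). Then the intersection graph Γ(R₁ × R₂) of the product ring R₁ × R₂ is Hamiltonian. -/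
open scoped Classical

namespace HamAux

open SimpleGraph

variable {V : Type*} {G : SimpleGraph V}

set_option linter.deprecated false in
private theorem chainC_cons {α : Type*} {R : α → α → Prop} {a b : α} {l : List α} :
    List.Chain R a (b :: l) ↔ R a b ∧ List.Chain R b l := List.isChain_cons_cons

set_option linter.deprecated false in
private theorem chainC_split {α : Type*} {R : α → α → Prop} {a b : α} {l₁ l₂ : List α} :
    List.Chain R a (l₁ ++ b :: l₂) ↔ List.Chain R a (l₁ ++ [b]) ∧ List.Chain R b l₂ :=
  List.isChain_cons_split

set_option linter.deprecated false in
private theorem chainC_map {α β : Type*} {R : α → α → Prop} (f : β → α) {b : β} {l : List β} :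
    List.Chain R (f b) (List.map f l) ↔ List.Chain (fun a b => R (f a) (f b)) b l :=
  List.isChain_map f (l := b :: l)

private def mkWalk (G : SimpleGraph V) :
    ∀ (a : V) (l : List V) (b : V), List.Chain G.Adj a (l ++ [b]) → G.Walk a b
  | _, [], _, h => SimpleGraph.Walk.cons (chainC_cons.mp h).1 SimpleGraph.Walk.nil
  | _, c :: l, b, h =>
      SimpleGraph.Walk.cons (List.chain_cons.mp h).1 (mkWalk G c l b (List.chain_cons.mp h).2)

private lemma mkWalk_support (G : SimpleGraph V) :
    ∀ (a : V) (l : List V) (b : V) (h : List.Chain G.Adj a (l ++ [b])),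
      (mkWalk G a l b h).support = a :: (l ++ [b])
  | _, [], _, h => by simp [mkWalk]
  | a, c :: l, b, h => by
      simp [mkWalk, mkWalk_support G c l b (List.chain_cons.mp h).2]

private lemma edge_start :
    ∀ {u w y : V} (q : G.Walk u w), u ∉ q.support.tail → s(u, y) ∈ q.edges →
      ∃ (h : G.Adj u y) (q' : G.Walk y w), q = SimpleGraph.Walk.cons h q'
  | u, _, y, .nil, _, he => by simp at he
  | u, w, y, .cons h q', hs, he => by
    rw [SimpleGraph.Walk.edges_cons, List.mem_cons] at he
    rcases he with he | he
    · rw [Sym2.eq_iff] at he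
      rcases he with ⟨-, rfl⟩ | ⟨huv, -⟩
      · exact ⟨h, q', rfl⟩
      · exact absurd huv h.ne
    · refine absurd (SimpleGraph.Walk.fst_mem_support_of_mem_edges q' he) ?_
      simpa using hs

private lemma exists_hamCycle [DecidableEq V] (G : SimpleGraph V)
    (a : V) (L : List V) (hL2 : 2 ≤ L.length)
    (hchain : List.Chain G.Adj a (L ++ [a]))
    (hnd : (a :: L).Nodup)
    (hall : ∀ v, v ∈ a :: L) :
    ∃ p : G.Walk a a, p.IsHamiltonianCycle := by
  obtain ⟨x, l', rfl⟩ : ∃ x l', L = x :: l' := by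
    cases L with
    | nil => simp at hL2
    | cons x l => exact ⟨x, l, rfl⟩
  obtain ⟨c, cs, rfl⟩ : ∃ c cs, l' = c :: cs := by
    cases l' with
    | nil => simp at hL2
    | cons c cs => exact ⟨c, cs, rfl⟩
  rw [List.cons_append, chainC_cons] at hchain
  obtain ⟨hax, hchain⟩ := hchain
  have hnd0 := hnd
  rw [List.nodup_cons] at hnd0
  obtain ⟨haL, hndL⟩ := hnd0
  set q : G.Walk x a := mkWalk G x (c :: cs) a hchain with hqdef
  have hsupp : q.support = x :: ((c :: cs) ++ [a]) := mkWalk_support G x (c :: cs) a hchain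
  have hnd' : q.support.Nodup := by
    rw [hsupp, ← List.cons_append, List.nodup_append_comm]
    exact hnd
  have hpath : q.IsPath := SimpleGraph.Walk.IsPath.mk' hnd'
  have hedge : s(a, x) ∉ q.edges := by
    intro he
    have hx : x ∉ q.support.tail := by
      rw [hsupp]
      simp only [List.tail_cons, List.mem_append, List.mem_cons, List.mem_singleton,
        List.not_mem_nil, or_false]
      rw [List.nodup_cons, List.nodup_cons] at hnd
      push_neg
      refine ⟨⟨?_, ?_⟩, ?_⟩
      · intro h; exact hnd.2.1 (by simp [h])
      · intro h; exact hnd.2.1 (by simp [h])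
      · intro h; exact haL (by simp [h])
    obtain ⟨h', q', hq'⟩ := edge_start q hx (by rwa [Sym2.eq_swap] at he)
    have hs2 : q.support = x :: q'.support := by rw [hq']; simp
    rw [hsupp] at hs2
    have hs3 : (c :: cs) ++ [a] = q'.support := by
      injection hs2.symm with _ h2
      exact h2.symm
    have hs4 : q'.support = a :: q'.support.tail := SimpleGraph.Walk.support_eq_cons q'
    rw [hs4] at hs3
    have : c = a := by injection hs3
    exact haL (by simp [this])
  have hcyc : (SimpleGraph.Walk.cons hax q).IsCycle :=
    (SimpleGraph.Walk.cons_isCycle_iff q hax).mpr ⟨hpath, hedge⟩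
  refine ⟨SimpleGraph.Walk.cons hax q, hcyc, ?_⟩
  intro v
  have hnnil : ¬ (SimpleGraph.Walk.cons hax q).Nil := SimpleGraph.Walk.not_nil_cons
  rw [SimpleGraph.Walk.support_tail_of_not_nil _ hnnil, SimpleGraph.Walk.support_cons, List.tail_cons]
  refine List.count_eq_one_of_mem hnd' ?_
  rcases List.mem_cons.mp (hall v) with rfl | hv
  · rw [hsupp]; simp
  · rw [hsupp]; simp only [List.mem_cons, List.mem_append, List.mem_singleton] at hv ⊢
    tauto

private lemma chain_attach_of {α : Type*} {P : α → Prop} {r : {x // P x} → {x // P x} → Prop}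
    {R : α → α → Prop}
    (hr : ∀ (a b : α) (ha : P a) (hb : P b), R a b → r ⟨a, ha⟩ ⟨b, hb⟩) :
    ∀ (x : α) (l : List α) (hx : P x) (H : ∀ y ∈ l, P y),
      List.Chain R x l → List.Chain r ⟨x, hx⟩ (l.attachWith P H)
  | _, [], _, _, _ => List.Chain.nil
  | x, c :: l, hx, H, h => by
    rw [chainC_cons] at h
    rw [List.attachWith_cons, chainC_cons]
    exact ⟨hr x c hx _ h.1, chain_attach_of hr c l _ _ h.2⟩

section RingLemmas

variable {R₁ R₂ : Type*} [CommRing R₁] [CommRing R₂]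

private lemma prod_bot_bot : (Ideal.prod ⊥ ⊥ : Ideal (R₁ × R₂)) = ⊥ := by
  ext ⟨x, y⟩
  simp [Ideal.mem_prod, Prod.ext_iff]

private lemma prod_eq_bot_iff' {I : Ideal R₁} {J : Ideal R₂} :
    Ideal.prod I J = ⊥ ↔ I = ⊥ ∧ J = ⊥ := by
  rw [← prod_bot_bot, Ideal.prod_inj]

private lemma prod_eq_top_iff' {I : Ideal R₁} {J : Ideal R₂} :
    Ideal.prod I J = ⊤ ↔ I = ⊤ ∧ J = ⊤ := by
  rw [← Ideal.prod_top_top, Ideal.prod_inj]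

private lemma prod_inf_prod' {I I' : Ideal R₁} {J J' : Ideal R₂} :
    Ideal.prod I J ⊓ Ideal.prod I' J' = Ideal.prod (I ⊓ I') (J ⊓ J') := by
  ext ⟨x, y⟩
  simp only [Submodule.mem_inf, Ideal.mem_prod]
  tauto

/-- Adjacency at the level of pairs of ideals. -/
private def Pa (p q : Ideal R₁ × Ideal R₂) : Prop :=
  p ≠ q ∧ (p.1 ⊓ q.1 ≠ ⊥ ∨ p.2 ⊓ q.2 ≠ ⊥)

private lemma pa_of (p q : Ideal R₁ × Ideal R₂) (h : Pa p q) :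
    Ideal.prod p.1 p.2 ≠ Ideal.prod q.1 q.2 ∧ Ideal.prod p.1 p.2 ⊓ Ideal.prod q.1 q.2 ≠ ⊥ := by
  constructor
  · intro he
    rw [Ideal.prod_inj] at he
    exact h.1 (Prod.ext he.1 he.2)
  · rw [prod_inf_prod']
    intro he
    rw [prod_eq_bot_iff'] at he
    rcases h.2 with h2 | h2
    · exact h2 he.1
    · exact h2 he.2

private lemma chain_triples (hbt₁ : (⊥ : Ideal R₁) ≠ ⊤) (hbt₂ : (⊥ : Ideal R₂) ≠ ⊤)
    (I₁ : Ideal R₁) (hI₁b : I₁ ≠ ⊥) (hI₁t : I₁ ≠ ⊤) :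
    ∀ (L : List (Ideal R₂)), (∀ J ∈ L, J ≠ ⊥ ∧ J ≠ ⊤) →
      ∀ (A : Ideal R₁) (B : Ideal R₂), ((A = I₁ ∧ B = ⊥) ∨ (A = ⊤ ∧ B ≠ ⊤)) →
      List.Chain Pa (A, B)
        ((L.flatMap fun J => [(I₁, J), ((⊥ : Ideal R₁), J), ((⊤ : Ideal R₁), J)]) ++
          [(I₁, (⊤ : Ideal R₂))]) := by
  intro L
  induction L with
  | nil =>
    intro _ A B hAB
    simp only [List.flatMap_nil, List.nil_append]
    refine List.Chain.cons ⟨?_, Or.inl ?_⟩ List.Chain.nil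
    · rcases hAB with ⟨rfl, rfl⟩ | ⟨rfl, hB⟩
      · exact fun h => hbt₂ (congrArg Prod.snd h)
      · exact fun h => hI₁t (congrArg Prod.fst h).symm
    · rcases hAB with ⟨rfl, rfl⟩ | ⟨rfl, hB⟩ <;> simpa using hI₁b
  | cons J L ih =>
    intro hL A B hAB
    obtain ⟨hJb, hJt⟩ := hL J (List.mem_cons_self)
    simp only [List.flatMap_cons, List.cons_append, List.append_assoc]
    refine List.Chain.cons ⟨?_, Or.inl ?_⟩ (List.Chain.cons ⟨?_, Or.inr ?_⟩
      (List.Chain.cons ⟨?_, Or.inr ?_⟩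
        (ih (fun x hx => hL x (List.mem_cons_of_mem _ hx)) ⊤ J (Or.inr ⟨rfl, hJt⟩))))
    · rcases hAB with ⟨rfl, rfl⟩ | ⟨rfl, hB⟩
      · exact fun h => hJb (congrArg Prod.snd h).symm
      · exact fun h => hI₁t (congrArg Prod.fst h).symm
    · rcases hAB with ⟨rfl, rfl⟩ | ⟨rfl, hB⟩ <;> simpa using hI₁b
    · exact fun h => hI₁b (congrArg Prod.fst h)
    · simpa using hJb
    · exact fun h => hbt₁ (congrArg Prod.fst h)
    · simpa using hJb

private lemma chain_row (I : Ideal R₁) (hI : I ≠ ⊥) (rest : List (Ideal R₁ × Ideal R₂))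
    (hcont : ∀ B, B ≠ ⊥ → List.Chain Pa (I, B) rest) :
    ∀ (M : List (Ideal R₂)), (∀ J ∈ M, J ≠ ⊥) → M.Nodup →
      ∀ B, B ∉ M → (M = [] → B ≠ ⊥) →
      List.Chain Pa (I, B) ((M.map fun J => (I, J)) ++ rest) := by
  intro M
  induction M with
  | nil => intro _ _ B _ hB; simpa using hcont B (hB rfl)
  | cons J M ih =>
    intro hM hnd B hBM hBne
    simp only [List.map_cons, List.cons_append]
    refine List.Chain.cons ⟨?_, Or.inl ?_⟩
      (ih (fun x hx => hM x (List.mem_cons_of_mem _ hx)) (List.nodup_cons.mp hnd).2 J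
        (List.nodup_cons.mp hnd).1 (fun _ => hM J (List.mem_cons_self)))
    · exact fun h => hBM (by have hBJ : B = J := congrArg Prod.snd h
                             rw [hBJ]; exact List.mem_cons_self)
    · simpa using hI

private lemma chain_snake (hbt₂ : (⊥ : Ideal R₂) ≠ ⊤)
    (l₂ : List (Ideal R₂)) (hl₂ : ∀ J ∈ l₂, J ≠ ⊥) (hl₂nd : l₂.Nodup) (hl₂ne : l₂ ≠ []) :
    ∀ (L : List (Ideal R₁)), (∀ I ∈ L, I ≠ ⊥ ∧ I ≠ ⊤) → L.Nodup →
      ∀ (A : Ideal R₁) (B : Ideal R₂), A ≠ ⊤ → A ∉ L → B ≠ ⊥ → (L = [] → A ≠ ⊥) →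
      List.Chain Pa (A, B)
        ((L.flatMap fun I => ((⊤ :: ⊥ :: l₂).map fun J => (I, J))) ++
          [((⊤ : Ideal R₁), (⊥ : Ideal R₂))]) := by
  intro L
  induction L with
  | nil =>
    intro _ _ A B hAt hAL hB hA0
    simp only [List.flatMap_nil, List.nil_append]
    refine List.Chain.cons ⟨?_, Or.inl ?_⟩ List.Chain.nil
    · exact fun h => hAt (congrArg Prod.fst h)
    · simpa using hA0 rfl
  | cons I L ih =>
    intro hL hnd A B hAt hAL hB hA0
    obtain ⟨hIb, hIt⟩ := hL I (List.mem_cons_self)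
    simp only [List.flatMap_cons, List.map_cons, List.cons_append, List.append_assoc]
    refine List.Chain.cons ⟨?_, Or.inr ?_⟩ (List.Chain.cons ⟨?_, Or.inl ?_⟩ ?_)
    · exact fun h => hAL (by have hAI : A = I := congrArg Prod.fst h
                             rw [hAI]; exact List.mem_cons_self)
    · simpa using hB
    · exact fun h => hbt₂ (congrArg Prod.snd h).symm
    · simpa using hIb
    · exact chain_row I hIb _
        (fun B' hB' => ih (fun x hx => hL x (List.mem_cons_of_mem _ hx))
          (List.nodup_cons.mp hnd).2 I B' hIt (List.nodup_cons.mp hnd).1 hB' (fun _ => hIb))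
        l₂ hl₂ hl₂nd ⊥ (fun hc => hl₂ ⊥ hc rfl) (fun h2 => absurd h2 hl₂ne)

private lemma chain_main (hbt₁ : (⊥ : Ideal R₁) ≠ ⊤) (hbt₂ : (⊥ : Ideal R₂) ≠ ⊤)
    (I₁ : Ideal R₁) (hI₁b : I₁ ≠ ⊥) (hI₁t : I₁ ≠ ⊤)
    (t₁ : List (Ideal R₁)) (ht₁ : ∀ I ∈ t₁, I ≠ ⊥ ∧ I ≠ ⊤) (ht₁nd : t₁.Nodup)
    (ht₁ne : t₁ ≠ [])
    (l₂ : List (Ideal R₂)) (hl₂ : ∀ J ∈ l₂, J ≠ ⊥ ∧ J ≠ ⊤) (hl₂nd : l₂.Nodup)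
    (hl₂ne : l₂ ≠ []) :
    List.Chain Pa (I₁, (⊥ : Ideal R₂))
      (((l₂.flatMap fun J => [(I₁, J), ((⊥ : Ideal R₁), J), ((⊤ : Ideal R₁), J)]) ++
        (I₁, (⊤ : Ideal R₂)) :: ((⊥ : Ideal R₁), (⊤ : Ideal R₂)) ::
        ((t₁.flatMap fun I => ((⊤ :: ⊥ :: l₂).map fun J => (I, J))) ++
          [((⊤ : Ideal R₁), (⊥ : Ideal R₂))])) ++
       [(I₁, (⊥ : Ideal R₂))]) := by
  rw [List.append_assoc, List.cons_append, chainC_split]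
  constructor
  · exact chain_triples hbt₁ hbt₂ I₁ hI₁b hI₁t l₂ hl₂ I₁ ⊥ (Or.inl ⟨rfl, rfl⟩)
  · refine List.Chain.cons ⟨?_, Or.inr ?_⟩ ?_
    · exact fun h => hI₁b (congrArg Prod.fst h)
    · simpa using hbt₂.symm
    · rw [List.append_eq, List.append_assoc, List.singleton_append, chainC_split]
      constructor
      · exact chain_snake hbt₂ l₂ (fun J hJ => (hl₂ J hJ).1) hl₂nd hl₂ne t₁ ht₁ ht₁nd
          ⊥ ⊤ hbt₁ (fun hc => (ht₁ ⊥ hc).1 rfl) hbt₂.symm (fun h => absurd h ht₁ne)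
      · refine List.Chain.cons ⟨?_, Or.inl ?_⟩ List.Chain.nil
        · exact fun h => hI₁t (congrArg Prod.fst h).symm
        · simpa using hI₁b

private lemma mem_triples {I₁ : Ideal R₁} {L : List (Ideal R₂)} {p : Ideal R₁ × Ideal R₂}
    (h : p ∈ L.flatMap fun J => [(I₁, J), ((⊥ : Ideal R₁), J), ((⊤ : Ideal R₁), J)]) :
    p.2 ∈ L ∧ (p.1 = I₁ ∨ p.1 = ⊥ ∨ p.1 = ⊤) := by
  rw [List.mem_flatMap] at h
  obtain ⟨J, hJ, hp⟩ := h
  simp only [List.mem_cons, List.not_mem_nil, or_false] at hp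
  rcases hp with rfl | rfl | rfl <;> simp [hJ]

private lemma mem_snake {l₂ : List (Ideal R₂)} {L : List (Ideal R₁)} {p : Ideal R₁ × Ideal R₂}
    (h : p ∈ L.flatMap fun I => ((⊤ :: ⊥ :: l₂).map fun J => (I, J))) :
    p.1 ∈ L := by
  rw [List.mem_flatMap] at h
  obtain ⟨I, hI, hp⟩ := h
  rw [List.mem_map] at hp
  obtain ⟨J, _, rfl⟩ := hp
  simpa using hI

private lemma nodup_triples {I₁ : Ideal R₁} (hI₁b : I₁ ≠ ⊥) (hI₁t : I₁ ≠ ⊤)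
    (hbt₁ : (⊥ : Ideal R₁) ≠ ⊤) :
    ∀ (L : List (Ideal R₂)), L.Nodup →
      (L.flatMap fun J => [(I₁, J), ((⊥ : Ideal R₁), J), ((⊤ : Ideal R₁), J)]).Nodup := by
  intro L
  induction L with
  | nil => simp
  | cons J L ih =>
    intro hnd
    rw [List.nodup_cons] at hnd
    simp only [List.flatMap_cons, List.cons_append, List.nil_append]
    rw [List.nodup_cons, List.nodup_cons, List.nodup_cons]
    refine ⟨?_, ?_, ?_, ih hnd.2⟩
    · intro h
      rcases List.mem_cons.mp h with h | h
      · exact hI₁b (congrArg Prod.fst h)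
      rcases List.mem_cons.mp h with h | h
      · exact hI₁t (congrArg Prod.fst h)
      · exact hnd.1 (mem_triples h).1
    · intro h
      rcases List.mem_cons.mp h with h | h
      · exact hbt₁ (congrArg Prod.fst h)
      · exact hnd.1 (mem_triples h).1
    · intro h
      exact hnd.1 (mem_triples h).1

private lemma nodup_snake {l₂ : List (Ideal R₂)} (hl₂nd : l₂.Nodup)
    (hl₂b : (⊥ : Ideal R₂) ∉ l₂) (hl₂t : (⊤ : Ideal R₂) ∉ l₂) (hbt₂ : (⊥ : Ideal R₂) ≠ ⊤) :
    ∀ (L : List (Ideal R₁)), L.Nodup →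
      (L.flatMap fun I => ((⊤ :: ⊥ :: l₂).map fun J => (I, J))).Nodup := by
  intro L
  induction L with
  | nil => simp
  | cons I L ih =>
    intro hnd
    rw [List.nodup_cons] at hnd
    rw [List.flatMap_cons, List.nodup_append]
    refine ⟨?_, ih hnd.2, ?_⟩
    · refine List.Nodup.map (fun a b hab => congrArg Prod.snd hab) ?_
      rw [List.nodup_cons, List.nodup_cons]
      refine ⟨?_, hl₂b, hl₂nd⟩
      intro h
      rcases List.mem_cons.mp h with h | h
      · exact hbt₂ h.symm
      · exact hl₂t h
    · intro p hp p' hp2 hpp'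
      subst hpp'
      rw [List.mem_map] at hp
      obtain ⟨J, hJ, rfl⟩ := hp
      exact hnd.1 (mem_snake hp2)

private lemma nodup_main (hbt₁ : (⊥ : Ideal R₁) ≠ ⊤) (hbt₂ : (⊥ : Ideal R₂) ≠ ⊤)
    (I₁ : Ideal R₁) (hI₁b : I₁ ≠ ⊥) (hI₁t : I₁ ≠ ⊤)
    (t₁ : List (Ideal R₁)) (ht₁ : ∀ I ∈ t₁, I ≠ ⊥ ∧ I ≠ ⊤) (ht₁nd : t₁.Nodup)
    (hI₁t₁ : I₁ ∉ t₁)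
    (l₂ : List (Ideal R₂)) (hl₂ : ∀ J ∈ l₂, J ≠ ⊥ ∧ J ≠ ⊤) (hl₂nd : l₂.Nodup) :
    ((I₁, (⊥ : Ideal R₂)) ::
      ((l₂.flatMap fun J => [(I₁, J), ((⊥ : Ideal R₁), J), ((⊤ : Ideal R₁), J)]) ++
        (I₁, (⊤ : Ideal R₂)) :: ((⊥ : Ideal R₁), (⊤ : Ideal R₂)) ::
        ((t₁.flatMap fun I => ((⊤ :: ⊥ :: l₂).map fun J => (I, J))) ++
          [((⊤ : Ideal R₁), (⊥ : Ideal R₂))]))).Nodup := by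
  have hl₂b : (⊥ : Ideal R₂) ∉ l₂ := fun h => (hl₂ _ h).1 rfl
  have hl₂t : (⊤ : Ideal R₂) ∉ l₂ := fun h => (hl₂ _ h).2 rfl
  have ht₁b : (⊥ : Ideal R₁) ∉ t₁ := fun h => (ht₁ _ h).1 rfl
  have ht₁t : (⊤ : Ideal R₁) ∉ t₁ := fun h => (ht₁ _ h).2 rfl
  rw [List.nodup_cons]
  constructor
  · intro h
    rcases List.mem_append.mp h with h | h
    · exact hl₂b (mem_triples h).1
    rcases List.mem_cons.mp h with h | h
    · exact hbt₂ (congrArg Prod.snd h)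
    rcases List.mem_cons.mp h with h | h
    · exact hI₁b (congrArg Prod.fst h)
    rcases List.mem_append.mp h with h | h
    · exact hI₁t₁ (mem_snake h)
    · rw [List.mem_singleton] at h
      exact hI₁t (congrArg Prod.fst h)
  · rw [List.nodup_append]
    refine ⟨nodup_triples hI₁b hI₁t hbt₁ l₂ hl₂nd, ?_, ?_⟩
    · rw [List.nodup_cons]
      constructor
      · intro h
        rcases List.mem_cons.mp h with h | h
        · exact hI₁b (congrArg Prod.fst h)
        rcases List.mem_append.mp h with h | h
        · exact hI₁t₁ (mem_snake h)
        · rw [List.mem_singleton] at h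
          exact hI₁t (congrArg Prod.fst h)
      · rw [List.nodup_cons]
        constructor
        · intro h
          rcases List.mem_append.mp h with h | h
          · exact ht₁b (mem_snake h)
          · rw [List.mem_singleton] at h
            exact hbt₁ (congrArg Prod.fst h)
        · rw [List.nodup_append]
          refine ⟨nodup_snake hl₂nd hl₂b hl₂t hbt₂ t₁ ht₁nd, List.nodup_singleton _, ?_⟩
          intro p hp p' hp2 hpp'
          subst hpp'
          rw [List.mem_singleton] at hp2
          subst hp2
          exact ht₁t (mem_snake hp)
    · intro p hp p' hp2 hpp'
      subst hpp'
      have h1 := mem_triples hp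
      rcases List.mem_cons.mp hp2 with rfl | h2
      · exact hl₂t (by simpa using h1.1)
      rcases List.mem_cons.mp h2 with rfl | h2
      · exact hl₂t (by simpa using h1.1)
      rcases List.mem_append.mp h2 with h2 | h2
      · have h3 := mem_snake h2
        rcases h1.2 with h4 | h4 | h4 <;> rw [h4] at h3
        exacts [hI₁t₁ h3, ht₁b h3, ht₁t h3]
      · rw [List.mem_singleton] at h2
        subst h2
        exact hl₂b (by simpa using h1.1)

private lemma mem_main (I₁ : Ideal R₁) (t₁ : List (Ideal R₁)) (l₂ : List (Ideal R₂))
    (hcov₁ : ∀ I : Ideal R₁, I ≠ ⊥ → I ≠ ⊤ → I = I₁ ∨ I ∈ t₁)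
    (hcov₂ : ∀ J : Ideal R₂, J ≠ ⊥ → J ≠ ⊤ → J ∈ l₂) :
    ∀ (P : Ideal R₁) (Q : Ideal R₂), ¬(P = ⊥ ∧ Q = ⊥) → ¬(P = ⊤ ∧ Q = ⊤) →
      (P, Q) ∈ (I₁, (⊥ : Ideal R₂)) ::
        ((l₂.flatMap fun J => [(I₁, J), ((⊥ : Ideal R₁), J), ((⊤ : Ideal R₁), J)]) ++
          (I₁, (⊤ : Ideal R₂)) :: ((⊥ : Ideal R₁), (⊤ : Ideal R₂)) ::
          ((t₁.flatMap fun I => ((⊤ :: ⊥ :: l₂).map fun J => (I, J))) ++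
            [((⊤ : Ideal R₁), (⊥ : Ideal R₂))])) := by
  intro P Q hb ht
  have intro_mem : ∀ p : Ideal R₁ × Ideal R₂,
      (p = (I₁, (⊥ : Ideal R₂)) ∨
        (p ∈ l₂.flatMap fun J => [(I₁, J), ((⊥ : Ideal R₁), J), ((⊤ : Ideal R₁), J)]) ∨
        p = (I₁, (⊤ : Ideal R₂)) ∨ p = ((⊥ : Ideal R₁), (⊤ : Ideal R₂)) ∨
        (p ∈ t₁.flatMap fun I => ((⊤ :: ⊥ :: l₂).map fun J => (I, J))) ∨
        p = ((⊤ : Ideal R₁), (⊥ : Ideal R₂))) →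
      p ∈ (I₁, (⊥ : Ideal R₂)) ::
        ((l₂.flatMap fun J => [(I₁, J), ((⊥ : Ideal R₁), J), ((⊤ : Ideal R₁), J)]) ++
          (I₁, (⊤ : Ideal R₂)) :: ((⊥ : Ideal R₁), (⊤ : Ideal R₂)) ::
          ((t₁.flatMap fun I => ((⊤ :: ⊥ :: l₂).map fun J => (I, J))) ++
            [((⊤ : Ideal R₁), (⊥ : Ideal R₂))])) := by
    intro p h
    simp only [List.mem_cons, List.mem_append, List.mem_singleton]
    tauto
  apply intro_mem
  by_cases hPbot : P = ⊥
  · subst hPbot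
    have hQbot : Q ≠ ⊥ := fun h => hb ⟨rfl, h⟩
    by_cases hQtop : Q = ⊤
    · subst hQtop; tauto
    · refine Or.inr (Or.inl (List.mem_flatMap.mpr ⟨Q, hcov₂ Q hQbot hQtop, ?_⟩))
      simp
  by_cases hPtop : P = ⊤
  · subst hPtop
    have hQtop : Q ≠ ⊤ := fun h => ht ⟨rfl, h⟩
    by_cases hQbot : Q = ⊥
    · subst hQbot; tauto
    · refine Or.inr (Or.inl (List.mem_flatMap.mpr ⟨Q, hcov₂ Q hQbot hQtop, ?_⟩))
      simp
  rcases hcov₁ P hPbot hPtop with rfl | hPt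
  · by_cases hQbot : Q = ⊥
    · subst hQbot; tauto
    by_cases hQtop : Q = ⊤
    · subst hQtop; tauto
    · refine Or.inr (Or.inl (List.mem_flatMap.mpr ⟨Q, hcov₂ Q hQbot hQtop, ?_⟩))
      simp
  · refine Or.inr (Or.inr (Or.inr (Or.inr (Or.inl
      (List.mem_flatMap.mpr ⟨P, hPt, List.mem_map.mpr ⟨Q, ?_, rfl⟩⟩)))))
    by_cases hQtop : Q = ⊤
    · simp [hQtop]
    by_cases hQbot : Q = ⊥
    · simp [hQbot]
    · simp [List.mem_cons, hcov₂ Q hQbot hQtop]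

end RingLemmas

private lemma exists_list {R : Type*} [CommRing R] [Nontrivial R] [Finite (Ideal R)]
    (h4 : 4 ≤ Nat.card (Ideal R)) :
    ∃ (I₀ : Ideal R) (t : List (Ideal R)),
      t ≠ [] ∧ (I₀ :: t).Nodup ∧ (∀ I ∈ I₀ :: t, I ≠ ⊥ ∧ I ≠ ⊤) ∧
      (∀ I : Ideal R, I ≠ ⊥ → I ≠ ⊤ → I ∈ I₀ :: t) := by
  classical
  letI : Fintype (Ideal R) := Fintype.ofFinite (Ideal R)
  have hbt : (⊥ : Ideal R) ≠ ⊤ := by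
    intro h
    have h1 : (1 : R) ∈ (⊥ : Ideal R) := h ▸ Submodule.mem_top
    rw [Submodule.mem_bot] at h1
    exact one_ne_zero h1
  set s : Finset (Ideal R) := Finset.univ \ {⊥, ⊤} with hs
  have hcard : 2 ≤ s.card := by
    rw [hs, Finset.card_sdiff_of_subset (Finset.subset_univ _)]
    rw [Finset.card_pair hbt]
    have h5 : Nat.card (Ideal R) = (Finset.univ : Finset (Ideal R)).card := by
      rw [Nat.card_eq_fintype_card, Finset.card_univ]
    omega
  have hlen : 2 ≤ s.toList.length := by rw [Finset.length_toList]; exact hcard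
  have hmem : ∀ I, I ∈ s.toList ↔ (I ≠ ⊥ ∧ I ≠ ⊤) := by
    intro I
    rw [Finset.mem_toList, hs, Finset.mem_sdiff]
    simp
  have hnd := s.nodup_toList
  obtain ⟨I₀, t, hl⟩ : ∃ I₀ t, s.toList = I₀ :: t := by
    cases hl : s.toList with
    | nil => rw [hl] at hlen; simp at hlen
    | cons a t => exact ⟨a, t, rfl⟩
  refine ⟨I₀, t, ?_, ?_, ?_, ?_⟩
  · intro h; rw [hl, h] at hlen; simp at hlen
  · rw [← hl]; exact hnd
  · intro I hI; rw [← hl] at hI; exact (hmem I).mp hI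
  · intro I h1 h2; rw [← hl]; exact (hmem I).mpr ⟨h1, h2⟩

end HamAux

/-- If `R₁` and `R₂` are commutative rings with `1 ≠ 0`, each having
finitely many ideals and at least 4 ideals, then the intersection graph `Γ(R₁ × R₂)`
is Hamiltonian. -/
theorem intersectionGraph_prod_hamiltonian_of_four_ideals
    (R₁ R₂ : Type*) [CommRing R₁] [CommRing R₂] [Nontrivial R₁] [Nontrivial R₂]
    [Finite (Ideal R₁)] [Finite (Ideal R₂)]
    (h₁ : 4 ≤ Nat.card (Ideal R₁)) (h₂ : 4 ≤ Nat.card (Ideal R₂)) :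
    ∃ (a : {I : Ideal (R₁ × R₂) // I ≠ ⊥ ∧ I ≠ ⊤})
      (p : (intersectionGraph (R₁ × R₂)).Walk a a), p.IsHamiltonianCycle := by
  classical
  obtain ⟨I₁, t₁, ht₁ne, hnd₁, hnt₁, hcov₁⟩ := HamAux.exists_list h₁
  obtain ⟨J₁, t₂, _, hnd₂, hnt₂, hcov₂⟩ := HamAux.exists_list h₂
  have hbt₁ : (⊥ : Ideal R₁) ≠ ⊤ := by
    intro h
    have h1 : (1 : R₁) ∈ (⊥ : Ideal R₁) := h ▸ Submodule.mem_top
    rw [Submodule.mem_bot] at h1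
    exact one_ne_zero h1
  have hbt₂ : (⊥ : Ideal R₂) ≠ ⊤ := by
    intro h
    have h1 : (1 : R₂) ∈ (⊥ : Ideal R₂) := h ▸ Submodule.mem_top
    rw [Submodule.mem_bot] at h1
    exact one_ne_zero h1
  set l₂ : List (Ideal R₂) := J₁ :: t₂ with hl₂def
  have hl₂ne : l₂ ≠ [] := List.cons_ne_nil _ _
  have hI₁b : I₁ ≠ ⊥ := (hnt₁ I₁ (List.mem_cons_self)).1
  have hI₁t : I₁ ≠ ⊤ := (hnt₁ I₁ (List.mem_cons_self)).2
  rw [List.nodup_cons] at hnd₁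
  obtain ⟨hI₁t₁, ht₁nd⟩ := hnd₁
  have ht₁nt : ∀ I ∈ t₁, I ≠ ⊥ ∧ I ≠ ⊤ := fun I hI => hnt₁ I (List.mem_cons_of_mem _ hI)
  have hcov₁' : ∀ I : Ideal R₁, I ≠ ⊥ → I ≠ ⊤ → I = I₁ ∨ I ∈ t₁ := by
    intro I hb htp
    exact List.mem_cons.mp (hcov₁ I hb htp)
  set B : List (Ideal R₁ × Ideal R₂) :=
    (l₂.flatMap fun J => [(I₁, J), ((⊥ : Ideal R₁), J), ((⊤ : Ideal R₁), J)]) ++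
      (I₁, (⊤ : Ideal R₂)) :: ((⊥ : Ideal R₁), (⊤ : Ideal R₂)) ::
      ((t₁.flatMap fun I => ((⊤ :: ⊥ :: l₂).map fun J => (I, J))) ++
        [((⊤ : Ideal R₁), (⊥ : Ideal R₂))]) with hBdef
  have hchainC : List.Chain HamAux.Pa (I₁, (⊥ : Ideal R₂)) (B ++ [(I₁, (⊥ : Ideal R₂))]) :=
    HamAux.chain_main hbt₁ hbt₂ I₁ hI₁b hI₁t t₁ ht₁nt ht₁nd ht₁ne l₂ hnt₂ hnd₂ hl₂ne
  have hnodupC : ((I₁, (⊥ : Ideal R₂)) :: B).Nodup :=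
    HamAux.nodup_main hbt₁ hbt₂ I₁ hI₁b hI₁t t₁ ht₁nt ht₁nd hI₁t₁ l₂ hnt₂ hnd₂
  have hmemC : ∀ (P : Ideal R₁) (Q : Ideal R₂), ¬(P = ⊥ ∧ Q = ⊥) → ¬(P = ⊤ ∧ Q = ⊤) →
      (P, Q) ∈ (I₁, (⊥ : Ideal R₂)) :: B :=
    HamAux.mem_main I₁ t₁ l₂ hcov₁' hcov₂
  have hCnt : ∀ p ∈ (I₁, (⊥ : Ideal R₂)) :: B,
      ¬(p.1 = ⊥ ∧ p.2 = ⊥) ∧ ¬(p.1 = ⊤ ∧ p.2 = ⊤) := by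
    intro p hp
    rcases List.mem_cons.mp hp with rfl | hp
    · exact ⟨fun h => hI₁b h.1, fun h => hI₁t h.1⟩
    rw [hBdef] at hp
    rcases List.mem_append.mp hp with hp | hp
    · have h1 := HamAux.mem_triples hp
      have h2 := hnt₂ _ h1.1
      exact ⟨fun h => h2.1 h.2, fun h => h2.2 h.2⟩
    rcases List.mem_cons.mp hp with rfl | hp
    · exact ⟨fun h => hI₁b h.1, fun h => hI₁t h.1⟩
    rcases List.mem_cons.mp hp with rfl | hp
    · exact ⟨fun h => hbt₂ h.2.symm, fun h => hbt₁ h.1⟩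
    rcases List.mem_append.mp hp with hp | hp
    · have h1 := HamAux.mem_snake hp
      have h2 := ht₁nt _ h1
      exact ⟨fun h => h2.1 h.1, fun h => h2.2 h.1⟩
    · rw [List.mem_singleton] at hp
      subst hp
      exact ⟨fun h => hbt₁ h.1.symm, fun h => hbt₂ h.2⟩
  set g : Ideal R₁ × Ideal R₂ → Ideal (R₁ × R₂) := fun p => Ideal.prod p.1 p.2 with hgdef
  have hginj : Function.Injective g := by
    intro p q h
    have h' : Ideal.prod p.1 p.2 = Ideal.prod q.1 q.2 := h
    rw [Ideal.prod_inj] at h'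
    exact Prod.ext h'.1 h'.2
  have hgnt : ∀ p ∈ (I₁, (⊥ : Ideal R₂)) :: B, g p ≠ ⊥ ∧ g p ≠ ⊤ := by
    intro p hp
    have h1 := hCnt p hp
    constructor
    · intro h; exact h1.1 (HamAux.prod_eq_bot_iff'.mp h)
    · intro h; exact h1.2 (HamAux.prod_eq_top_iff'.mp h)
  set G := intersectionGraph (R₁ × R₂) with hGdef
  set a : {I : Ideal (R₁ × R₂) // I ≠ ⊥ ∧ I ≠ ⊤} :=
    ⟨g (I₁, (⊥ : Ideal R₂)), hgnt _ (List.mem_cons_self)⟩ with hadef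
  have HBmem : ∀ K ∈ B.map g, K ≠ ⊥ ∧ K ≠ ⊤ := by
    intro K hK
    rw [List.mem_map] at hK
    obtain ⟨p, hp, rfl⟩ := hK
    exact hgnt p (List.mem_cons_of_mem _ hp)
  set L : List {I : Ideal (R₁ × R₂) // I ≠ ⊥ ∧ I ≠ ⊤} :=
    (B.map g).attachWith _ HBmem with hLdef
  refine ⟨a, HamAux.exists_hamCycle G a L ?_ ?_ ?_ ?_⟩
  · -- length
    rw [hLdef]
    simp only [List.attachWith, List.length_pmap, List.length_map]
    rw [hBdef]
    simp only [List.length_append, List.length_cons]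
    omega
  · -- chain
    have hchainD : List.Chain (fun K K' : Ideal (R₁ × R₂) => K ≠ K' ∧ K ⊓ K' ≠ ⊥)
        (g (I₁, (⊥ : Ideal R₂))) (List.map g (B ++ [(I₁, (⊥ : Ideal R₂))])) :=
      (HamAux.chainC_map g).mpr (List.IsChain.imp (fun p q h => HamAux.pa_of p q h) hchainC)
    rw [List.map_append] at hchainD
    simp only [List.map_cons, List.map_nil] at hchainD
    have H2 : ∀ K ∈ B.map g ++ [g (I₁, (⊥ : Ideal R₂))], K ≠ ⊥ ∧ K ≠ ⊤ := by
      intro K hK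
      rcases List.mem_append.mp hK with hK | hK
      · exact HBmem K hK
      · rw [List.mem_singleton] at hK; subst hK; exact hgnt _ (List.mem_cons_self)
    have hchat := HamAux.chain_attach_of
      (P := fun I : Ideal (R₁ × R₂) => I ≠ ⊥ ∧ I ≠ ⊤)
      (r := G.Adj) (R := fun K K' => K ≠ K' ∧ K ⊓ K' ≠ ⊥)
      (fun K K' hK hK' h => (show (intersectionGraph (R₁ × R₂)).Adj ⟨K, hK⟩ ⟨K', hK'⟩ from
          ⟨fun he => h.1 (congrArg Subtype.val he), h.2⟩))
      (g (I₁, (⊥ : Ideal R₂))) (B.map g ++ [g (I₁, (⊥ : Ideal R₂))])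
      (hgnt _ (List.mem_cons_self)) H2 hchainD
    rw [List.attachWith_append] at hchat
    simp only [List.attachWith_cons, List.attachWith_nil] at hchat
    exact hchat
  · -- nodup
    apply List.Nodup.of_map Subtype.val
    rw [List.map_cons, hLdef, List.attachWith_map_subtype_val]
    exact List.Nodup.map hginj hnodupC
  · -- all vertices
    intro v
    have hv1 : (v : Ideal (R₁ × R₂)) ≠ ⊥ := v.2.1
    have hv2 : (v : Ideal (R₁ × R₂)) ≠ ⊤ := v.2.2
    have heq := Ideal.ideal_prod_eq (v : Ideal (R₁ × R₂))
    set P := Ideal.map (RingHom.fst R₁ R₂) (v : Ideal (R₁ × R₂)) with hP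
    set Q := Ideal.map (RingHom.snd R₁ R₂) (v : Ideal (R₁ × R₂)) with hQ
    have hvPQ : (v : Ideal (R₁ × R₂)) = g (P, Q) := heq
    have hbB : ¬(P = ⊥ ∧ Q = ⊥) := by
      rintro ⟨hh1, hh2⟩
      apply hv1
      rw [hvPQ, hh1, hh2]
      exact HamAux.prod_bot_bot
    have htT : ¬(P = ⊤ ∧ Q = ⊤) := by
      rintro ⟨hh1, hh2⟩
      apply hv2
      rw [hvPQ, hh1, hh2]
      exact Ideal.prod_top_top
    have hmem := hmemC P Q hbB htT
    have hvmem : (v : Ideal (R₁ × R₂)) ∈ List.map Subtype.val (a :: L) := by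
      rw [List.map_cons, hLdef, List.attachWith_map_subtype_val, hvPQ]
      rcases List.mem_cons.mp hmem with heq2 | hmem2
      · rw [heq2]
        exact List.mem_cons_self
      · exact List.mem_cons_of_mem _ (List.mem_map_of_mem (f := g) hmem2)
    rw [List.mem_map] at hvmem
    obtain ⟨w, hw, hwv⟩ := hvmem
    have hw' : w = v := Subtype.ext hwv
    rwa [← hw']
end

section
/- Let R₁ and R₂ be commutative rings with identity 1 ≠ 0 such that R₁ has only finitely many ideals and at least 3 ideals (counting the zero ideal and the whole ring), and R₂ has exactly 3 ideals. Then the intersection graph Γ(R₁ × R₂) of the product ring R₁ × R₂ is Hamiltonian. -/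
open scoped Classical

namespace IGP

open Ideal SimpleGraph

variable {R₁ R₂ : Type*} [CommRing R₁] [CommRing R₂] [Nontrivial R₁] [Nontrivial R₂]

theorem prod_bot_bot : (Ideal.prod (⊥ : Ideal R₁) (⊥ : Ideal R₂)) = ⊥ := by
  ext ⟨r, s⟩
  simp [Ideal.mem_prod, Ideal.mem_bot, Prod.ext_iff]

theorem prod_eq_bot {I : Ideal R₁} {J : Ideal R₂} :
    Ideal.prod I J = ⊥ ↔ I = ⊥ ∧ J = ⊥ := by
  rw [← prod_bot_bot, Ideal.prod_inj]

theorem prod_eq_top {I : Ideal R₁} {J : Ideal R₂} :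
    Ideal.prod I J = ⊤ ↔ I = ⊤ ∧ J = ⊤ := by
  rw [← Ideal.prod_top_top, Ideal.prod_inj]

theorem prod_inf_prod {I I' : Ideal R₁} {J J' : Ideal R₂} :
    Ideal.prod I J ⊓ Ideal.prod I' J' = Ideal.prod (I ⊓ I') (J ⊓ J') := by
  ext ⟨r, s⟩
  simp only [Submodule.mem_inf, Ideal.mem_prod]
  tauto

/-- The pair `(I, J)` gives a nontrivial ideal of the product. -/
def NT (I : Ideal R₁) (J : Ideal R₂) : Prop :=
  (I ≠ ⊥ ∨ J ≠ ⊥) ∧ (I ≠ ⊤ ∨ J ≠ ⊤)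

theorem nt_iff {I : Ideal R₁} {J : Ideal R₂} :
    NT I J ↔ (Ideal.prod I J ≠ ⊥ ∧ Ideal.prod I J ≠ ⊤) := by
  constructor
  · rintro ⟨h1, h2⟩
    refine ⟨fun h => ?_, fun h => ?_⟩
    · rcases prod_eq_bot.mp h with ⟨rfl, rfl⟩; simp at h1
    · rcases prod_eq_top.mp h with ⟨rfl, rfl⟩; simp at h2
  · rintro ⟨h1, h2⟩
    constructor
    · by_contra hc
      push_neg at hc
      exact h1 (prod_eq_bot.mpr ⟨hc.1, hc.2⟩)
    · by_contra hc
      push_neg at hc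
      exact h2 (prod_eq_top.mpr ⟨hc.1, hc.2⟩)

noncomputable def vtx (I : Ideal R₁) (J : Ideal R₂) :
    {K : Ideal (R₁ × R₂) // K ≠ ⊥ ∧ K ≠ ⊤} :=
  if h : NT I J then ⟨Ideal.prod I J, nt_iff.mp h⟩
  else ⟨Ideal.prod ⊥ ⊤, nt_iff.mp ⟨Or.inr top_ne_bot, Or.inl bot_ne_top⟩⟩

theorem vtx_coe {I : Ideal R₁} {J : Ideal R₂} (h : NT I J) :
    (vtx I J : Ideal (R₁ × R₂)) = Ideal.prod I J := by
  rw [vtx, dif_pos h]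

theorem vtx_inj {I I' : Ideal R₁} {J J' : Ideal R₂} (h : NT I J) (h' : NT I' J') :
    vtx I J = vtx I' J' ↔ I = I' ∧ J = J' := by
  rw [Subtype.ext_iff, vtx_coe h, vtx_coe h', Ideal.prod_inj]

theorem adj_vtx {I I' : Ideal R₁} {J J' : Ideal R₂} (h : NT I J) (h' : NT I' J')
    (hne : I ≠ I' ∨ J ≠ J') (hinf : I ⊓ I' ≠ ⊥ ∨ J ⊓ J' ≠ ⊥) :
    (intersectionGraph (R₁ × R₂)).Adj (vtx I J) (vtx I' J') := by
  refine ⟨fun hc => ?_, ?_⟩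
  · rw [vtx_inj h h'] at hc; tauto
  · rw [vtx_coe h, vtx_coe h', prod_inf_prod, Ne, prod_eq_bot]; tauto

noncomputable def midWalk (M : Ideal R₂) (hM : M ≠ ⊥) (hMt : M ≠ ⊤) :
    ∀ l : List (Ideal R₁), (∀ I ∈ l, I ≠ ⊥ ∧ I ≠ ⊤) →
      (intersectionGraph (R₁ × R₂)).Walk (vtx (l.headD ⊥) M) (vtx ⊥ M)
  | [], _ => SimpleGraph.Walk.nil
  | I :: rest, hl =>
      SimpleGraph.Walk.cons
        (adj_vtx ⟨Or.inr hM, Or.inr hMt⟩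
          ⟨Or.inl (hl I (List.mem_cons_self)).1, Or.inr bot_ne_top⟩
          (Or.inr hM)
          (Or.inl (by simp only [List.headD_cons, inf_idem]; exact (hl I (List.mem_cons_self)).1)))
        (SimpleGraph.Walk.cons
          (adj_vtx ⟨Or.inl (hl I (List.mem_cons_self)).1, Or.inr bot_ne_top⟩
            ⟨Or.inr top_ne_bot, Or.inl (hl I (List.mem_cons_self)).2⟩
            (Or.inr bot_ne_top)
            (Or.inl (by simp only [List.headD_cons, inf_idem]; exact (hl I (List.mem_cons_self)).1)))
          (SimpleGraph.Walk.cons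
            (adj_vtx ⟨Or.inr top_ne_bot, Or.inl (hl I (List.mem_cons_self)).2⟩
              ⟨Or.inr hM, Or.inr hMt⟩
              (Or.inr (Ne.symm hMt))
              (Or.inr (by rw [top_inf_eq]; exact hM)))
            (midWalk M hM hMt rest fun J hJ => hl J (List.mem_cons_of_mem _ hJ))))

noncomputable def trips (M : Ideal R₂) :
    List (Ideal R₁) → List {K : Ideal (R₁ × R₂) // K ≠ ⊥ ∧ K ≠ ⊤}
  | [] => []
  | I :: r => vtx I M :: vtx I ⊥ :: vtx I ⊤ :: trips M r

theorem midWalk_support (M : Ideal R₂) (hM : M ≠ ⊥) (hMt : M ≠ ⊤) :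
    ∀ (l : List (Ideal R₁)) (hl : ∀ I ∈ l, I ≠ ⊥ ∧ I ≠ ⊤),
      (midWalk M hM hMt l hl).support = trips M l ++ [vtx ⊥ M]
  | [], _ => rfl
  | I :: r, hl => by
      simp only [midWalk, SimpleGraph.Walk.support_cons, trips,
        midWalk_support M hM hMt r _, List.cons_append]
      rfl

theorem mem_trips {M : Ideal R₂} {a : {K : Ideal (R₁ × R₂) // K ≠ ⊥ ∧ K ≠ ⊤}}
    {l : List (Ideal R₁)} :
    a ∈ trips M l ↔ ∃ I ∈ l, a = vtx I M ∨ a = vtx I ⊥ ∨ a = vtx I ⊤ := by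
  induction l with
  | nil => simp [trips]
  | cons I r ih => simp only [trips, List.mem_cons, ih]; aesop

theorem trips_nodup {M : Ideal R₂} (hM : M ≠ ⊥) (hMt : M ≠ ⊤) {l : List (Ideal R₁)}
    (hl : ∀ I ∈ l, I ≠ ⊥ ∧ I ≠ ⊤) (hnd : l.Nodup) : (trips M l).Nodup := by
  induction l with
  | nil => simp [trips]
  | cons I r ih =>
    have hI := hl I (List.mem_cons_self)
    have hr : ∀ J ∈ r, J ≠ ⊥ ∧ J ≠ ⊤ := fun J hJ => hl J (List.mem_cons_of_mem _ hJ)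
    have hIr : I ∉ r := (List.nodup_cons.mp hnd).1
    have ntIM : NT I M := ⟨Or.inr hM, Or.inr hMt⟩
    have ntIb : NT I (⊥ : Ideal R₂) := ⟨Or.inl hI.1, Or.inr bot_ne_top⟩
    have ntIt : NT I (⊤ : Ideal R₂) := ⟨Or.inr top_ne_bot, Or.inl hI.2⟩
    have hnotin : ∀ J : Ideal R₂, NT I J → vtx I J ∉ trips M r := by
      intro J hNT hmem
      rw [mem_trips] at hmem
      obtain ⟨I', hI', h'⟩ := hmem
      have hI'2 := hr I' hI'
      have hII' : I = I' := by
        rcases h' with h' | h' | h'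
        · exact ((vtx_inj hNT ⟨Or.inr hM, Or.inr hMt⟩).mp h').1
        · exact ((vtx_inj hNT ⟨Or.inl hI'2.1, Or.inr bot_ne_top⟩).mp h').1
        · exact ((vtx_inj hNT ⟨Or.inr top_ne_bot, Or.inl hI'2.2⟩).mp h').1
      exact hIr (hII' ▸ hI')
    have e1 : vtx I M ≠ vtx I (⊥ : Ideal R₂) := fun h => hM ((vtx_inj ntIM ntIb).mp h).2
    have e2 : vtx I M ≠ vtx I (⊤ : Ideal R₂) := fun h => hMt ((vtx_inj ntIM ntIt).mp h).2
    have e3 : vtx I (⊥ : Ideal R₂) ≠ vtx I (⊤ : Ideal R₂) :=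
      fun h => bot_ne_top ((vtx_inj ntIb ntIt).mp h).2
    have m1 := hnotin M ntIM
    have m2 := hnotin ⊥ ntIb
    have m3 := hnotin ⊤ ntIt
    have hrest := ih hr (List.nodup_cons.mp hnd).2
    simp only [trips, List.nodup_cons, List.mem_cons, not_or]
    tauto

end IGP

open IGP Ideal SimpleGraph in
/-- If `R₁` is a commutative ring with `1 ≠ 0` having finitely many
ideals and at least 3 ideals, and `R₂` is a commutative ring with `1 ≠ 0` having exactly
3 ideals, then the intersection graph `Γ(R₁ × R₂)` is Hamiltonian. -/
theorem intersectionGraph_prod_hamiltonian_of_three_ideals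
    (R₁ R₂ : Type*) [CommRing R₁] [CommRing R₂] [Nontrivial R₁] [Nontrivial R₂]
    [Finite (Ideal R₁)]
    (h₁ : 3 ≤ Nat.card (Ideal R₁)) (h₂ : Nat.card (Ideal R₂) = 3) :
    ∃ (a : {I : Ideal (R₁ × R₂) // I ≠ ⊥ ∧ I ≠ ⊤})
      (p : (intersectionGraph (R₁ × R₂)).Walk a a), p.IsHamiltonianCycle := by
  classical
  have hfin₂ : Finite (Ideal R₂) := Nat.finite_of_card_ne_zero (by omega)
  letI := Fintype.ofFinite (Ideal R₂)
  letI := Fintype.ofFinite (Ideal R₁)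
  have hcard₂ : Fintype.card (Ideal R₂) = 3 := by rw [← Nat.card_eq_fintype_card, h₂]
  have hcard₁ : 3 ≤ Fintype.card (Ideal R₁) := by rw [← Nat.card_eq_fintype_card]; exact h₁
  -- the middle ideal of R₂
  have hex : ∃ M : Ideal R₂, M ≠ ⊥ ∧ M ≠ ⊤ := by
    by_contra hc
    push_neg at hc
    have hsub : (Finset.univ : Finset (Ideal R₂)) ⊆ {⊥, ⊤} := by
      intro J _
      by_cases hJ : J = ⊥
      · simp [hJ]
      · simp [hc J hJ]
    have h1 := Finset.card_le_card hsub
    have h2 : ({⊥, ⊤} : Finset (Ideal R₂)).card ≤ 2 :=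
      (Finset.card_insert_le _ _).trans (by simp)
    rw [Finset.card_univ, hcard₂] at h1
    omega
  obtain ⟨M, hM1, hM2⟩ := hex
  -- every ideal of R₂ is ⊥, M or ⊤
  have hJ3 : ∀ J : Ideal R₂, J = ⊥ ∨ J = M ∨ J = ⊤ := by
    have hb : (⊥ : Ideal R₂) ∉ ({M, ⊤} : Finset (Ideal R₂)) := by
      simp [Ne.symm hM1, bot_ne_top]
    have hm : M ∉ ({⊤} : Finset (Ideal R₂)) := by simp [hM2]
    have hcard : ({⊥, M, ⊤} : Finset (Ideal R₂)).card = 3 := by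
      rw [Finset.card_insert_of_notMem hb, Finset.card_insert_of_notMem hm,
        Finset.card_singleton]
    have huniv : ({⊥, M, ⊤} : Finset (Ideal R₂)) = Finset.univ :=
      Finset.eq_univ_of_card _ (by rw [hcard, hcard₂])
    intro J
    have : J ∈ ({⊥, M, ⊤} : Finset (Ideal R₂)) := huniv ▸ Finset.mem_univ J
    simpa using this
  -- the list of nontrivial ideals of R₁
  set s : Finset (Ideal R₁) := Finset.univ.filter (fun I => I ≠ ⊥ ∧ I ≠ ⊤) with hs
  set L : List (Ideal R₁) := s.toList with hLdef
  have hLmem : ∀ I : Ideal R₁, I ∈ L ↔ I ≠ ⊥ ∧ I ≠ ⊤ := by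
    intro I; simp [hLdef, hs, Finset.mem_toList]
  have hLnd : L.Nodup := s.nodup_toList
  have hLne : L ≠ [] := by
    have hsub : (Finset.univ : Finset (Ideal R₁)) ⊆ s ∪ {⊥, ⊤} := by
      intro I _
      by_cases h1 : I = ⊥
      · simp [h1]
      · by_cases h2 : I = ⊤
        · simp [h2]
        · exact Finset.mem_union_left _ (by simp [hs, h1, h2])
    have h1 := Finset.card_le_card hsub
    have h2 := Finset.card_union_le s ({⊥, ⊤} : Finset (Ideal R₁))
    have h3 : ({⊥, ⊤} : Finset (Ideal R₁)).card ≤ 2 :=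
      (Finset.card_insert_le _ _).trans (by simp)
    rw [Finset.card_univ] at h1
    have hcard : 0 < s.card := by omega
    intro hnil
    have := Finset.length_toList s
    rw [← hLdef, hnil] at this
    simp at this
    omega
  have hLprop : ∀ I ∈ L, I ≠ ⊥ ∧ I ≠ ⊤ := fun I hI => (hLmem I).1 hI
  obtain ⟨I0, L0, hL0⟩ := List.exists_cons_of_ne_nil hLne
  have hhead : L.headD ⊥ ∈ L := by rw [hL0]; exact List.mem_cons_self
  have hheadprop := hLprop _ hhead
  -- shorthand nontriviality facts
  have ntTM : NT (⊤ : Ideal R₁) M := ⟨Or.inl top_ne_bot, Or.inr hM2⟩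
  have ntTb : NT (⊤ : Ideal R₁) (⊥ : Ideal R₂) := ⟨Or.inl top_ne_bot, Or.inr bot_ne_top⟩
  have ntbM : NT (⊥ : Ideal R₁) M := ⟨Or.inr hM1, Or.inr hM2⟩
  have ntbT : NT (⊥ : Ideal R₁) (⊤ : Ideal R₂) := ⟨Or.inr top_ne_bot, Or.inl bot_ne_top⟩
  have ntKM : NT (L.headD ⊥) M := ⟨Or.inr hM1, Or.inr hM2⟩
  -- adjacency facts for the glue edges
  have ha1 : (intersectionGraph (R₁ × R₂)).Adj (vtx (⊤ : Ideal R₁) M)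
      (vtx (⊤ : Ideal R₁) (⊥ : Ideal R₂)) :=
    adj_vtx ntTM ntTb (Or.inr hM1) (Or.inl (by rw [inf_idem]; exact top_ne_bot))
  have ha2 : (intersectionGraph (R₁ × R₂)).Adj (vtx (⊤ : Ideal R₁) (⊥ : Ideal R₂))
      (vtx (L.headD ⊥) M) :=
    adj_vtx ntTb ntKM (Or.inl (Ne.symm hheadprop.2))
      (Or.inl (by rw [top_inf_eq]; exact hheadprop.1))
  have hb1 : (intersectionGraph (R₁ × R₂)).Adj (vtx (⊥ : Ideal R₁) M)
      (vtx (⊥ : Ideal R₁) (⊤ : Ideal R₂)) :=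
    adj_vtx ntbM ntbT (Or.inr hM2) (Or.inr (by rw [inf_top_eq]; exact hM1))
  have hb2 : (intersectionGraph (R₁ × R₂)).Adj (vtx (⊥ : Ideal R₁) (⊤ : Ideal R₂))
      (vtx (⊤ : Ideal R₁) M) :=
    adj_vtx ntbT ntTM (Or.inl bot_ne_top) (Or.inr (by rw [top_inf_eq]; exact hM1))
  -- the walk
  set HW := midWalk M hM1 hM2 L hLprop with hHW
  set ET : (intersectionGraph (R₁ × R₂)).Walk (vtx (⊥ : Ideal R₁) M) (vtx (⊤ : Ideal R₁) M) :=
    SimpleGraph.Walk.cons hb1 (SimpleGraph.Walk.cons hb2 SimpleGraph.Walk.nil) with hET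
  set q : (intersectionGraph (R₁ × R₂)).Walk (vtx (⊤ : Ideal R₁) (⊥ : Ideal R₂))
      (vtx (⊤ : Ideal R₁) M) := SimpleGraph.Walk.cons ha2 (HW.append ET) with hq
  refine ⟨vtx ⊤ M, SimpleGraph.Walk.cons ha1 q, ?_⟩
  -- support computations
  have hremsup : (HW.append ET).support =
      trips M L ++ [vtx (⊥ : Ideal R₁) M, vtx (⊥ : Ideal R₁) (⊤ : Ideal R₂),
        vtx (⊤ : Ideal R₁) M] := by
    rw [SimpleGraph.Walk.support_append, midWalk_support]
    simp [hET, List.append_assoc]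
  have hqsup : q.support = vtx (⊤ : Ideal R₁) (⊥ : Ideal R₂) ::
      (trips M L ++ [vtx (⊥ : Ideal R₁) M, vtx (⊥ : Ideal R₁) (⊤ : Ideal R₂),
        vtx (⊤ : Ideal R₁) M]) := by
    rw [hq, SimpleGraph.Walk.support_cons, hremsup]
  -- not-in-trips helper
  have hnotin : ∀ (I : Ideal R₁) (J : Ideal R₂), NT I J → (I = ⊥ ∨ I = ⊤) →
      vtx I J ∉ trips M L := by
    intro I J hnt hIc hmem
    rw [mem_trips] at hmem
    obtain ⟨I', hI', h'⟩ := hmem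
    have hI'2 := hLprop I' hI'
    have hII' : I = I' := by
      rcases h' with h' | h' | h'
      · exact ((vtx_inj hnt ⟨Or.inr hM1, Or.inr hM2⟩).mp h').1
      · exact ((vtx_inj hnt ⟨Or.inl hI'2.1, Or.inr bot_ne_top⟩).mp h').1
      · exact ((vtx_inj hnt ⟨Or.inr top_ne_bot, Or.inl hI'2.2⟩).mp h').1
    rcases hIc with rfl | rfl
    · exact hI'2.1 hII'.symm
    · exact hI'2.2 hII'.symm
  -- nodup of the tail support
  have hTnd : (vtx (⊤ : Ideal R₁) (⊥ : Ideal R₂) ::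
      (trips M L ++ [vtx (⊥ : Ideal R₁) M, vtx (⊥ : Ideal R₁) (⊤ : Ideal R₂),
        vtx (⊤ : Ideal R₁) M])).Nodup := by
    have d1 : vtx (⊤ : Ideal R₁) (⊥ : Ideal R₂) ≠ vtx (⊥ : Ideal R₁) M :=
      fun h => top_ne_bot ((vtx_inj ntTb ntbM).mp h).1
    have d2 : vtx (⊤ : Ideal R₁) (⊥ : Ideal R₂) ≠ vtx (⊥ : Ideal R₁) (⊤ : Ideal R₂) :=
      fun h => top_ne_bot ((vtx_inj ntTb ntbT).mp h).1
    have d3 : vtx (⊤ : Ideal R₁) (⊥ : Ideal R₂) ≠ vtx (⊤ : Ideal R₁) M :=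
      fun h => hM1 (((vtx_inj ntTb ntTM).mp h).2).symm
    have d4 : vtx (⊥ : Ideal R₁) M ≠ vtx (⊥ : Ideal R₁) (⊤ : Ideal R₂) :=
      fun h => hM2 ((vtx_inj ntbM ntbT).mp h).2
    have d5 : vtx (⊥ : Ideal R₁) M ≠ vtx (⊤ : Ideal R₁) M :=
      fun h => bot_ne_top ((vtx_inj ntbM ntTM).mp h).1
    have d6 : vtx (⊥ : Ideal R₁) (⊤ : Ideal R₂) ≠ vtx (⊤ : Ideal R₁) M :=
      fun h => bot_ne_top ((vtx_inj ntbT ntTM).mp h).1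
    have m0 := hnotin ⊤ ⊥ ntTb (Or.inr rfl)
    have m1 := hnotin ⊥ M ntbM (Or.inl rfl)
    have m2 := hnotin ⊥ ⊤ ntbT (Or.inl rfl)
    have m3 := hnotin ⊤ M ntTM (Or.inr rfl)
    have htr := trips_nodup hM1 hM2 hLprop hLnd
    simp only [List.nodup_cons, List.mem_append, List.mem_cons, List.not_mem_nil,
      List.nodup_append, List.nodup_cons, List.nodup_nil, List.Disjoint, not_or]
    refine ⟨⟨m0, d1, d2, d3, fun h => h⟩, htr, ⟨?_, ?_, ?_⟩, ?_⟩
    · exact ⟨d4, d5, fun h => h⟩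
    · exact ⟨d6, fun h => h⟩
    · exact ⟨fun h => h, trivial⟩
    · intro a ha
      simp only [List.mem_cons, List.not_mem_nil, or_false]
      rintro _ (rfl | rfl | rfl) rfl
      · exact m1 ha
      · exact m2 ha
      · exact m3 ha
  -- every vertex is in the tail support
  have hsurj : ∀ a : {K : Ideal (R₁ × R₂) // K ≠ ⊥ ∧ K ≠ ⊤},
      a ∈ (vtx (⊤ : Ideal R₁) (⊥ : Ideal R₂) ::
        (trips M L ++ [vtx (⊥ : Ideal R₁) M, vtx (⊥ : Ideal R₁) (⊤ : Ideal R₂),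
          vtx (⊤ : Ideal R₁) M])) := by
    rintro ⟨K, hK1, hK2⟩
    obtain ⟨I, J, hKprod⟩ : ∃ (I : Ideal R₁) (J : Ideal R₂), K = Ideal.prod I J :=
      ⟨_, _, Ideal.ideal_prod_eq K⟩
    have hnt : NT I J := nt_iff.mpr ⟨hKprod ▸ hK1, hKprod ▸ hK2⟩
    have heq : (⟨K, hK1, hK2⟩ : {K : Ideal (R₁ × R₂) // K ≠ ⊥ ∧ K ≠ ⊤}) = vtx I J :=
      Subtype.ext (by rw [vtx_coe hnt, ← hKprod])
    rw [heq]
    have hmemtrips : ∀ J' : Ideal R₂, I ≠ ⊥ → I ≠ ⊤ →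
        (J' = M ∨ J' = ⊥ ∨ J' = ⊤) → vtx I J' ∈ trips M L := by
      intro J' hb ht hc
      rw [mem_trips]
      exact ⟨I, (hLmem I).2 ⟨hb, ht⟩, by rcases hc with rfl | rfl | rfl <;> simp⟩
    rcases hJ3 J with rfl | rfl | rfl
    · -- J = ⊥
      have hb : I ≠ ⊥ := hnt.1.resolve_right (fun h => h rfl)
      by_cases ht : I = ⊤
      · subst ht; exact List.mem_cons_self
      · exact List.mem_cons_of_mem _
          (List.mem_append_left _ (hmemtrips ⊥ hb ht (Or.inr (Or.inl rfl))))
    · -- J = M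
      by_cases hb : I = ⊥
      · subst hb
        exact List.mem_cons_of_mem _ (List.mem_append_right _ (List.mem_cons_self))
      · by_cases ht : I = ⊤
        · subst ht
          refine List.mem_cons_of_mem _ (List.mem_append_right _ ?_)
          simp
        · exact List.mem_cons_of_mem _
            (List.mem_append_left _ (hmemtrips J hb ht (Or.inl rfl)))
    · -- J = ⊤
      have ht : I ≠ ⊤ := hnt.2.resolve_right (fun h => h rfl)
      by_cases hb : I = ⊥
      · subst hb
        refine List.mem_cons_of_mem _ (List.mem_append_right _ ?_)
        simp
      · exact List.mem_cons_of_mem _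
          (List.mem_append_left _ (hmemtrips ⊤ hb ht (Or.inr (Or.inr rfl))))
  rw [SimpleGraph.Walk.isHamiltonianCycle_iff_isCycle_and_support_count_tail_eq_one]
  constructor
  · -- IsCycle
    rw [SimpleGraph.Walk.cons_isCycle_iff]
    constructor
    · rw [SimpleGraph.Walk.isPath_def, hqsup]
      exact hTnd
    · intro hmem
      rw [hq, SimpleGraph.Walk.edges_cons, List.mem_cons] at hmem
      rcases hmem with hmem | hmem
      · rw [Sym2.eq_iff] at hmem
        rcases hmem with ⟨h1, _⟩ | ⟨h1, _⟩
        · exact hM1 (((vtx_inj ntTM ntTb).mp h1).2)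
        · exact hheadprop.2 (((vtx_inj ntTM ntKM).mp h1).1).symm
      · have hmem2 : vtx (⊤ : Ideal R₁) (⊥ : Ideal R₂) ∈ (HW.append ET).support :=
          SimpleGraph.Walk.snd_mem_support_of_mem_edges _ hmem
        rw [hremsup, List.mem_append] at hmem2
        rcases hmem2 with hmem2 | hmem2
        · exact hnotin ⊤ ⊥ ntTb (Or.inr rfl) hmem2
        · simp only [List.mem_cons, List.not_mem_nil, or_false] at hmem2
          rcases hmem2 with h | h | h
          · exact top_ne_bot ((vtx_inj ntTb ntbM).mp h).1
          · exact top_ne_bot ((vtx_inj ntTb ntbT).mp h).1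
          · exact hM1 (((vtx_inj ntTb ntTM).mp h).2).symm
  · -- every vertex counted once in the tail
    intro a
    have hsup : (SimpleGraph.Walk.cons ha1 q).support = vtx (⊤ : Ideal R₁) M :: q.support :=
      SimpleGraph.Walk.support_cons _ _
    rw [hsup, List.tail_cons, hqsup]
    convert List.count_eq_one_of_mem hTnd (hsurj a)
end

section
/- Let F₁, F₂, F₃ be fields. Then the intersection graph Γ(F₁ × F₂ × F₃) of the product ring F₁ × F₂ × F₃ is Hamiltonian; indeed, the six nontrivial ideals F₁×0×0, F₁×F₂×0, 0×F₂×0, 0×F₂×F₃, 0×0×F₃, F₁×0×F₃ form a Hamiltonian cycle in this cyclic order. -/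
open scoped Classical

/-- The six nontrivial ideals of `F₁ × F₂ × F₃` in the cyclic order
`F₁×0×0, F₁×F₂×0, 0×F₂×0, 0×F₂×F₃, 0×0×F₃, F₁×0×F₃`. -/
def sixIdeals (F₁ F₂ F₃ : Type*) [Field F₁] [Field F₂] [Field F₃] :
    Fin 6 → Ideal (F₁ × F₂ × F₃) :=
  ![(⊤ : Ideal F₁).prod ((⊥ : Ideal F₂).prod (⊥ : Ideal F₃)),
    (⊤ : Ideal F₁).prod ((⊤ : Ideal F₂).prod (⊥ : Ideal F₃)),
    (⊥ : Ideal F₁).prod ((⊤ : Ideal F₂).prod (⊥ : Ideal F₃)),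
    (⊥ : Ideal F₁).prod ((⊤ : Ideal F₂).prod (⊤ : Ideal F₃)),
    (⊥ : Ideal F₁).prod ((⊥ : Ideal F₂).prod (⊤ : Ideal F₃)),
    (⊤ : Ideal F₁).prod ((⊥ : Ideal F₂).prod (⊤ : Ideal F₃))]

section AuxLemmas

lemma IG.mem_prod' {R S : Type*} [Semiring R] [Semiring S] {I : Ideal R} {J : Ideal S}
    {x : R × S} : x ∈ I.prod J ↔ x.1 ∈ I ∧ x.2 ∈ J := Iff.rfl

lemma IG.prod_bot_bot_s12 {R S : Type*} [Semiring R] [Semiring S] :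
    (⊥ : Ideal R).prod (⊥ : Ideal S) = ⊥ := by
  ext x
  simp [IG.mem_prod', Prod.ext_iff]

lemma IG.inf_ne_bot {R : Type*} [CommRing R] {I J : Ideal R} {x : R}
    (hI : x ∈ I) (hJ : x ∈ J) (hx : x ≠ 0) : I ⊓ J ≠ ⊥ := by
  rw [Submodule.ne_bot_iff]
  exact ⟨x, Submodule.mem_inf.mpr ⟨hI, hJ⟩, hx⟩

variable (F₁ F₂ F₃ : Type*) [Field F₁] [Field F₂] [Field F₃]

lemma IG.ne_bot₁ (B : Ideal F₂) (C : Ideal F₃) :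
    (⊤ : Ideal F₁).prod (B.prod C) ≠ ⊥ := by
  rw [Submodule.ne_bot_iff]
  exact ⟨((1 : F₁), (0 : F₂), (0 : F₃)), ⟨trivial, B.zero_mem, C.zero_mem⟩,
    by simp [Prod.ext_iff]⟩

lemma IG.ne_bot₂ (A : Ideal F₁) (C : Ideal F₃) :
    A.prod ((⊤ : Ideal F₂).prod C) ≠ ⊥ := by
  rw [Submodule.ne_bot_iff]
  exact ⟨((0 : F₁), (1 : F₂), (0 : F₃)), ⟨A.zero_mem, trivial, C.zero_mem⟩,
    by simp [Prod.ext_iff]⟩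

lemma IG.ne_bot₃ (A : Ideal F₁) (B : Ideal F₂) :
    A.prod (B.prod (⊤ : Ideal F₃)) ≠ ⊥ := by
  rw [Submodule.ne_bot_iff]
  exact ⟨((0 : F₁), (0 : F₂), (1 : F₃)), ⟨A.zero_mem, B.zero_mem, trivial⟩,
    by simp [Prod.ext_iff]⟩

lemma IG.ne_top₁ (B : Ideal F₂) (C : Ideal F₃) :
    (⊥ : Ideal F₁).prod (B.prod C) ≠ ⊤ := by
  rw [Ne, Ideal.eq_top_iff_one]
  intro h
  exact one_ne_zero (Ideal.mem_bot.mp ((IG.mem_prod' (I := (⊥ : Ideal F₁)) (J := B.prod C)).mp h).1)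

lemma IG.ne_top₂ (A : Ideal F₁) (C : Ideal F₃) :
    A.prod ((⊥ : Ideal F₂).prod C) ≠ ⊤ := by
  rw [Ne, Ideal.eq_top_iff_one]
  intro h
  exact one_ne_zero (Ideal.mem_bot.mp ((IG.mem_prod' (I := (⊥ : Ideal F₂)) (J := C)).mp ((IG.mem_prod' (I := A) (J := (⊥ : Ideal F₂).prod C)).mp h).2).1)

lemma IG.ne_top₃ (A : Ideal F₁) (B : Ideal F₂) :
    A.prod (B.prod (⊥ : Ideal F₃)) ≠ ⊤ := by
  rw [Ne, Ideal.eq_top_iff_one]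
  intro h
  exact one_ne_zero (Ideal.mem_bot.mp ((IG.mem_prod' (I := B) (J := (⊥ : Ideal F₃))).mp ((IG.mem_prod' (I := A) (J := B.prod (⊥ : Ideal F₃))).mp h).2).2)

lemma IG.fin6_cases (i : Fin 6) : i = 0 ∨ i = 1 ∨ i = 2 ∨ i = 3 ∨ i = 4 ∨ i = 5 := by omega

lemma IG.six_ne_bot (i : Fin 6) : sixIdeals F₁ F₂ F₃ i ≠ ⊥ := by
  rcases IG.fin6_cases i with rfl | rfl | rfl | rfl | rfl | rfl
  · exact IG.ne_bot₁ F₁ F₂ F₃ _ _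
  · exact IG.ne_bot₁ F₁ F₂ F₃ _ _
  · exact IG.ne_bot₂ F₁ F₂ F₃ _ _
  · exact IG.ne_bot₂ F₁ F₂ F₃ _ _
  · exact IG.ne_bot₃ F₁ F₂ F₃ _ _
  · exact IG.ne_bot₁ F₁ F₂ F₃ _ _

lemma IG.six_ne_top (i : Fin 6) : sixIdeals F₁ F₂ F₃ i ≠ ⊤ := by
  rcases IG.fin6_cases i with rfl | rfl | rfl | rfl | rfl | rfl
  · exact IG.ne_top₂ F₁ F₂ F₃ _ _
  · exact IG.ne_top₃ F₁ F₂ F₃ _ _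
  · exact IG.ne_top₁ F₁ F₂ F₃ _ _
  · exact IG.ne_top₁ F₁ F₂ F₃ _ _
  · exact IG.ne_top₁ F₁ F₂ F₃ _ _
  · exact IG.ne_top₂ F₁ F₂ F₃ _ _

lemma IG.six_inj : Function.Injective (sixIdeals F₁ F₂ F₃) := by
  intro i j h
  rcases IG.fin6_cases i with rfl | rfl | rfl | rfl | rfl | rfl <;>
    rcases IG.fin6_cases j with rfl | rfl | rfl | rfl | rfl | rfl <;>
      first
        | rfl
        | (exfalso; obtain ⟨e1, e23⟩ := Ideal.prod_inj.mp h; obtain ⟨e2, e3⟩ := Ideal.prod_inj.mp e23; first | exact absurd e1 bot_ne_top | exact absurd e1 top_ne_bot | exact absurd e2 bot_ne_top | exact absurd e2 top_ne_bot | exact absurd e3 bot_ne_top | exact absurd e3 top_ne_bot)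

lemma IG.six_surj (I : Ideal (F₁ × F₂ × F₃)) (hb : I ≠ ⊥) (ht : I ≠ ⊤) :
    ∃ i, I = sixIdeals F₁ F₂ F₃ i := by
  have h := Ideal.ideal_prod_eq I
  set I₁ := Ideal.map (RingHom.fst F₁ (F₂ × F₃)) I with hI₁
  set I₂₃ := Ideal.map (RingHom.snd F₁ (F₂ × F₃)) I with hI₂₃
  have h23 := Ideal.ideal_prod_eq I₂₃
  set I₂ := Ideal.map (RingHom.fst F₂ F₃) I₂₃ with hI₂
  set I₃ := Ideal.map (RingHom.snd F₂ F₃) I₂₃ with hI₃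
  have key : I = I₁.prod (I₂.prod I₃) := by rw [h, h23]
  rcases I₁.eq_bot_or_top with h1 | h1 <;>
    rcases I₂.eq_bot_or_top with h2 | h2 <;>
      rcases I₃.eq_bot_or_top with h3 | h3 <;>
        rw [h1, h2, h3] at key
  · exact absurd (key.trans (by rw [IG.prod_bot_bot_s12, IG.prod_bot_bot_s12])) hb
  · exact ⟨4, key⟩
  · exact ⟨2, key⟩
  · exact ⟨3, key⟩
  · exact ⟨0, key⟩
  · exact ⟨5, key⟩
  · exact ⟨1, key⟩
  · exact absurd (key.trans (by rw [Ideal.prod_top_top, Ideal.prod_top_top])) ht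

lemma IG.six_inf (i : Fin 6) :
    sixIdeals F₁ F₂ F₃ i ⊓ sixIdeals F₁ F₂ F₃ (i + 1) ≠ ⊥ := by
  rcases IG.fin6_cases i with rfl | rfl | rfl | rfl | rfl | rfl
  · exact IG.inf_ne_bot (x := ((1 : F₁), (0 : F₂), (0 : F₃)))
      (IG.mem_prod'.mpr ⟨trivial, IG.mem_prod'.mpr ⟨Ideal.zero_mem _, Ideal.zero_mem _⟩⟩)
      (IG.mem_prod'.mpr ⟨trivial, IG.mem_prod'.mpr ⟨Ideal.zero_mem _, Ideal.zero_mem _⟩⟩) (by simp [Prod.ext_iff])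
  · exact IG.inf_ne_bot (x := ((0 : F₁), (1 : F₂), (0 : F₃)))
      (IG.mem_prod'.mpr ⟨Ideal.zero_mem _, IG.mem_prod'.mpr ⟨trivial, Ideal.zero_mem _⟩⟩)
      (IG.mem_prod'.mpr ⟨Ideal.zero_mem _, IG.mem_prod'.mpr ⟨trivial, Ideal.zero_mem _⟩⟩) (by simp [Prod.ext_iff])
  · exact IG.inf_ne_bot (x := ((0 : F₁), (1 : F₂), (0 : F₃)))
      (IG.mem_prod'.mpr ⟨Ideal.zero_mem _, IG.mem_prod'.mpr ⟨trivial, Ideal.zero_mem _⟩⟩)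
      (IG.mem_prod'.mpr ⟨Ideal.zero_mem _, IG.mem_prod'.mpr ⟨trivial, Ideal.zero_mem _⟩⟩) (by simp [Prod.ext_iff])
  · exact IG.inf_ne_bot (x := ((0 : F₁), (0 : F₂), (1 : F₃)))
      (IG.mem_prod'.mpr ⟨Ideal.zero_mem _, IG.mem_prod'.mpr ⟨Ideal.zero_mem _, trivial⟩⟩)
      (IG.mem_prod'.mpr ⟨Ideal.zero_mem _, IG.mem_prod'.mpr ⟨Ideal.zero_mem _, trivial⟩⟩) (by simp [Prod.ext_iff])
  · exact IG.inf_ne_bot (x := ((0 : F₁), (0 : F₂), (1 : F₃)))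
      (IG.mem_prod'.mpr ⟨Ideal.zero_mem _, IG.mem_prod'.mpr ⟨Ideal.zero_mem _, trivial⟩⟩)
      (IG.mem_prod'.mpr ⟨Ideal.zero_mem _, IG.mem_prod'.mpr ⟨Ideal.zero_mem _, trivial⟩⟩) (by simp [Prod.ext_iff])
  · exact IG.inf_ne_bot (x := ((1 : F₁), (0 : F₂), (0 : F₃)))
      (IG.mem_prod'.mpr ⟨trivial, IG.mem_prod'.mpr ⟨Ideal.zero_mem _, Ideal.zero_mem _⟩⟩)
      (IG.mem_prod'.mpr ⟨trivial, IG.mem_prod'.mpr ⟨Ideal.zero_mem _, Ideal.zero_mem _⟩⟩) (by simp [Prod.ext_iff])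

/-- The vertex of the intersection graph corresponding to `sixIdeals i`. -/
def IG.toVert (i : Fin 6) : {I : Ideal (F₁ × F₂ × F₃) // I ≠ ⊥ ∧ I ≠ ⊤} :=
  ⟨sixIdeals F₁ F₂ F₃ i, IG.six_ne_bot F₁ F₂ F₃ i, IG.six_ne_top F₁ F₂ F₃ i⟩

lemma IG.adj_succ (i : Fin 6) :
    (intersectionGraph (F₁ × F₂ × F₃)).Adj (IG.toVert F₁ F₂ F₃ i) (IG.toVert F₁ F₂ F₃ (i + 1)) := by
  refine ⟨fun e => ?_, IG.six_inf F₁ F₂ F₃ i⟩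
  have : i = i + 1 := IG.six_inj F₁ F₂ F₃ (congrArg Subtype.val e)
  omega

/-- The graph homomorphism from the 6-cycle into the intersection graph. -/
def IG.hom : SimpleGraph.cycleGraph 6 →g intersectionGraph (F₁ × F₂ × F₃) where
  toFun := IG.toVert F₁ F₂ F₃
  map_rel' := by
    intro u v h
    rw [SimpleGraph.cycleGraph_adj] at h
    rcases h with h | h
    · have : u = v + 1 := by rw [sub_eq_iff_eq_add'] at h; exact h
      subst this
      exact (IG.adj_succ F₁ F₂ F₃ v).symm
    · have : v = u + 1 := by rw [sub_eq_iff_eq_add'] at h; exact h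
      subst this
      exact IG.adj_succ F₁ F₂ F₃ u

/-- The standard Hamiltonian cycle in the 6-cycle graph. -/
def IG.w6 : (SimpleGraph.cycleGraph 6).Walk 0 0 :=
  .cons (show (SimpleGraph.cycleGraph 6).Adj 0 1 by decide) <|
  .cons (show (SimpleGraph.cycleGraph 6).Adj 1 2 by decide) <|
  .cons (show (SimpleGraph.cycleGraph 6).Adj 2 3 by decide) <|
  .cons (show (SimpleGraph.cycleGraph 6).Adj 3 4 by decide) <|
  .cons (show (SimpleGraph.cycleGraph 6).Adj 4 5 by decide) <|
  .cons (show (SimpleGraph.cycleGraph 6).Adj 5 0 by decide) .nil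

lemma IG.w6_ham : IG.w6.IsHamiltonianCycle := by
  rw [SimpleGraph.Walk.isHamiltonianCycle_iff_isCycle_and_support_count_tail_eq_one]
  refine ⟨⟨⟨⟨?_⟩, ?_⟩, ?_⟩, ?_⟩ <;> decide

end AuxLemmas

/-- For fields `F₁, F₂, F₃`, the intersection graph
`Γ(F₁ × F₂ × F₃)` is Hamiltonian; indeed its six nontrivial ideals
`F₁×0×0, F₁×F₂×0, 0×F₂×0, 0×F₂×F₃, 0×0×F₃, F₁×0×F₃` form a Hamiltonian cycle
in this cyclic order. -/
theorem intersectionGraph_three_fields_hamiltonian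
    (F₁ F₂ F₃ : Type*) [Field F₁] [Field F₂] [Field F₃] :
    (∀ i, sixIdeals F₁ F₂ F₃ i ≠ ⊥ ∧ sixIdeals F₁ F₂ F₃ i ≠ ⊤) ∧
    Function.Injective (sixIdeals F₁ F₂ F₃) ∧
    (∀ I : Ideal (F₁ × F₂ × F₃), I ≠ ⊥ → I ≠ ⊤ → ∃ i, I = sixIdeals F₁ F₂ F₃ i) ∧
    (∀ i : Fin 6, sixIdeals F₁ F₂ F₃ i ⊓ sixIdeals F₁ F₂ F₃ (i + 1) ≠ ⊥) ∧
    (∃ (a : {I : Ideal (F₁ × F₂ × F₃) // I ≠ ⊥ ∧ I ≠ ⊤})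
      (p : (intersectionGraph (F₁ × F₂ × F₃)).Walk a a), p.IsHamiltonianCycle) := by
  refine ⟨fun i => ⟨IG.six_ne_bot F₁ F₂ F₃ i, IG.six_ne_top F₁ F₂ F₃ i⟩,
    IG.six_inj F₁ F₂ F₃, IG.six_surj F₁ F₂ F₃, IG.six_inf F₁ F₂ F₃, ?_⟩
  have hbij : Function.Bijective (IG.hom F₁ F₂ F₃) := by
    constructor
    · intro i j h
      exact IG.six_inj F₁ F₂ F₃ (congrArg Subtype.val h)
    · rintro ⟨I, hb, ht⟩
      obtain ⟨i, hi⟩ := IG.six_surj F₁ F₂ F₃ I hb ht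
      exact ⟨i, Subtype.ext hi.symm⟩
  exact ⟨_, IG.w6.map (IG.hom F₁ F₂ F₃), IG.w6_ham.map hbij⟩
end

section
/- Let R be an Artinian commutative ring with identity 1 ≠ 0. If the intersection graph Γ(R) is Hamiltonian, then Γ(R) is pancyclic: for every natural number k with 3 ≤ k ≤ (number of vertices of Γ(R)), the graph Γ(R) contains a cycle of length k. -/
open scoped Classical

section GraphTools

variable {V : Type*} {G : SimpleGraph V}

/-- Build a walk whose support is a given chain-adjacent list. -/
lemma aux_exists_walk_of_chain :
    ∀ (l : List V) (x y : V), l.Chain' G.Adj → l.head? = some x → l.getLast? = some y →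
      ∃ w : G.Walk x y, w.support = l
  | [], _, _, _, hh, _ => by simp at hh
  | [a], x, y, _, hh, hl => by
      obtain rfl : a = x := by simpa using hh
      obtain rfl : a = y := by simpa using hl
      exact ⟨SimpleGraph.Walk.nil, by simp⟩
  | a :: b :: t, x, y, hc, hh, hl => by
      obtain rfl : a = x := by simpa using hh
      simp only [List.Chain', List.isChain_cons_cons] at hc
      obtain ⟨w, hw⟩ := aux_exists_walk_of_chain (b :: t) b y hc.2 rfl
        (by rw [← hl, List.getLast?_cons_cons])
      exact ⟨SimpleGraph.Walk.cons hc.1 w, by simp [hw]⟩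

/-- The last element of the support of a walk is its endpoint. -/
lemma aux_support_getLast? {x y : V} (p : G.Walk x y) : p.support.getLast? = some y := by
  induction p with
  | nil => rfl
  | @cons u v w h p ih =>
      rw [SimpleGraph.Walk.support_cons, SimpleGraph.Walk.support_eq_cons p,
        List.getLast?_cons_cons, ← SimpleGraph.Walk.support_eq_cons p]
      exact ih

lemma aux_mem_of_getLast? {α : Type*} {l : List α} {x : α} (h : l.getLast? = some x) :
    x ∈ l := by
  obtain ⟨hne, heq⟩ := List.mem_getLast?_eq_getLast (Option.mem_def.mpr h)
  exact heq ▸ List.getLast_mem hne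

lemma aux_getLast?_cons {α : Type*} (a : α) (l : List α) (h : l ≠ []) :
    (a :: l).getLast? = l.getLast? := by
  cases l with
  | nil => exact absurd rfl h
  | cons b t => rw [List.getLast?_cons_cons]

/-- Build a cycle from a nodup chain-adjacent list whose ends are adjacent. -/
lemma aux_exists_cycle_of_list (x y : V) (m : List V) (hm : m ≠ [])
    (hnd : (x :: m ++ [y]).Nodup)
    (hch : (x :: m ++ [y]).Chain' G.Adj)
    (hyx : G.Adj y x) :
    ∃ c : G.Walk y y, c.IsCycle ∧ c.length = m.length + 2 ∧
      ∀ z, z ∈ c.support ↔ z ∈ x :: m ++ [y] := by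
  have hxy : x ≠ y := by
    have hx : x ∉ m ++ [y] := (List.nodup_cons.mp hnd).1
    intro h
    exact hx (by rw [h]; simp)
  obtain ⟨W, hW⟩ := aux_exists_walk_of_chain (G := G) (x :: m ++ [y]) x y hch rfl
    (by rw [show x :: m ++ [y] = (x :: m) ++ [y] from rfl]; exact List.getLast?_concat)
  have hWpath : W.IsPath := (SimpleGraph.Walk.isPath_def W).mpr (by rw [hW]; exact hnd)
  have hedge : s(y, x) ∉ W.edges := by
    cases W with
    | nil => exact absurd rfl hxy
    | @cons _ b _ h W' =>
        have hW' : W'.support = m ++ [y] := by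
          have h0 := hW
          rw [SimpleGraph.Walk.support_cons] at h0
          exact (List.cons.injEq _ _ _ _ ▸ h0).2
        intro hmem
        rw [SimpleGraph.Walk.edges_cons, List.mem_cons] at hmem
        rcases hmem with hmem | hmem
        · rw [Sym2.eq_iff] at hmem
          rcases hmem with ⟨h1, _⟩ | ⟨h1, _⟩
          · exact hxy h1.symm
          · -- y = b; b is the head of W'.support, y is its last; contradiction with nodup
            obtain ⟨m0, m', rfl⟩ : ∃ m0 m', m = m0 :: m' := by
              cases m with
              | nil => exact absurd rfl hm
              | cons m0 m' => exact ⟨m0, m', rfl⟩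
            have hb : W'.support = b :: W'.support.tail := SimpleGraph.Walk.support_eq_cons W'
            rw [hW'] at hb
            have : m0 = b := by
              have := congrArg List.head? hb
              simpa using this
            have hym : y ∉ m0 :: m' := by
              have h2 := (List.nodup_cons.mp hnd).2
              intro hy
              exact (List.disjoint_of_nodup_append h2) hy (by simp)
            exact hym (by rw [this, ← h1]; simp)
        · refine (List.nodup_cons.mp hnd).1 ?_
          have hx := SimpleGraph.Walk.snd_mem_support_of_mem_edges W' hmem
          rwa [hW'] at hx
  refine ⟨SimpleGraph.Walk.cons hyx W, ?_, ?_, ?_⟩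
  · exact (SimpleGraph.Walk.cons_isCycle_iff W hyx).mpr ⟨hWpath, hedge⟩
  · have := SimpleGraph.Walk.length_support W
    rw [hW] at this
    simp only [SimpleGraph.Walk.length_cons]
    simp at this
    omega
  · intro z
    rw [SimpleGraph.Walk.support_cons, hW]
    simp only [List.mem_cons, List.mem_append, List.mem_singleton]
    tauto

/-- Decompose a cycle through `u` as `u :: t' ++ [u]` on supports. -/
lemma aux_cycle_decomp {a u : V} (c : G.Walk a a) (hc : c.IsCycle) (hu : u ∈ c.support) :
    ∃ t' : List V, t'.Nodup ∧ u ∉ t' ∧ t'.length = c.length - 1 ∧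
      List.Chain' G.Adj (u :: t' ++ [u]) ∧
      (∀ z, z ∈ t' → z ∈ c.support) ∧
      (∀ z, z ∈ c.support → z = u ∨ z ∈ t') := by
  have h3 := hc.three_le_length
  have hcne : c.support.tail ≠ [] := by
    intro h
    have h2 := SimpleGraph.Walk.length_support c
    have h5 : c.support.length = 1 := by
      conv_lhs => rw [SimpleGraph.Walk.support_eq_cons c]
      rw [h]
      rfl
    omega
  have hataila : a ∈ c.support.tail := by
    have h1 := aux_support_getLast? c
    rw [SimpleGraph.Walk.support_eq_cons c, aux_getLast?_cons _ _ hcne] at h1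
    exact aux_mem_of_getLast? h1
  set q := c.rotate u hu with hqdef
  have hq : q.IsCycle := hc.rotate hu
  have hperm : q.support.tail.Perm c.support.tail := (SimpleGraph.Walk.support_rotate c u hu).perm
  have hmemq : ∀ z, z ∈ q.support ↔ z ∈ c.support := by
    intro z
    constructor
    · intro hz
      rw [SimpleGraph.Walk.support_eq_cons q, List.mem_cons] at hz
      rcases hz with rfl | hz
      · exact hu
      · exact List.mem_of_mem_tail (hperm.mem_iff.mp hz)
    · intro hz
      rw [SimpleGraph.Walk.support_eq_cons q, List.mem_cons]
      by_cases hzu : z = u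
      · exact Or.inl hzu
      · right
        rw [hperm.mem_iff]
        rw [SimpleGraph.Walk.support_eq_cons c, List.mem_cons] at hz
        rcases hz with rfl | hz
        · exact hataila
        · exact hz
  have hlq : q.length = c.length := by
    have h1 := hperm.length_eq
    rw [List.length_tail, List.length_tail, SimpleGraph.Walk.length_support,
      SimpleGraph.Walk.length_support] at h1
    omega
  set t := q.support.tail with htdef
  have hts : q.support = u :: t := SimpleGraph.Walk.support_eq_cons q
  have htnd : t.Nodup := hq.support_nodup
  have htlen : t.length = c.length := by
    rw [htdef, List.length_tail, SimpleGraph.Walk.length_support, hlq]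
    omega
  have htne : t ≠ [] := by
    intro h
    rw [h] at htlen
    simp at htlen
    omega
  have htlast : t.getLast htne = u := by
    have h1 := aux_support_getLast? q
    rw [hts, aux_getLast?_cons _ _ htne, List.getLast?_eq_getLast_of_ne_nil htne] at h1
    exact Option.some_injective _ h1
  refine ⟨t.dropLast, ?_, ?_, ?_, ?_, ?_, ?_⟩
  · exact htnd.sublist (List.dropLast_sublist t)
  · intro h
    have hsplit : t.dropLast ++ [u] = t := by rw [← htlast]; exact List.dropLast_append_getLast htne
    have := htnd
    rw [← hsplit, List.nodup_append] at this
    exact this.2.2 u h u (by simp) rfl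
  · rw [List.length_dropLast, htlen]
  · have hsplit : t.dropLast ++ [u] = t := by rw [← htlast]; exact List.dropLast_append_getLast htne
    have hch := SimpleGraph.Walk.isChain_adj_support q
    rw [hts, ← hsplit] at hch
    exact hch
  · intro z hz
    have : z ∈ t := List.dropLast_subset t hz
    exact (hmemq z).mp (by rw [hts]; exact List.mem_cons_of_mem _ this)
  · intro z hz
    have hzq : z ∈ q.support := (hmemq z).mpr hz
    rw [hts, List.mem_cons] at hzq
    rcases hzq with rfl | hzt
    · exact Or.inl rfl
    · by_cases hzu : z = u
      · exact Or.inl hzu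
      · right
        have hsplit : t.dropLast ++ [u] = t := by
          rw [← htlast]; exact List.dropLast_append_getLast htne
        rw [← hsplit, List.mem_append] at hzt
        rcases hzt with h | h
        · exact h
        · simp at h
          exact absurd h hzu

/-- A cycle through a vertex adjacent to all its other vertices yields cycles of
all smaller lengths (at least 3). -/
lemma aux_exists_cycle_of_dominating {a : V} (c : G.Walk a a) (hc : c.IsCycle)
    (u : V) (hu : u ∈ c.support)
    (hdom : ∀ y ∈ c.support, y ≠ u → G.Adj u y)
    (k : ℕ) (h3 : 3 ≤ k) (hk : k ≤ c.length) :
    ∃ (x : V) (w : G.Walk x x), w.IsCycle ∧ w.length = k := by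
  obtain ⟨t', hnd, hut', hlen, hchain, hsub, _⟩ := aux_cycle_decomp c hc hu
  have hc3 := hc.three_le_length
  have hk1 : k - 1 ≤ t'.length := by omega
  set m0 := t'.take (k - 1) with hm0
  have hm0len : m0.length = k - 1 := by rw [hm0, List.length_take]; omega
  have hm0ne : m0 ≠ [] := by
    intro h; rw [h] at hm0len; simp at hm0len; omega
  set y := m0.getLast hm0ne with hy
  set m := m0.dropLast with hmdef
  have hm0split : m ++ [y] = m0 := List.dropLast_append_getLast hm0ne
  have hmlen : m.length + 1 = m0.length := by
    have := congrArg List.length hm0split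
    simpa using this
  have hmne : m ≠ [] := by
    intro h; rw [h] at hmlen; simp at hmlen; omega
  have hm0sub : ∀ z ∈ m0, z ∈ t' := fun z hz => List.take_subset _ _ hz
  have hm0nd : m0.Nodup := hnd.sublist (List.take_sublist _ _)
  have hnodup : (u :: m ++ [y]).Nodup := by
    rw [show u :: m ++ [y] = u :: m0 from by rw [List.cons_append, hm0split]]
    exact List.nodup_cons.mpr ⟨fun h => hut' (hm0sub _ h), hm0nd⟩
  have hchain2 : (u :: m ++ [y]).Chain' G.Adj := by
    have hpre : (u :: m0) <+: (u :: t' ++ [u]) := by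
      refine ⟨t'.drop (k - 1) ++ [u], ?_⟩
      simp only [hm0, List.cons_append]
      rw [← List.append_assoc, List.take_append_drop]
    have := hchain.prefix hpre
    rwa [show u :: m ++ [y] = u :: m0 from by rw [List.cons_append, hm0split]]
  have hyu : G.Adj y u := by
    have hym0 : y ∈ m0 := by rw [hy]; exact List.getLast_mem hm0ne
    have hyt : y ∈ t' := hm0sub _ hym0
    have hyne : y ≠ u := fun h => hut' (h ▸ hyt)
    exact (hdom y (hsub _ hyt) hyne).symm
  obtain ⟨w, hw1, hw2, _⟩ := aux_exists_cycle_of_list u y m hmne hnodup hchain2 hyu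
  exact ⟨y, w, hw1, by omega⟩

end GraphTools

section RingTools

variable {R : Type*} [CommRing R] [Nontrivial R] [IsArtinianRing R]

lemma aux_atom_mul_jacobson_bot (N : Ideal R) (hN : IsAtom N) :
    N * Ideal.jacobson (⊥ : Ideal R) = ⊥ := by
  obtain ⟨n, hn⟩ := IsArtinianRing.isNilpotent_jacobson_bot (R := R)
  by_contra h
  have hle : N * Ideal.jacobson ⊥ ≤ N := Ideal.mul_le_left
  have heq : N * Ideal.jacobson ⊥ = N := by
    rcases lt_or_eq_of_le hle with hlt | he
    · exact absurd (hN.2 _ hlt) h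
    · exact he
  have hpow : ∀ i : ℕ, N * (Ideal.jacobson (⊥ : Ideal R)) ^ i = N := by
    intro i
    induction i with
    | zero => simp
    | succ i ih => rw [pow_succ, ← mul_assoc, ih, heq]
  have hbot := hpow n
  rw [hn] at hbot
  simp at hbot
  exact hN.1 hbot.symm

lemma aux_exists_universal_ideal (hJ : Ideal.jacobson (⊥ : Ideal R) ≠ ⊥) :
    ∃ M : Ideal R, M ≠ ⊥ ∧ M ≠ ⊤ ∧ ∀ I : Ideal R, I ≠ ⊥ → M ⊓ I ≠ ⊥ := by
  haveI : IsAtomic (Ideal R) := isAtomic_of_orderBot_wellFounded_lt wellFounded_lt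
  have hann : (Ideal.jacobson (⊥ : Ideal R)).annihilator ≠ ⊤ := by
    rw [Ne, Submodule.annihilator_eq_top_iff]
    exact hJ
  obtain ⟨M, hMmax, hM⟩ := Ideal.exists_le_maximal _ hann
  have key : ∀ I : Ideal R, I ≠ ⊥ → M ⊓ I ≠ ⊥ := by
    intro I hI
    obtain ⟨N, hN, hNI⟩ := (IsAtomic.eq_bot_or_exists_atom_le I).resolve_left hI
    have hNJ : N * Ideal.jacobson (⊥ : Ideal R) = ⊥ := aux_atom_mul_jacobson_bot N hN
    have hNA : N ≤ (Ideal.jacobson (⊥ : Ideal R)).annihilator := by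
      intro n hn
      rw [Submodule.mem_annihilator]
      intro x hx
      have hmem : n * x ∈ N * Ideal.jacobson (⊥ : Ideal R) := Ideal.mul_mem_mul hn hx
      rw [hNJ] at hmem
      simpa using hmem
    have hle : N ≤ M ⊓ I := le_inf (hNA.trans hM) hNI
    intro h
    exact hN.1 (le_bot_iff.mp (h ▸ hle))
  refine ⟨M, ?_, hMmax.ne_top, key⟩
  intro h
  exact key ⊤ top_ne_bot (by rw [h, bot_inf_eq])

lemma aux_reduced_case (hJ : Ideal.jacobson (⊥ : Ideal R) = ⊥)
    (a : Ideal R) (ha_bot : a ≠ ⊥) (ha_top : a ≠ ⊤) :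
    ∃ N U : Ideal R, IsAtom N ∧ N ≠ ⊤ ∧ U ≠ ⊥ ∧ U ≠ ⊤ ∧ U ≠ N ∧
      (∀ I : Ideal R, I ≠ ⊥ → I ≠ N → U ⊓ I ≠ ⊥) := by
  haveI : IsAtomic (Ideal R) := isAtomic_of_orderBot_wellFounded_lt wellFounded_lt
  haveI : IsReduced R := by
    constructor
    intro x hx
    obtain ⟨n, hn⟩ := hx
    have hxJ : x ∈ Ideal.jacobson (⊥ : Ideal R) := by
      rw [Ideal.jacobson]
      rw [Submodule.mem_sInf]
      intro K hK
      exact hK.2.isPrime.mem_of_pow_mem n (by rw [hn]; exact K.zero_mem)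
    rw [hJ] at hxJ
    simpa using hxJ
  haveI : IsSemisimpleRing R := IsArtinianRing.isSemisimpleRing_of_isReduced R
  obtain ⟨N, hN, hNa⟩ := (IsAtomic.eq_bot_or_exists_atom_le a).resolve_left ha_bot
  have hNtop : N ≠ ⊤ := fun h => ha_top (top_le_iff.mp (h ▸ hNa))
  obtain ⟨U, hU⟩ := exists_isCompl N
  have hinf : N ⊓ U = ⊥ := hU.inf_eq_bot
  have hsup : N ⊔ U = ⊤ := hU.sup_eq_top
  have hUbot : U ≠ ⊥ := fun h => hNtop (by rw [← hsup, h, sup_bot_eq])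
  have hUtop : U ≠ ⊤ := fun h => hN.1 (by rw [← hinf, h, inf_top_eq])
  have hUN : U ≠ N := fun h => hN.1 (by rw [← hinf, h, inf_idem])
  refine ⟨N, U, hN, hNtop, hUbot, hUtop, hUN, ?_⟩
  intro I hIbot hIN
  by_cases hNI : N ≤ I
  · intro h
    have hmod : (N ⊔ U) ⊓ I = N ⊔ U ⊓ I := sup_inf_assoc_of_le U hNI
    rw [hsup, top_inf_eq, h, sup_bot_eq] at hmod
    exact hIN hmod
  · obtain ⟨A, hA, hAI⟩ := (IsAtomic.eq_bot_or_exists_atom_le I).resolve_left hIbot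
    have hAN : A ≠ N := fun h => hNI (h ▸ hAI)
    have hANbot : A ⊓ N = ⊥ := by
      rcases lt_or_eq_of_le (inf_le_left : A ⊓ N ≤ A) with h | h
      · exact hA.2 _ h
      · exfalso
        have : A ≤ N := inf_eq_left.mp h
        rcases hN.le_iff.mp this with h' | h'
        · exact hA.1 h'
        · exact hAN h'
    have hAU : A ≤ U := by
      have h1 : A * N = ⊥ := le_bot_iff.mp (le_trans Ideal.mul_le_inf hANbot.le)
      have h2 : A = A * (N ⊔ U) := by rw [hsup, Ideal.mul_top]
      rw [Ideal.mul_sup, h1, bot_sup_eq] at h2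
      rw [h2]
      exact Ideal.mul_le_right
    intro h
    have hle : A ≤ U ⊓ I := le_inf hAU hAI
    exact hA.1 (le_bot_iff.mp (h ▸ hle))

end RingTools

/-- Let `R` be an Artinian commutative ring with `1 ≠ 0`.  If the
intersection graph `Γ(R)` is Hamiltonian, then it is pancyclic: it contains a cycle of
every length `k` with `3 ≤ k ≤ (number of vertices)`. -/
theorem intersectionGraph_hamiltonian_implies_pancyclic
    (R : Type*) [CommRing R] [Nontrivial R] [IsArtinianRing R]
    (h_ham : ∃ (a : {I : Ideal R // I ≠ ⊥ ∧ I ≠ ⊤})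
      (p : (intersectionGraph R).Walk a a), p.IsHamiltonianCycle) :
    ∀ k : ℕ, 3 ≤ k → k ≤ Nat.card {I : Ideal R // I ≠ ⊥ ∧ I ≠ ⊤} →
      ∃ (a : {I : Ideal R // I ≠ ⊥ ∧ I ≠ ⊤})
        (p : (intersectionGraph R).Walk a a), p.IsCycle ∧ p.length = k := by
  intro k hk3 hkcard
  obtain ⟨a, p, hp⟩ := h_ham
  haveI : Fintype {I : Ideal R // I ≠ ⊥ ∧ I ≠ ⊤} :=
    Fintype.ofList p.support (fun v => hp.mem_support v)
  have hplen : p.length = Nat.card {I : Ideal R // I ≠ ⊥ ∧ I ≠ ⊤} := by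
    rw [Nat.card_eq_fintype_card]
    exact hp.length_eq
  by_cases hJ : Ideal.jacobson (⊥ : Ideal R) = ⊥
  · -- reduced case
    rcases eq_or_lt_of_le hkcard with heq | hlt
    · exact ⟨a, p, hp.isCycle, by rw [hplen, ← heq]⟩
    · obtain ⟨N, U, hN, hNtop, hUbot, hUtop, hUN, hUkey⟩ :=
        aux_reduced_case hJ a.1 a.2.1 a.2.2
      set Nv : {I : Ideal R // I ≠ ⊥ ∧ I ≠ ⊤} := ⟨N, hN.1, hNtop⟩ with hNv
      set Uv : {I : Ideal R // I ≠ ⊥ ∧ I ≠ ⊤} := ⟨U, hUbot, hUtop⟩ with hUv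
      have hUvNv : Uv ≠ Nv := fun h => hUN (congrArg Subtype.val h)
      have hNmem : Nv ∈ p.support := hp.mem_support Nv
      obtain ⟨t', hnd, hNt', hlen, hchain, hsub, hall⟩ :=
        aux_cycle_decomp p hp.isCycle hNmem
      have ht'3 : 3 ≤ t'.length := by omega
      obtain ⟨x, t'', rfl⟩ : ∃ x t'', t' = x :: t'' := by
        cases t' with
        | nil => simp at ht'3
        | cons x t'' => exact ⟨x, t'', rfl⟩
      have ht''ne : t'' ≠ [] := by
        intro h; rw [h] at ht'3; simp at ht'3
      set y := t''.getLast ht''ne with hy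
      set m := t''.dropLast with hm
      have hsplit : m ++ [y] = t'' := List.dropLast_append_getLast ht''ne
      have hmlen : m.length + 1 = t''.length := by
        have := congrArg List.length hsplit; simpa using this
      have hmne : m ≠ [] := by
        intro h; rw [h] at hmlen; simp at hmlen
        rw [List.length_cons] at ht'3; omega
      -- adjacency of the two neighbours of Nv via the atom N
      have hNx : (intersectionGraph R).Adj Nv x := by
        have := hchain
        rw [List.cons_append, List.cons_append] at this
        simp only [List.Chain', List.isChain_cons_cons] at this
        exact this.1
      have hyNv : (intersectionGraph R).Adj y Nv := by
        have h2 : List.Chain' (intersectionGraph R).Adj ((x :: t'') ++ [Nv]) := hchain.tail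
        simp only [List.Chain', List.isChain_append] at h2
        refine h2.2.2 y ?_ Nv rfl
        rw [List.getLast?_eq_getLast_of_ne_nil (l := x :: t'') (List.cons_ne_nil _ _)]
        congr 1
        rw [hy, List.getLast_cons ht''ne]
      have hNlex : N ≤ x.1 := by
        have h1 : N ⊓ x.1 ≠ ⊥ := hNx.2
        rcases lt_or_eq_of_le (inf_le_left : N ⊓ x.1 ≤ N) with h | h
        · exact absurd (hN.2 _ h) h1
        · exact inf_eq_left.mp h
      have hNley : N ≤ y.1 := by
        have h1 : N ⊓ y.1 ≠ ⊥ := by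
          have := hyNv.2
          rwa [inf_comm] at this
        rcases lt_or_eq_of_le (inf_le_left : N ⊓ y.1 ≤ N) with h | h
        · exact absurd (hN.2 _ h) h1
        · exact inf_eq_left.mp h
      have hyx : (intersectionGraph R).Adj y x := by
        have hxt'' : x ∉ t'' := (List.nodup_cons.mp hnd).1
        have hymem : y ∈ t'' := by rw [hy]; exact List.getLast_mem ht''ne
        refine ⟨fun h => hxt'' (h ▸ hymem), ?_⟩
        intro h
        exact hN.1 (le_bot_iff.mp (h ▸ le_inf hNley hNlex))
      have hnodup : (x :: m ++ [y]).Nodup := by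
        rw [show x :: m ++ [y] = x :: t'' from by rw [List.cons_append, hsplit]]
        exact hnd
      have hchain2 : (x :: m ++ [y]).Chain' (intersectionGraph R).Adj := by
        rw [show x :: m ++ [y] = x :: t'' from by rw [List.cons_append, hsplit]]
        have h2 : List.Chain' (intersectionGraph R).Adj ((x :: t'') ++ [Nv]) := hchain.tail
        exact h2.prefix (List.prefix_append _ _)
      obtain ⟨c', hc'1, hc'2, hc'supp⟩ :=
        aux_exists_cycle_of_list x y m hmne hnodup hchain2 hyx
      have hlen' : t''.length + 1 = p.length - 1 := by rw [← hlen]; simp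
      have hc'len : c'.length = p.length - 1 := by omega
      have hUt' : Uv ∈ x :: t'' := by
        rcases hall Uv (hp.mem_support Uv) with h | h
        · exact absurd h hUvNv
        · exact h
      have hUc' : Uv ∈ c'.support := by
        rw [hc'supp]
        rw [show x :: m ++ [y] = x :: t'' from by rw [List.cons_append, hsplit]]
        exact hUt'
      have hdom : ∀ z ∈ c'.support, z ≠ Uv → (intersectionGraph R).Adj Uv z := by
        intro z hz hzU
        have hzt' : z ∈ x :: t'' := by
          rw [hc'supp, show x :: m ++ [y] = x :: t'' from by rw [List.cons_append, hsplit]] at hz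
          exact hz
        have hzNv : z ≠ Nv := fun h => hNt' (h ▸ hzt')
        refine ⟨fun h => hzU h.symm, ?_⟩
        exact hUkey z.1 z.2.1 (fun h => hzNv (Subtype.ext h))
      have hkc' : k ≤ c'.length := by omega
      obtain ⟨x0, w, hw1, hw2⟩ :=
        aux_exists_cycle_of_dominating c' hc'1 Uv hUc' hdom k hk3 hkc'
      exact ⟨x0, w, hw1, hw2⟩
  · -- non-reduced case: universal vertex
    obtain ⟨M, hM1, hM2, hMkey⟩ := aux_exists_universal_ideal hJ
    set Mv : {I : Ideal R // I ≠ ⊥ ∧ I ≠ ⊤} := ⟨M, hM1, hM2⟩ with hMv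
    have hu : Mv ∈ p.support := hp.mem_support Mv
    have hdom : ∀ y ∈ p.support, y ≠ Mv → (intersectionGraph R).Adj Mv y := by
      intro y _ hy
      exact ⟨fun h => hy h.symm, hMkey y.1 y.2.1⟩
    obtain ⟨x, w, hw1, hw2⟩ :=
      aux_exists_cycle_of_dominating p hp.isCycle Mv hu hdom k hk3 (by omega)
    exact ⟨x, w, hw1, hw2⟩
end

section
/- Let R be a commutative ring with identity 1 ≠ 0 and let m be a maximal ideal of R with m ≠ 0. If m is a pendant vertex of the intersection graph Γ(R) (i.e. m has exactly one neighbor in Γ(R)), then R is a local ring with maximal ideal m, m is a principal ideal, m³ = 0, m² ≠ 0, and the only nontrivial ideals of R are m and m²; in particular Γ(R) is a single edge. -/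
/-- Let `R` be a commutative ring with `1 ≠ 0` and `m ≠ 0` a maximal
ideal of `R` which is a pendant vertex of the intersection graph `Γ(R)` (it has exactly
one neighbour).  Then `R` is local with maximal ideal `m`, `m` is principal, `m³ = 0`,
`m² ≠ 0`, and the only nontrivial ideals of `R` are `m` and `m²`; in particular `Γ(R)`
is a single edge. -/
theorem intersectionGraph_maximal_pendant
    (R : Type*) [CommRing R] [Nontrivial R] (m : Ideal R)
    (h_max : m.IsMaximal) (h_ne_bot : m ≠ ⊥)
    (h_pendant : ∃! b : Ideal R, (b ≠ ⊥ ∧ b ≠ ⊤) ∧ b ≠ m ∧ m ⊓ b ≠ ⊥) :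
    IsLocalRing R ∧ (∀ I : Ideal R, I.IsMaximal → I = m) ∧ m.IsPrincipal ∧
      m ^ 3 = ⊥ ∧ m ^ 2 ≠ ⊥ ∧
      (∀ I : Ideal R, I ≠ ⊥ → I ≠ ⊤ → I = m ∨ I = m ^ 2) := by
  obtain ⟨b, ⟨⟨hb0, hbT⟩, hbm, hbint⟩, huniq⟩ := h_pendant
  have hmT : m ≠ ⊤ := h_max.ne_top
  have hnbr : ∀ I : Ideal R, I ≠ ⊥ → I ≠ ⊤ → I ≠ m → m ⊓ I ≠ ⊥ → I = b :=
    fun I h1 h2 h3 h4 => huniq I ⟨⟨h1, h2⟩, h3, h4⟩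
  -- `b` is strictly below `m`
  have hblt : b < m := by
    by_cases hcm : m ⊓ b = m
    · exfalso
      have hle : m ≤ b := by rw [← hcm]; exact inf_le_right
      exact hbm (h_max.eq_of_le hbT hle).symm
    · have hcb : m ⊓ b = b := by
        refine hnbr (m ⊓ b) hbint (ne_top_of_le_ne_top hmT inf_le_left) hcm ?_
        rwa [inf_of_le_right (inf_le_left : m ⊓ b ≤ m)]
      have hle : b ≤ m := by rw [← hcb]; exact inf_le_left
      exact lt_of_le_of_ne hle hbm
  -- every maximal ideal equals `m`
  have hmax_eq : ∀ I : Ideal R, I.IsMaximal → I = m := by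
    intro M hM
    by_contra hMm
    have hMT : M ≠ ⊤ := hM.ne_top
    have hMb : M ≠ ⊥ := by
      rintro rfl
      exact h_ne_bot (hM.eq_of_le hmT bot_le).symm
    by_cases hint : m ⊓ M = ⊥
    · -- comaximal case: build an idempotent and derive a contradiction
      have hbM : b ⊓ M = ⊥ := by
        rw [← le_bot_iff, ← hint]
        exact inf_le_inf_right _ hblt.le
      have hsup : b ⊔ M = ⊤ := by
        by_contra hne
        have : M = b ⊔ M := hM.eq_of_le hne le_sup_right
        have hble : b ≤ M := by rw [this]; exact le_sup_left
        exact hb0 (by rw [← le_bot_iff, ← hbM]; exact le_inf le_rfl hble)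
      obtain ⟨β, hβb, μ, hμM, hβμ⟩ :=
        Submodule.mem_sup.mp (hsup ▸ Submodule.mem_top : (1 : R) ∈ b ⊔ M)
      have hfix : ∀ x ∈ b, x = β * x := by
        intro x hx
        have hz : μ * x = 0 := by
          have : μ * x ∈ b ⊓ M :=
            ⟨Ideal.mul_mem_left b μ hx, Ideal.mul_mem_right x M hμM⟩
          rwa [hbM] at this
        calc x = (β + μ) * x := by rw [hβμ, one_mul]
        _ = β * x + μ * x := add_mul _ _ _
        _ = β * x := by rw [hz, add_zero]
      have hβ0 : β ≠ 0 := by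
        intro h
        refine hb0 (le_bot_iff.mp fun x hx => ?_)
        have := hfix x hx
        rw [h, zero_mul] at this
        simpa using this
      have hβnot : β ∉ Ideal.span {1 - β} := by
        intro hmem
        obtain ⟨c, hc⟩ := Ideal.mem_span_singleton'.mp hmem
        have hβ2 : β = β * β := hfix β hβb
        have : β * β = 0 := by
          calc β * β = (c * (1 - β)) * β := by rw [hc]
          _ = c * (β - β * β) := by ring
          _ = 0 := by rw [← hβ2, sub_self, mul_zero]
        exact hβ0 (by rw [hβ2, this])
      have hK : m ⊓ Ideal.span {1 - β} = ⊥ := by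
        by_contra hK0
        have hKle : m ⊓ Ideal.span {1 - β} ≤ m := inf_le_left
        by_cases hKm : m ⊓ Ideal.span {1 - β} = m
        · have : β ∈ Ideal.span {1 - β} := by
            have hβm : β ∈ m := hblt.le hβb
            have : β ∈ m ⊓ Ideal.span {1 - β} := by rw [hKm]; exact hβm
            exact this.2
          exact hβnot this
        · have hKb : m ⊓ Ideal.span {1 - β} = b := by
            refine hnbr _ hK0 (ne_top_of_le_ne_top hmT hKle) hKm ?_
            rwa [inf_of_le_right hKle]
          have : β ∈ Ideal.span {1 - β} := by
            have : β ∈ m ⊓ Ideal.span {1 - β} := by rw [hKb]; exact hβb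
            exact this.2
          exact hβnot this
      have hmb : m ≤ b := by
        intro x hx
        have h1 : x * (1 - β) ∈ m ⊓ Ideal.span {1 - β} := by
          constructor
          · have : x * (1 - β) = x - x * β := by ring
            rw [this]
            exact Ideal.sub_mem m hx (Ideal.mul_mem_right β m hx)
          · exact Ideal.mul_mem_left _ x (Ideal.subset_span rfl)
        rw [hK] at h1
        have hz : x * (1 - β) = 0 := (Submodule.mem_bot R).mp h1
        have h2 : x = x * β := sub_eq_zero.mp (by rw [← hz]; ring)
        rw [h2]
        exact Ideal.mul_mem_left b x hβb
      exact hbm (le_antisymm hblt.le hmb)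
    · -- `M` meets `m`, so `M = b`, contradicting maximality
      have hMeq : M = b := hnbr M hMb hMT hMm hint
      rw [hMeq] at hM
      exact hbm (hM.eq_of_le hmT hblt.le)
  have hloc : IsLocalRing R :=
    IsLocalRing.of_unique_max_ideal ⟨m, h_max, fun I hI => hmax_eq I hI⟩
  -- classification of nontrivial ideals
  have hclass : ∀ I : Ideal R, I ≠ ⊥ → I ≠ ⊤ → I = m ∨ I = b := by
    intro I h1 h2
    obtain ⟨M, hM, hIM⟩ := Ideal.exists_le_maximal I h2
    rw [hmax_eq M hM] at hIM
    by_cases h3 : I = m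
    · exact Or.inl h3
    · exact Or.inr (hnbr I h1 h2 h3 (by rwa [inf_of_le_right hIM]))
  -- `m` is principal
  obtain ⟨x, hxm, hxb⟩ := SetLike.exists_of_lt hblt
  have hx0 : x ≠ 0 := fun h => hxb (h ▸ b.zero_mem)
  have hspan : Ideal.span {x} = m := by
    have h1 : Ideal.span {x} ≠ ⊥ := by
      rwa [ne_eq, Ideal.span_singleton_eq_bot]
    have hle : Ideal.span {x} ≤ m := (Ideal.span_singleton_le_iff_mem m).mpr hxm
    rcases hclass _ h1 (ne_top_of_le_ne_top hmT hle) with h | h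
    · exact h
    · exact absurd (h ▸ Ideal.mem_span_singleton_self x) hxb
  -- units `1 - r * x`
  have hunit : ∀ r : R, IsUnit (1 - r * x) := by
    intro r
    have h1 : r * x ∈ IsLocalRing.maximalIdeal R := by
      rw [hmax_eq (IsLocalRing.maximalIdeal R) inferInstance]
      exact Ideal.mul_mem_left m r hxm
    exact IsLocalRing.isUnit_one_sub_self_of_mem_nonunits _
      ((IsLocalRing.mem_maximalIdeal _).mp h1)
  have hcancel : ∀ a r : R, a = r * a * x → a = 0 := by
    intro a r h
    have h1 : a * (1 - r * x) = 0 := by linear_combination h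
    exact ((hunit r).mul_left_eq_zero).mp h1
  -- `m ^ 2 = b`
  have hm2m : m ^ 2 ≠ m := by
    intro h
    have : x ∈ Ideal.span {x ^ 2} := by
      rw [← Ideal.span_singleton_pow, hspan, h]
      exact hxm
    obtain ⟨r, hr⟩ := Ideal.mem_span_singleton'.mp this
    exact hx0 (hcancel x r (by linear_combination -hr))
  have hm2bot : m ^ 2 ≠ ⊥ := by
    intro h
    obtain ⟨y, hyb, hy0⟩ := Submodule.exists_mem_ne_zero_of_ne_bot hb0
    have hym : y ∈ Ideal.span {x} := hspan ▸ hblt.le hyb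
    obtain ⟨r, hr⟩ := Ideal.mem_span_singleton'.mp hym
    have hrn : r ∈ m := by
      rw [← hmax_eq (IsLocalRing.maximalIdeal R) inferInstance]
      rw [IsLocalRing.mem_maximalIdeal]
      intro hu
      obtain ⟨u, hu⟩ := hu
      apply hxb
      have : x = ↑u⁻¹ * y := by
        rw [← hr, ← hu, ← mul_assoc, Units.inv_mul, one_mul]
      rw [this]
      exact Ideal.mul_mem_left b _ hyb
    have : y ∈ m ^ 2 := by
      rw [← hr, pow_two]
      exact Ideal.mul_mem_mul hrn hxm
    rw [h] at this
    exact hy0 ((Submodule.mem_bot R).mp this)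
  have hm2le : m ^ 2 ≤ m := Ideal.pow_le_self two_ne_zero
  have hm2b : m ^ 2 = b := by
    rcases hclass _ hm2bot (ne_top_of_le_ne_top hmT hm2le) with h | h
    · exact absurd h hm2m
    · exact h
  -- `m ^ 3 = ⊥`
  have hm3 : m ^ 3 = ⊥ := by
    by_contra h3
    have hle : m ^ 3 ≤ m ^ 2 := Ideal.pow_le_pow_right (by norm_num)
    rcases hclass _ h3 (ne_top_of_le_ne_top hmT (hle.trans hm2le)) with h | h
    · exact hm2m (le_antisymm hm2le (calc m = m ^ 3 := h.symm
        _ ≤ m ^ 2 := hle))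
    · -- m ^ 3 = b = m ^ 2
      rw [← hm2b] at h
      have : x ^ 2 ∈ Ideal.span {x ^ 3} := by
        have h2 : x ^ 2 ∈ m ^ 2 := by
          rw [← hspan, Ideal.span_singleton_pow]
          exact Ideal.mem_span_singleton_self _
        rwa [← h, ← hspan, Ideal.span_singleton_pow] at h2
      obtain ⟨r, hr⟩ := Ideal.mem_span_singleton'.mp this
      have : x ^ 2 = 0 := hcancel (x ^ 2) r (by linear_combination -hr)
      apply hm2bot
      rw [← hspan, Ideal.span_singleton_pow, this, Ideal.span_singleton_eq_bot.mpr rfl]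
  exact ⟨hloc, hmax_eq, ⟨⟨x, hspan.symm⟩⟩, hm3, hm2bot,
    fun I h1 h2 => (hclass I h1 h2).imp id (fun h => h.trans hm2b.symm)⟩
end
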